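/- arXiv:1102.5380 — 4 statements merged into one kernel-verified Lean document; each statement's English description precedes it below -/
import Mathlib

section
/- (Kuijlaars–Serra Capizzano, single accumulation point) Let (a_k)_k and (b_k)_k be bounded real sequences with b_k > 0 for all k, and set a^k = (a_1,…,a_k), b^k = (b_1,…,b_k). Suppose there exist a ∈ ℝ and b > 0 such that for every ε > 0, #{j ≤ k : |a_j − a| ≥ ε} = o(k) and #{j ≤ k : |b_j − b| ≥ ε} = o(k) as k → ∞. Then for every continuous function φ on [a−2b, a+2b], lim_{k→∞} (1/k)·Trace[φ(J(a^k,b^k))] = (1/π) ∫_0^π φ(a + 2b·cos x) dx. -/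
open Filter MeasureTheory

noncomputable section

/-- The `k × k` Jacobi (real symmetric tridiagonal) matrix with diagonal entries
`a 0, …, a (k-1)` and sub/super-diagonal entries `b 0, …, b (k-2)` (0-indexed). -/
def jacobiMatrix (k : ℕ) (a b : ℕ → ℝ) : Matrix (Fin k) (Fin k) ℝ :=
  Matrix.of fun i j =>
    if (i : ℕ) = (j : ℕ) then a i
    else if (i : ℕ) + 1 = (j : ℕ) then b i
    else if (j : ℕ) + 1 = (i : ℕ) then b j
    else 0

theorem jacobiMatrix_isHermitian (k : ℕ) (a b : ℕ → ℝ) :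
    (jacobiMatrix k a b).IsHermitian := by
  show _ = _
  ext i j
  simp only [Matrix.conjTranspose_apply, jacobiMatrix, Matrix.of_apply, star_trivial]
  by_cases h1 : (i : ℕ) = (j : ℕ)
  · have h : i = j := Fin.ext h1
    subst h
    rfl
  · have h1' : ¬ (j : ℕ) = (i : ℕ) := fun h => h1 h.symm
    by_cases h2 : (i : ℕ) + 1 = (j : ℕ)
    · have h3 : ¬ (j : ℕ) + 1 = (i : ℕ) := by omega
      simp [h1, h1', h2, h3]
    · by_cases h3 : (j : ℕ) + 1 = (i : ℕ) <;> simp [h1, h1', h2, h3]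

/-- `Trace[φ(J(a,b))] = ∑ⱼ φ(λⱼ)`, the sum of `φ` over the eigenvalues of the Jacobi matrix. -/
def jacobiTrace (k : ℕ) (a b : ℕ → ℝ) (φ : ℝ → ℝ) : ℝ :=
  ∑ i, φ ((jacobiMatrix_isHermitian k a b).eigenvalues i)

/-- The class `𝒮`: small deviations `∑ᵢ |a_{i+1}^k − a_i^k| = o(k)` and entries in `[0,1]`. -/
def MemS (a : ℕ → ℕ → ℝ) : Prop :=
  ((fun k : ℕ => ∑ i ∈ Finset.range (k - 1), |a k (i + 1) - a k i|)
      =o[Filter.atTop] fun k : ℕ => (k : ℝ)) ∧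
  ∀ k : ℕ, ∀ i < k, a k i ∈ Set.Icc (0 : ℝ) 1

/-- The class `𝒮′`: for every `δ ∈ (0,1)`, `∑ᵢ |a_{i+1}^k − a_i^k| = O(k^{1−δ})`, and
`maxᵢ |a_i^k| = O(log k)`. -/
def MemS' (a : ℕ → ℕ → ℝ) : Prop :=
  (∀ δ : ℝ, δ ∈ Set.Ioo (0 : ℝ) 1 →
    ((fun k : ℕ => ∑ i ∈ Finset.range (k - 1), |a k (i + 1) - a k i|)
        =O[Filter.atTop] fun k : ℕ => (k : ℝ) ^ (1 - δ))) ∧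
  ∃ C : ℝ, ∀ᶠ k : ℕ in Filter.atTop, ∀ i < k, |a k i| ≤ C * Real.log k

/-- `μ`-distributed on `I² = [0,1]²`. -/
def MuDistributedI (a b : ℕ → ℕ → ℝ) (μ : Measure (ℝ × ℝ)) : Prop :=
  ∀ ψ : ℝ × ℝ → ℝ, ContinuousOn ψ (Set.Icc (0 : ℝ) 1 ×ˢ Set.Icc (0 : ℝ) 1) →
    Filter.Tendsto (fun k : ℕ => (1 / (k : ℝ)) * ∑ j ∈ Finset.range k, ψ (a k j, b k j))
      Filter.atTop (nhds (∫ p, ψ p ∂μ))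

/-- `μ`-distributed on `ℝ²` (test functions: bounded continuous). -/
def MuDistributedR (a b : ℕ → ℕ → ℝ) (μ : Measure (ℝ × ℝ)) : Prop :=
  ∀ ψ : ℝ × ℝ → ℝ, Continuous ψ → (∃ C : ℝ, ∀ p, |ψ p| ≤ C) →
    Filter.Tendsto (fun k : ℕ => (1 / (k : ℝ)) * ∑ j ∈ Finset.range k, ψ (a k j, b k j))
      Filter.atTop (nhds (∫ p, ψ p ∂μ))

/-- Tightness via closed bounded rectangles. -/
def TightRect (μ : Measure (ℝ × ℝ)) : Prop :=
  ∀ ε : ℝ, 0 < ε → ∃ x₁ x₂ y₁ y₂ : ℝ,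
    μ ((Set.Icc x₁ x₂ ×ˢ Set.Icc y₁ y₂)ᶜ) < ENNReal.ofReal ε

/-- Almost everywhere increasing sequence of vectors. -/
def AEIncreasing (a : ℕ → ℕ → ℝ) : Prop :=
  Filter.Tendsto
    (fun k : ℕ => (((Finset.range (k - 1)).filter fun i => a k i ≤ a k (i + 1)).card : ℝ) / k)
    Filter.atTop (nhds 1)

/-- Almost everywhere decreasing sequence of vectors. -/
def AEDecreasing (a : ℕ → ℕ → ℝ) : Prop :=
  Filter.Tendsto
    (fun k : ℕ => (((Finset.range (k - 1)).filter fun i => a k (i + 1) ≤ a k i).card : ℝ) / k)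
    Filter.atTop (nhds 1)

/-- Almost everywhere monotone sequence of vectors. -/
def AEMonotone (a : ℕ → ℕ → ℝ) : Prop :=
  AEIncreasing a ∨ AEDecreasing a



namespace KSC

open Matrix Finset Real

variable {k : ℕ}

/-- Entrywise L¹ norm of a matrix. -/
def entN (A : Matrix (Fin k) (Fin k) ℝ) : ℝ := ∑ i, ∑ j, |A i j|

lemma entN_nonneg (A : Matrix (Fin k) (Fin k) ℝ) : 0 ≤ entN A :=
  Finset.sum_nonneg fun _ _ => Finset.sum_nonneg fun _ _ => abs_nonneg _

lemma abs_trace_le (A : Matrix (Fin k) (Fin k) ℝ) : |A.trace| ≤ entN A := by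
  calc |A.trace| ≤ ∑ i, |A i i| := by
        rw [Matrix.trace]
        exact Finset.abs_sum_le_sum_abs _ _
    _ ≤ entN A := by
        apply Finset.sum_le_sum
        intro i _
        exact Finset.single_le_sum (f := fun j => |A i j|) (fun j _ => abs_nonneg _)
          (Finset.mem_univ i)

lemma entN_add_le (A B : Matrix (Fin k) (Fin k) ℝ) : entN (A + B) ≤ entN A + entN B := by
  rw [entN, entN, entN, ← Finset.sum_add_distrib]
  apply Finset.sum_le_sum; intro i _
  rw [← Finset.sum_add_distrib]
  apply Finset.sum_le_sum; intro j _
  exact abs_add_le _ _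

/-- row-sum bound -/
def RowB (A : Matrix (Fin k) (Fin k) ℝ) (β : ℝ) : Prop := ∀ i, ∑ j, |A i j| ≤ β

/-- column-sum bound -/
def ColB (A : Matrix (Fin k) (Fin k) ℝ) (β : ℝ) : Prop := ∀ j, ∑ i, |A i j| ≤ β

lemma rowB_one (hk : 0 < k) : RowB (1 : Matrix (Fin k) (Fin k) ℝ) 1 := by
  intro i
  have : ∀ j : Fin k, |(1 : Matrix (Fin k) (Fin k) ℝ) i j| = if j = i then 1 else 0 := by
    intro j
    by_cases h : j = i
    · simp [Matrix.one_apply, h]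
    · have h' : ¬ i = j := fun hh => h hh.symm
      simp [Matrix.one_apply, h, h']
  rw [Finset.sum_congr rfl fun j _ => this j, Finset.sum_ite_eq' Finset.univ i (fun _ => (1:ℝ))]
  simp

lemma rowB_mul {A B : Matrix (Fin k) (Fin k) ℝ} {α β : ℝ} (hβ : 0 ≤ β)
    (hA : RowB A α) (hB : RowB B β) : RowB (A * B) (α * β) := by
  intro i
  calc ∑ j, |(A * B) i j| ≤ ∑ j, ∑ l, |A i l| * |B l j| := by
        apply Finset.sum_le_sum; intro j _
        rw [Matrix.mul_apply]
        calc |∑ l, A i l * B l j| ≤ ∑ l, |A i l * B l j| := Finset.abs_sum_le_sum_abs _ _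
          _ = ∑ l, |A i l| * |B l j| := by simp [abs_mul]
    _ = ∑ l, |A i l| * ∑ j, |B l j| := by
        rw [Finset.sum_comm]
        simp [Finset.mul_sum]
    _ ≤ ∑ l, |A i l| * β := by
        apply Finset.sum_le_sum; intro l _
        exact mul_le_mul_of_nonneg_left (hB l) (abs_nonneg _)
    _ = (∑ l, |A i l|) * β := by rw [Finset.sum_mul]
    _ ≤ α * β := mul_le_mul_of_nonneg_right (hA i) hβ

lemma rowB_pow {A : Matrix (Fin k) (Fin k) ℝ} {β : ℝ} (hk : 0 < k) (hβ : 1 ≤ β)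
    (hA : RowB A β) : ∀ m : ℕ, RowB (A ^ m) (β ^ m) := by
  intro m
  induction m with
  | zero => simpa using rowB_one hk
  | succ m ih =>
      have : RowB (A ^ m * A) (β ^ m * β) :=
        rowB_mul (le_trans zero_le_one hβ) ih hA
      simpa [pow_succ] using this

lemma colB_transpose {A : Matrix (Fin k) (Fin k) ℝ} {β : ℝ} (h : RowB Aᵀ β) : ColB A β := by
  intro j
  simpa [Matrix.transpose_apply] using h j

lemma colB_pow {A : Matrix (Fin k) (Fin k) ℝ} {β : ℝ} (hk : 0 < k) (hβ : 1 ≤ β)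
    (hA : ColB A β) : ∀ m : ℕ, ColB (A ^ m) (β ^ m) := by
  intro m j
  have hAT : RowB Aᵀ β := fun i => by simpa [Matrix.transpose_apply] using hA i
  have := rowB_pow hk hβ hAT m j
  simpa [← Matrix.transpose_pow, Matrix.transpose_apply] using this

lemma entN_mul_left {A B : Matrix (Fin k) (Fin k) ℝ} {α : ℝ} (hA : ColB A α) :
    entN (A * B) ≤ α * entN B := by
  calc entN (A * B) ≤ ∑ i, ∑ j, ∑ l, |A i l| * |B l j| := by
        apply Finset.sum_le_sum; intro i _
        apply Finset.sum_le_sum; intro j _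
        rw [Matrix.mul_apply]
        calc |∑ l, A i l * B l j| ≤ ∑ l, |A i l * B l j| := Finset.abs_sum_le_sum_abs _ _
          _ = ∑ l, |A i l| * |B l j| := by simp [abs_mul]
    _ = ∑ l, ∑ j, (∑ i, |A i l|) * |B l j| := by
        have tri : (∑ i, ∑ j, ∑ l, |A i l| * |B l j| : ℝ)
            = ∑ l, ∑ i, ∑ j, |A i l| * |B l j| := by
          rw [Finset.sum_congr rfl (fun i _ => Finset.sum_comm)]
          exact Finset.sum_comm
        rw [tri]
        congr 1; ext l
        rw [Finset.sum_comm]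
        congr 1; ext j
        rw [Finset.sum_mul]
    _ ≤ ∑ l, ∑ j, α * |B l j| := by
        apply Finset.sum_le_sum; intro l _
        apply Finset.sum_le_sum; intro j _
        exact mul_le_mul_of_nonneg_right (hA l) (abs_nonneg _)
    _ = α * entN B := by rw [entN, Finset.mul_sum]; congr 1; ext l; rw [Finset.mul_sum]

lemma entN_mul_right {A B : Matrix (Fin k) (Fin k) ℝ} {β : ℝ} (hB : RowB B β) :
    entN (A * B) ≤ entN A * β := by
  calc entN (A * B) ≤ ∑ i, ∑ j, ∑ l, |A i l| * |B l j| := by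
        apply Finset.sum_le_sum; intro i _
        apply Finset.sum_le_sum; intro j _
        rw [Matrix.mul_apply]
        calc |∑ l, A i l * B l j| ≤ ∑ l, |A i l * B l j| := Finset.abs_sum_le_sum_abs _ _
          _ = ∑ l, |A i l| * |B l j| := by simp [abs_mul]
    _ = ∑ i, ∑ l, |A i l| * ∑ j, |B l j| := by
        congr 1; ext i
        rw [Finset.sum_comm]
        congr 1; ext l
        rw [← Finset.mul_sum]
    _ ≤ ∑ i, ∑ l, |A i l| * β := by
        apply Finset.sum_le_sum; intro i _
        apply Finset.sum_le_sum; intro l _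
        exact mul_le_mul_of_nonneg_left (hB l) (abs_nonneg _)
    _ = entN A * β := by rw [entN, Finset.sum_mul]; congr 1; ext i; rw [Finset.sum_mul]

/-- Key telescoping bound on traces of powers. -/
lemma entN_pow_sub_pow {X Y : Matrix (Fin k) (Fin k) ℝ} {β : ℝ} (hk : 0 < k) (hβ : 1 ≤ β)
    (hXc : ColB X β) (hYr : RowB Y β) (m : ℕ) :
    entN (X ^ m - Y ^ m) ≤ m * β ^ m * entN (X - Y) := by
  induction m with
  | zero => simp [entN]
  | succ m ih =>
      have key : X ^ (m+1) - Y ^ (m+1) = X ^ m * (X - Y) + (X ^ m - Y ^ m) * Y := by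
        rw [Matrix.mul_sub, Matrix.sub_mul]
        rw [← pow_succ X, ← pow_succ Y]
        abel
      rw [key]
      have h1 : entN (X ^ m * (X - Y)) ≤ β ^ m * entN (X - Y) :=
        entN_mul_left (colB_pow hk hβ hXc m)
      have h2 : entN ((X ^ m - Y ^ m) * Y) ≤ (m * β ^ m * entN (X - Y)) * β := by
        calc entN ((X ^ m - Y ^ m) * Y) ≤ entN (X ^ m - Y ^ m) * β := entN_mul_right hYr
          _ ≤ (m * β ^ m * entN (X - Y)) * β :=
            mul_le_mul_of_nonneg_right ih (le_trans zero_le_one hβ)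
      calc entN (X ^ m * (X - Y) + (X ^ m - Y ^ m) * Y)
          ≤ entN (X ^ m * (X - Y)) + entN ((X ^ m - Y ^ m) * Y) := entN_add_le _ _
        _ ≤ β ^ m * entN (X - Y) + (m * β ^ m * entN (X - Y)) * β := add_le_add h1 h2
        _ ≤ ((m:ℝ) + 1) * β ^ (m + 1) * entN (X - Y) := by
            have hb0 : (0:ℝ) ≤ β := le_trans zero_le_one hβ
            have hbm : (0:ℝ) ≤ β ^ m := pow_nonneg hb0 m
            have hE : (0:ℝ) ≤ entN (X - Y) := entN_nonneg _
            have h3 : β ^ m * entN (X - Y) ≤ β ^ (m+1) * entN (X - Y) := by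
              apply mul_le_mul_of_nonneg_right _ hE
              calc β ^ m = β ^ m * 1 := by ring
                _ ≤ β ^ m * β := by nlinarith
                _ = β ^ (m+1) := by ring
            have h4 : (m:ℝ) * β ^ m * entN (X - Y) * β = (m:ℝ) * (β ^ (m+1) * entN (X - Y)) := by
              ring
            linarith
        _ = ((m + 1 : ℕ) : ℝ) * β ^ (m + 1) * entN (X - Y) := by push_cast; ring
  
/-- cyclic shift-by-`t` matrix -/
def shift (k t : ℕ) : Matrix (Fin k) (Fin k) ℝ :=
  Matrix.of fun i j => if ((i : ℕ) + t) % k = (j : ℕ) then 1 else 0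

lemma sum_shift_mul (hk0 : 0 < k) (s : ℕ) (i : Fin k) (f : Fin k → ℝ) :
    ∑ l, (shift k s) i l * f l = f ⟨((i : ℕ) + s) % k, Nat.mod_lt _ hk0⟩ := by
  set l0 : Fin k := ⟨((i : ℕ) + s) % k, Nat.mod_lt _ hk0⟩ with hl0
  have key : ∀ l : Fin k, (shift k s) i l * f l = if l = l0 then f l else 0 := by
    intro l
    by_cases h : l = l0
    · subst h
      have h1 : (shift k s) i l0 = 1 := by
        show (if ((i : ℕ) + s) % k = (l0 : ℕ) then (1:ℝ) else 0) = 1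
        rw [if_pos rfl]
      rw [h1, one_mul, if_pos rfl]
    · have hne : ¬ ((i : ℕ) + s) % k = (l : ℕ) := by
        intro hc
        exact h (Fin.ext hc.symm)
      simp [shift, hne, h]
  rw [Finset.sum_congr rfl fun l _ => key l, Finset.sum_ite_eq' Finset.univ l0 f]
  simp

lemma shift_zero (hk0 : 0 < k) : shift k 0 = (1 : Matrix (Fin k) (Fin k) ℝ) := by
  ext i j
  have hmod : ((i : ℕ) + 0) % k = (i : ℕ) := by
    rw [Nat.add_zero]; exact Nat.mod_eq_of_lt i.isLt
  show (if ((i : ℕ) + 0) % k = (j : ℕ) then (1:ℝ) else 0) = _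
  rw [Matrix.one_apply, hmod]
  congr 1
  simp only [eq_iff_iff]
  exact ⟨fun h => Fin.ext h, fun h => congrArg _ h⟩

lemma shift_mul (hk0 : 0 < k) (s t : ℕ) :
    shift k s * shift k t = shift k (s + t) := by
  ext i j
  rw [Matrix.mul_apply, sum_shift_mul hk0 s i (fun l => shift k t l j)]
  show (if ((((i:ℕ) + s) % k) + t) % k = (j : ℕ) then (1:ℝ) else 0) = _
  rw [Nat.mod_add_mod, Nat.add_assoc]
  rfl

lemma shift_pow (hk0 : 0 < k) (t : ℕ) : (shift k 1) ^ t = shift k t := by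
  induction t with
  | zero => rw [pow_zero, shift_zero hk0]
  | succ t ih => rw [pow_succ, ih, shift_mul hk0, Nat.add_comm t 1, Nat.add_comm 1 t]

lemma trace_shift_mul_transpose (hk0 : 0 < k) {s t : ℕ} (hs : s < k) (ht : t < k) :
    (shift k s * (shift k t)ᵀ).trace = if s = t then (k : ℝ) else 0 := by
  have hterm : ∀ i : Fin k, (shift k s * (shift k t)ᵀ) i i
      = if s = t then (1:ℝ) else 0 := by
    intro i
    rw [Matrix.mul_apply]
    have : ∀ l, (shift k t)ᵀ l i = shift k t i l := fun l => rfl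
    rw [Finset.sum_congr rfl fun l _ => by rw [this l]]
    rw [sum_shift_mul hk0 s i (fun l => shift k t i l)]
    show (if ((i:ℕ) + t) % k = ((i:ℕ) + s) % k then (1:ℝ) else 0) = _
    congr 1
    simp only [eq_iff_iff]
    constructor
    · intro h
      have h1 : t % k = s % k := Nat.ModEq.add_left_cancel' (i : ℕ) h
      rw [Nat.mod_eq_of_lt ht, Nat.mod_eq_of_lt hs] at h1
      exact h1.symm
    · intro h; rw [h]
  have htr : (shift k s * (shift k t)ᵀ).trace = ∑ i, (shift k s * (shift k t)ᵀ) i i := rfl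
  rw [htr, Finset.sum_congr rfl fun i _ => hterm i]
  rw [Finset.sum_const, Finset.card_univ, Fintype.card_fin]
  by_cases h : s = t <;> simp [h]

lemma shift_mul_shift_transpose (hk0 : 0 < k) :
    shift k 1 * (shift k 1)ᵀ = (1 : Matrix (Fin k) (Fin k) ℝ) := by
  ext i j
  rw [Matrix.mul_apply]
  have : ∀ l, (shift k 1)ᵀ l j = shift k 1 j l := fun l => rfl
  rw [Finset.sum_congr rfl fun l _ => by rw [this l]]
  rw [sum_shift_mul hk0 1 i (fun l => shift k 1 j l)]
  show (if ((j:ℕ) + 1) % k = ((i:ℕ) + 1) % k then (1:ℝ) else 0) = _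
  rw [Matrix.one_apply]
  congr 1
  simp only [eq_iff_iff]
  constructor
  · intro h
    have h1 : (j : ℕ) % k = (i : ℕ) % k := Nat.ModEq.add_right_cancel' 1 h
    rw [Nat.mod_eq_of_lt j.isLt, Nat.mod_eq_of_lt i.isLt] at h1
    exact Fin.ext h1.symm
  · intro h; rw [h]

/-- the circulant model matrix -/
def Cmat (k : ℕ) (a b : ℝ) : Matrix (Fin k) (Fin k) ℝ :=
  a • (1 : Matrix (Fin k) (Fin k) ℝ) + b • shift k 1 + b • (shift k 1)ᵀ

/-- the model moment constant -/
def tm (m : ℕ) (a b : ℝ) : ℝ :=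
  ∑ r ∈ Finset.range (m + 1),
    if m ≤ 2 * r then
      (Nat.choose m r : ℝ) * (Nat.choose r (2 * r - m) : ℝ) * a ^ (2 * r - m) * b ^ (2 * (m - r))
    else 0

lemma inner_ite_sum (m r : ℕ) (hrm : r ≤ m) (f : ℕ → ℝ) :
    (∑ i ∈ Finset.range (r + 1), f i * (if r - i = m - r then (k : ℝ) else 0))
      = if m ≤ 2 * r then f (2 * r - m) * k else 0 := by
  have hcong : ∀ i ∈ Finset.range (r + 1),
      f i * (if r - i = m - r then (k : ℝ) else 0)
        = if (m ≤ 2 * r ∧ i = 2 * r - m) then f i * k else 0 := by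
    intro i hi
    rw [Finset.mem_range] at hi
    by_cases h : r - i = m - r
    · have hP : m ≤ 2 * r ∧ i = 2 * r - m := by omega
      rw [if_pos h, if_pos hP, hP.2]
    · have hP : ¬ (m ≤ 2 * r ∧ i = 2 * r - m) := by omega
      rw [if_neg h, if_neg hP, mul_zero]
  rw [Finset.sum_congr rfl hcong]
  by_cases hm : m ≤ 2 * r
  · have : ∀ i, (if (m ≤ 2 * r ∧ i = 2 * r - m) then f i * k else 0)
        = if i = 2 * r - m then f i * k else 0 := by intro i; simp [hm]
    rw [Finset.sum_congr rfl fun i _ => this i,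
      Finset.sum_ite_eq' (Finset.range (r + 1)) (2 * r - m) (fun i => f i * k)]
    have : 2 * r - m ∈ Finset.range (r + 1) := by
      rw [Finset.mem_range]; omega
    simp [this, hm]
  · simp [hm]

lemma natCast_matrix (c : ℕ) :
    ((c : ℕ) : Matrix (Fin k) (Fin k) ℝ) = (c : ℝ) • (1 : Matrix (Fin k) (Fin k) ℝ) := by
  rw [Nat.cast_smul_eq_nsmul, nsmul_eq_mul, mul_one]

lemma trace_Cmat_pow (a b : ℝ) {m k : ℕ} (hmk : m < k) :
    (Cmat k a b ^ m).trace = (k : ℝ) * tm m a b := by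
  have hk0 : 0 < k := by omega
  set S := shift k 1 with hS
  have hSS : S * Sᵀ = 1 := shift_mul_shift_transpose hk0
  have hST : Sᵀ * S = 1 := mul_eq_one_comm.mp hSS
  have hcST : Commute S Sᵀ := by unfold Commute SemiconjBy; rw [hSS, hST]
  have hc1 : Commute (a • (1 : Matrix (Fin k) (Fin k) ℝ) + b • S) (b • Sᵀ) :=
    Commute.add_left (((Commute.one_left Sᵀ).smul_left a).smul_right b)
      ((hcST.smul_left b).smul_right b)
  have hc2 : Commute (a • (1 : Matrix (Fin k) (Fin k) ℝ)) (b • S) :=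
    ((Commute.one_left S).smul_left a).smul_right b
  have hAr : ∀ r, r ≤ m →
      (((a • (1 : Matrix (Fin k) (Fin k) ℝ) + b • S)) ^ r * (b • Sᵀ) ^ (m - r)).trace
        = if m ≤ 2 * r then
            ((r.choose (2 * r - m) : ℝ) * a ^ (2 * r - m) * b ^ (r - (2 * r - m)) * b ^ (m - r)) * k
          else 0 := by
    intro r hr
    rw [hc2.add_pow r, Finset.sum_mul, Matrix.trace_sum]
    have hterm : ∀ i ∈ Finset.range (r + 1),
        ((a • (1 : Matrix (Fin k) (Fin k) ℝ)) ^ i * (b • S) ^ (r - i) * ((r.choose i : ℕ) : Matrix (Fin k) (Fin k) ℝ) *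
            (b • Sᵀ) ^ (m - r)).trace
          = ((r.choose i : ℝ) * a ^ i * b ^ (r - i) * b ^ (m - r)) *
              (if r - i = m - r then (k : ℝ) else 0) := by
      intro i hi
      rw [Finset.mem_range] at hi
      rw [natCast_matrix, smul_pow, smul_pow, smul_pow, one_pow, hS, shift_pow hk0,
        ← Matrix.transpose_pow, shift_pow hk0]
      simp only [smul_mul_assoc, mul_smul_comm, one_mul, mul_one, smul_smul, Matrix.trace_smul]
      rw [trace_shift_mul_transpose hk0 (by omega) (by omega)]
      by_cases h : r - i = m - r <;> simp [h] <;> ring_nf <;> simp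
    rw [Finset.sum_congr rfl hterm,
      inner_ite_sum m r hr (fun i => (r.choose i : ℝ) * a ^ i * b ^ (r - i) * b ^ (m - r))]
  calc (Cmat k a b ^ m).trace
      = ∑ r ∈ Finset.range (m + 1),
          (((a • (1 : Matrix (Fin k) (Fin k) ℝ) + b • S)) ^ r * (b • Sᵀ) ^ (m - r) *
            ((m.choose r : ℕ) : Matrix (Fin k) (Fin k) ℝ)).trace := by
        rw [show Cmat k a b = (a • (1 : Matrix (Fin k) (Fin k) ℝ) + b • S) + b • Sᵀ from rfl,
          hc1.add_pow m, Matrix.trace_sum]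
    _ = ∑ r ∈ Finset.range (m + 1),
          (m.choose r : ℝ) *
            (((a • (1 : Matrix (Fin k) (Fin k) ℝ) + b • S)) ^ r * (b • Sᵀ) ^ (m - r)).trace := by
        refine Finset.sum_congr rfl fun r _ => ?_
        rw [natCast_matrix, mul_smul_comm, mul_one, Matrix.trace_smul, smul_eq_mul]
    _ = (k : ℝ) * tm m a b := by
        rw [tm, Finset.mul_sum]
        refine Finset.sum_congr rfl fun r hr => ?_
        rw [Finset.mem_range] at hr
        rw [hAr r (by omega)]
        by_cases hm2 : m ≤ 2 * r
        · rw [if_pos hm2, if_pos hm2]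
          have e1 : r - (2 * r - m) = m - r := by omega
          have e2 : (2 : ℕ) * (m - r) = (m - r) + (m - r) := by omega
          rw [e1, e2, pow_add]
          ring
        · rw [if_neg hm2, if_neg hm2, mul_zero, mul_zero]

lemma cos_pow_integrals (q : ℕ) :
    (∫ x in (0:ℝ)..π, Real.cos x ^ (2 * q)) = π * (Nat.choose (2 * q) q : ℝ) / 4 ^ q ∧
      (∫ x in (0:ℝ)..π, Real.cos x ^ (2 * q + 1)) = 0 := by
  induction q with
  | zero =>
      constructor
      · simp
      · simp [integral_cos]
  | succ q ih =>
      obtain ⟨ihe, iho⟩ := ih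
      constructor
      · have h2 : 2 * (q + 1) = 2 * q + 2 := by omega
        rw [h2, integral_cos_pow, Real.sin_pi, Real.sin_zero, ihe]
        have hcb : ((q : ℝ) + 1) * (Nat.choose (2 * (q + 1)) (q + 1) : ℝ)
            = 2 * (2 * (q : ℝ) + 1) * (Nat.choose (2 * q) q : ℝ) := by
          have := Nat.succ_mul_centralBinom_succ q
          have h' : (q + 1) * Nat.choose (2 * (q + 1)) (q + 1)
              = 2 * (2 * q + 1) * Nat.choose (2 * q) q := by
            simpa [Nat.centralBinom] using this
          exact_mod_cast congrArg (Nat.cast : ℕ → ℝ) h'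
        have hq1 : ((q:ℝ) + 1) ≠ 0 := by positivity
        have hcc : Nat.choose (2 * (q + 1)) (q + 1) = Nat.choose (2 * q + 2) (q + 1) := by
          rw [show 2 * (q + 1) = 2 * q + 2 from by omega]
        rw [hcc] at hcb
        have hkey : (Nat.choose (2 * q + 2) (q + 1) : ℝ)
            = 2 * (2 * (q:ℝ) + 1) * (Nat.choose (2 * q) q : ℝ) / ((q:ℝ) + 1) := by
          field_simp
          linear_combination hcb
        rw [hkey]
        have h4 : (4:ℝ) ^ q ≠ 0 := by positivity
        have h4' : (4:ℝ) ^ (q + 1) ≠ 0 := by positivity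
        push_cast
        field_simp
        ring
      · have h2 : 2 * (q + 1) + 1 = (2 * q + 1) + 2 := by omega
        rw [h2, integral_cos_pow, Real.sin_pi, Real.sin_zero, iho]
        simp

lemma sum_reindex_half (m : ℕ) (g : ℕ → ℝ) :
    (∑ r ∈ Finset.range (m + 1), if m ≤ 2 * r then g (2 * r - m) else 0)
      = ∑ j ∈ Finset.range (m + 1), if (m - j) % 2 = 0 then g j else 0 := by
  rw [← Finset.sum_filter, ← Finset.sum_filter]
  apply Finset.sum_nbij' (i := fun r => 2 * r - m) (j := fun j => (m + j) / 2)
  · intro r hr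
    simp only [Finset.mem_filter, Finset.mem_range] at hr ⊢
    omega
  · intro j hj
    simp only [Finset.mem_filter, Finset.mem_range] at hj ⊢
    omega
  · intro r hr
    simp only [Finset.mem_filter, Finset.mem_range] at hr
    omega
  · intro j hj
    simp only [Finset.mem_filter, Finset.mem_range] at hj
    omega
  · intro r hr
    rfl

lemma moment_eq (a b : ℝ) (m : ℕ) :
    tm m a b = (1 / π) * ∫ x in (0:ℝ)..π, (a + 2 * b * Real.cos x) ^ m := by
  have hint : (∫ x in (0:ℝ)..π, (a + 2 * b * Real.cos x) ^ m)
      = ∑ j ∈ Finset.range (m + 1),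
          if (m - j) % 2 = 0 then
            π * (Nat.choose m j : ℝ) * (Nat.choose (m - j) ((m - j) / 2) : ℝ)
              * a ^ j * b ^ (m - j)
          else 0 := by
    have hexp : ∀ x : ℝ, (a + 2 * b * Real.cos x) ^ m
        = ∑ j ∈ Finset.range (m + 1),
            (a ^ j * (2 * b) ^ (m - j) * (Nat.choose m j : ℝ)) * Real.cos x ^ (m - j) := by
      intro x
      rw [add_pow]
      refine Finset.sum_congr rfl fun j _ => ?_
      rw [mul_pow]
      ring
    rw [intervalIntegral.integral_congr (g := fun x => ∑ j ∈ Finset.range (m + 1),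
        (a ^ j * (2 * b) ^ (m - j) * (Nat.choose m j : ℝ)) * Real.cos x ^ (m - j))
        (fun x _ => hexp x)]
    rw [intervalIntegral.integral_finset_sum (fun j _ => by
      apply Continuous.intervalIntegrable
      fun_prop)]
    refine Finset.sum_congr rfl fun j hj => ?_
    rw [intervalIntegral.integral_const_mul]
    by_cases hpar : (m - j) % 2 = 0
    · obtain ⟨q, hq⟩ : ∃ q, m - j = 2 * q := ⟨(m - j) / 2, by omega⟩
      have hhalf : (m - j) / 2 = q := by omega
      have h2 : (2 * b) ^ (2 * q) = 4 ^ q * b ^ (2 * q) := by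
        rw [show (2 * b) ^ (2 * q) = ((2 * b) ^ 2) ^ q by rw [← pow_mul],
          show (4:ℝ) ^ q * b ^ (2 * q) = (4 * b ^ 2) ^ q by rw [mul_pow, ← pow_mul]]
        ring_nf
      rw [if_pos hpar, hhalf, hq, (cos_pow_integrals q).1, h2]
      have h4 : (4:ℝ) ^ q ≠ 0 := by positivity
      field_simp
    · obtain ⟨q, hq⟩ : ∃ q, m - j = 2 * q + 1 := ⟨(m - j) / 2, by omega⟩
      rw [if_neg hpar, hq, (cos_pow_integrals q).2, mul_zero]
  rw [hint]
  set g : ℕ → ℝ := fun j => (Nat.choose m ((m + j) / 2) : ℝ)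
    * (Nat.choose ((m + j) / 2) j : ℝ) * a ^ j * b ^ (2 * (m - (m + j) / 2)) with hg
  have step1 : tm m a b = ∑ r ∈ Finset.range (m + 1), if m ≤ 2 * r then g (2 * r - m) else 0 := by
    rw [tm]
    refine Finset.sum_congr rfl fun r hr => ?_
    rw [Finset.mem_range] at hr
    by_cases hm2 : m ≤ 2 * r
    · rw [if_pos hm2, if_pos hm2, hg]
      have hr2 : (m + (2 * r - m)) / 2 = r := by omega
      simp only [hr2]
    · rw [if_neg hm2, if_neg hm2]
  rw [step1, sum_reindex_half m g, Finset.mul_sum]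
  refine Finset.sum_congr rfl fun j hj => ?_
  rw [Finset.mem_range] at hj
  by_cases hpar : (m - j) % 2 = 0
  · rw [if_pos hpar, if_pos hpar]
    simp only [hg]
    have hjm : j ≤ m := by omega
    have hrm : (m + j) / 2 ≤ m := by omega
    have hjr : j ≤ (m + j) / 2 := by omega
    have hch := Nat.choose_mul (n := m) hjr
    have hsub : (m + j) / 2 - j = (m - j) / 2 := by omega
    rw [hsub] at hch
    have hb : 2 * (m - (m + j) / 2) = m - j := by omega
    have hchR : (Nat.choose m ((m + j) / 2) : ℝ) * (Nat.choose ((m + j) / 2) j : ℝ)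
        = (Nat.choose m j : ℝ) * (Nat.choose (m - j) ((m - j) / 2) : ℝ) := by
      exact_mod_cast congrArg (Nat.cast : ℕ → ℝ) hch
    have hpi := Real.pi_ne_zero
    rw [hb]
    field_simp
    linear_combination (a ^ j * b ^ (m - j)) * hchR
  · rw [if_neg hpar, if_neg hpar, mul_zero]

lemma conj_pow (U D : Matrix (Fin k) (Fin k) ℝ) (h1 : star U * U = 1) (h2 : U * star U = 1)
    (m : ℕ) : (U * D * star U) ^ m = U * D ^ m * star U := by
  induction m with
  | zero => rw [pow_zero, pow_zero, mul_one, h2]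
  | succ m ih =>
      rw [pow_succ, ih, pow_succ]
      calc U * D ^ m * star U * (U * D * star U)
          = U * (D ^ m * ((star U * U) * (D * star U))) := by simp only [Matrix.mul_assoc]
        _ = U * (D ^ m * D) * star U := by rw [h1, Matrix.one_mul]; simp only [Matrix.mul_assoc]
        _ = U * (D ^ m * D) * star U := rfl

lemma sum_eigenvalues_pow (k : ℕ) (a b : ℕ → ℝ) (m : ℕ) :
    ∑ i, ((jacobiMatrix_isHermitian k a b).eigenvalues i) ^ m
      = ((jacobiMatrix k a b) ^ m).trace := by
  have hA := jacobiMatrix_isHermitian k a b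
  set A := jacobiMatrix k a b
  set U : Matrix (Fin k) (Fin k) ℝ := (hA.eigenvectorUnitary : Matrix (Fin k) (Fin k) ℝ)
  have hU : U ∈ Matrix.unitaryGroup (Fin k) ℝ := hA.eigenvectorUnitary.2
  have h1 : star U * U = 1 := Matrix.mem_unitaryGroup_iff'.mp hU
  have h2 : U * star U = 1 := Matrix.mem_unitaryGroup_iff.mp hU
  have hst := hA.spectral_theorem
  rw [Unitary.conjStarAlgAut_apply] at hst
  have hpow : A ^ m = U * (Matrix.diagonal (RCLike.ofReal ∘ hA.eigenvalues)) ^ m * star U := by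
    rw [← conj_pow U _ h1 h2 m, ← hst]
  rw [hpow, Matrix.trace_mul_cycle, h1, Matrix.one_mul,
    Matrix.diagonal_pow, Matrix.trace_diagonal]
  refine Finset.sum_congr rfl fun i _ => ?_
  simp [Function.comp]

lemma sum_ite_unique (p : Fin k → Prop) [DecidablePred p] (x : ℝ) (hx : 0 ≤ x)
    (hp : ∀ j1 j2, p j1 → p j2 → j1 = j2) :
    ∑ j : Fin k, (if p j then x else 0) ≤ x := by
  have hcard : (Finset.univ.filter p).card ≤ 1 := by
    apply Finset.card_le_one.mpr
    intro a ha b hb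
    exact hp a b (Finset.mem_filter.mp ha).2 (Finset.mem_filter.mp hb).2
  calc ∑ j : Fin k, (if p j then x else 0) = ∑ _j ∈ Finset.univ.filter p, x :=
        (Finset.sum_filter _ _).symm
    _ = (Finset.univ.filter p).card • x := Finset.sum_const x
    _ = ((Finset.univ.filter p).card : ℝ) * x := nsmul_eq_mul _ _
    _ ≤ 1 * x := by
        apply mul_le_mul_of_nonneg_right _ hx
        exact_mod_cast hcard
    _ = x := one_mul x

lemma eig_bound (a b : ℕ → ℝ) (M : ℝ) (hM : ∀ j, |a j| ≤ M ∧ |b j| ≤ M) (i : Fin k) :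
    |(jacobiMatrix_isHermitian k a b).eigenvalues i| ≤ 3 * M := by
  have hM0 : 0 ≤ M := le_trans (abs_nonneg _) (hM 0).1
  have hA := jacobiMatrix_isHermitian k a b
  set A := jacobiMatrix k a b with hAdef
  set lam := hA.eigenvalues i with hlam
  have hv : A *ᵥ ⇑(hA.eigenvectorBasis i) = lam • ⇑(hA.eigenvectorBasis i) :=
    hA.mulVec_eigenvectorBasis i
  have hvne : ⇑(hA.eigenvectorBasis i) ≠ 0 := by
    intro hc
    have := hA.eigenvectorBasis.orthonormal.ne_zero i
    apply this
    apply PiLp.ext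
    intro j
    exact congrFun hc j
  have heig : Module.End.HasEigenvalue (Matrix.toLin' A) lam := by
    apply Module.End.hasEigenvalue_of_hasEigenvector (x := ⇑(hA.eigenvectorBasis i))
    constructor
    · rw [Module.End.mem_eigenspace_iff, Matrix.toLin'_apply, hv]
    · exact hvne
  obtain ⟨i0, hball⟩ := eigenvalue_mem_ball heig
  rw [Metric.mem_closedBall, Real.dist_eq] at hball
  have hdiag : |A i0 i0| ≤ M := by
    have : A i0 i0 = a i0 := by simp [hAdef, jacobiMatrix]
    rw [this]; exact (hM i0).1
  have hrad : (∑ j ∈ Finset.univ.erase i0, ‖A i0 j‖) ≤ 2 * M := by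
    have hle : ∀ j ∈ Finset.univ.erase i0, ‖A i0 j‖
        ≤ (if (i0:ℕ) + 1 = (j:ℕ) then M else 0) + (if (j:ℕ) + 1 = (i0:ℕ) then M else 0) := by
      intro j hj
      rw [Finset.mem_erase] at hj
      have hne : ¬ (i0:ℕ) = (j:ℕ) := fun hc => hj.1 (Fin.ext hc).symm
      by_cases h2 : (i0:ℕ) + 1 = (j:ℕ)
      · have h3 : ¬ (j:ℕ) + 1 = (i0:ℕ) := by omega
        have hAv : A i0 j = b i0 := by simp [hAdef, jacobiMatrix, hne, h2]
        rw [hAv, if_pos h2, if_neg h3, add_zero, Real.norm_eq_abs]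
        exact (hM i0).2
      · by_cases h3 : (j:ℕ) + 1 = (i0:ℕ)
        · have hAv : A i0 j = b j := by simp [hAdef, jacobiMatrix, hne, h2, h3]
          rw [hAv, if_neg h2, if_pos h3, zero_add, Real.norm_eq_abs]
          exact (hM j).2
        · have hAv : A i0 j = 0 := by simp [hAdef, jacobiMatrix, hne, h2, h3]
          rw [hAv, if_neg h2, if_neg h3, add_zero]
          simp
    calc (∑ j ∈ Finset.univ.erase i0, ‖A i0 j‖)
        ≤ ∑ j ∈ Finset.univ.erase i0,
            ((if (i0:ℕ) + 1 = (j:ℕ) then M else 0) + (if (j:ℕ) + 1 = (i0:ℕ) then M else 0)) :=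
          Finset.sum_le_sum hle
      _ ≤ ∑ j : Fin k,
            ((if (i0:ℕ) + 1 = (j:ℕ) then M else 0) + (if (j:ℕ) + 1 = (i0:ℕ) then M else 0)) := by
          apply Finset.sum_le_sum_of_subset_of_nonneg (Finset.erase_subset _ _)
          intro j _ _
          positivity
      _ = (∑ j : Fin k, (if (i0:ℕ) + 1 = (j:ℕ) then M else 0))
            + ∑ j : Fin k, (if (j:ℕ) + 1 = (i0:ℕ) then M else 0) := Finset.sum_add_distrib
      _ ≤ 2 * M := by
          have e1 : (∑ j : Fin k, (if (i0:ℕ) + 1 = (j:ℕ) then M else 0)) ≤ M := by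
            apply sum_ite_unique _ _ hM0
            intro j1 j2 h1 h2
            apply Fin.ext
            omega
          have e2 : (∑ j : Fin k, (if (j:ℕ) + 1 = (i0:ℕ) then M else 0)) ≤ M := by
            apply sum_ite_unique _ _ hM0
            intro j1 j2 h1 h2
            apply Fin.ext
            omega
          linarith
  calc |lam| ≤ |lam - A i0 i0| + |A i0 i0| := by
        have := abs_add_le (lam - A i0 i0) (A i0 i0)
        simpa using this
    _ ≤ 2 * M + M := add_le_add (le_trans hball hrad) hdiag
    _ = 3 * M := by ring

lemma mod_succ_eq_iff (hk : 3 ≤ k) (i j : Fin k) :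
    ((((i:ℕ) + 1) % k = (j:ℕ)) ↔ ((i:ℕ) + 1 = (j:ℕ) ∨ ((i:ℕ) = k - 1 ∧ (j:ℕ) = 0))) := by
  have hi := i.isLt; have hj := j.isLt
  by_cases h : (i:ℕ) + 1 = k
  · rw [h, Nat.mod_self]; omega
  · rw [Nat.mod_eq_of_lt (by omega)]; omega

lemma cmat_apply (hk : 3 ≤ k) (a b : ℝ) (i j : Fin k) :
    Cmat k a b i j = a * (if (i:ℕ) = (j:ℕ) then 1 else 0)
      + b * (if (i:ℕ) + 1 = (j:ℕ) ∨ ((i:ℕ) = k - 1 ∧ (j:ℕ) = 0) then 1 else 0)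
      + b * (if (j:ℕ) + 1 = (i:ℕ) ∨ ((j:ℕ) = k - 1 ∧ (i:ℕ) = 0) then 1 else 0) := by
  have e1 := mod_succ_eq_iff hk i j
  have e2 := mod_succ_eq_iff hk j i
  have h1 : (1 : Matrix (Fin k) (Fin k) ℝ) i j = if (i:ℕ) = (j:ℕ) then 1 else 0 := by
    rw [Matrix.one_apply]
    exact if_congr Fin.ext_iff rfl rfl
  show a • (1 : Matrix (Fin k) (Fin k) ℝ) i j + b • shift k 1 i j + b • (shift k 1)ᵀ i j = _
  rw [Matrix.transpose_apply]
  show a * (1 : Matrix (Fin k) (Fin k) ℝ) i j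
      + b * (if ((i:ℕ) + 1) % k = (j:ℕ) then 1 else 0)
      + b * (if ((j:ℕ) + 1) % k = (i:ℕ) then 1 else 0) = _
  rw [h1, if_congr e1 (rfl : (1:ℝ) = 1) (rfl : (0:ℝ) = 0),
    if_congr e2 (rfl : (1:ℝ) = 1) (rfl : (0:ℝ) = 0)]

lemma rowB_jacobi (a b : ℕ → ℝ) (M : ℝ) (hM : ∀ j, |a j| ≤ M ∧ |b j| ≤ M) :
    RowB (jacobiMatrix k a b) (3 * M) := by
  have hM0 : 0 ≤ M := le_trans (abs_nonneg _) (hM 0).1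
  intro i
  have hle : ∀ j : Fin k, |jacobiMatrix k a b i j|
      ≤ (if (i:ℕ) = (j:ℕ) then M else 0) + ((if (i:ℕ) + 1 = (j:ℕ) then M else 0)
          + (if (j:ℕ) + 1 = (i:ℕ) then M else 0)) := by
    intro j
    show |(if (i : ℕ) = (j : ℕ) then a i else if (i : ℕ) + 1 = (j : ℕ) then b i
      else if (j : ℕ) + 1 = (i : ℕ) then b j else 0)| ≤ _
    by_cases h1 : (i:ℕ) = (j:ℕ)
    · have h2 : ¬ (i:ℕ) + 1 = (j:ℕ) := by omega
      have h3 : ¬ (j:ℕ) + 1 = (i:ℕ) := by omega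
      rw [if_pos h1, if_pos h1, if_neg h2, if_neg h3]
      simpa using (hM i).1
    · by_cases h2 : (i:ℕ) + 1 = (j:ℕ)
      · have h3 : ¬ (j:ℕ) + 1 = (i:ℕ) := by omega
        rw [if_neg h1, if_pos h2, if_neg h1, if_pos h2, if_neg h3]
        simpa using (hM i).2
      · by_cases h3 : (j:ℕ) + 1 = (i:ℕ)
        · rw [if_neg h1, if_neg h2, if_pos h3, if_neg h1, if_neg h2, if_pos h3]
          simpa using (hM j).2
        · rw [if_neg h1, if_neg h2, if_neg h3, if_neg h1, if_neg h2, if_neg h3]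
          simp
  calc ∑ j, |jacobiMatrix k a b i j| ≤ ∑ j : Fin k,
        ((if (i:ℕ) = (j:ℕ) then M else 0) + ((if (i:ℕ) + 1 = (j:ℕ) then M else 0)
          + (if (j:ℕ) + 1 = (i:ℕ) then M else 0))) := Finset.sum_le_sum fun j _ => hle j
    _ = (∑ j : Fin k, if (i:ℕ) = (j:ℕ) then M else 0)
          + ((∑ j : Fin k, if (i:ℕ) + 1 = (j:ℕ) then M else 0)
          + (∑ j : Fin k, if (j:ℕ) + 1 = (i:ℕ) then M else 0)) := by
        rw [Finset.sum_add_distrib, Finset.sum_add_distrib]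
    _ ≤ M + (M + M) := by
        have e0 : (∑ j : Fin k, if (i:ℕ) = (j:ℕ) then M else 0) ≤ M :=
          sum_ite_unique _ _ hM0 fun j1 j2 h1 h2 => Fin.ext (by omega)
        have e1 : (∑ j : Fin k, if (i:ℕ) + 1 = (j:ℕ) then M else 0) ≤ M :=
          sum_ite_unique _ _ hM0 fun j1 j2 h1 h2 => Fin.ext (by omega)
        have e2 : (∑ j : Fin k, if (j:ℕ) + 1 = (i:ℕ) then M else 0) ≤ M :=
          sum_ite_unique _ _ hM0 fun j1 j2 h1 h2 => Fin.ext (by omega)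
        gcongr
    _ = 3 * M := by ring

lemma colB_of_symm {A : Matrix (Fin k) (Fin k) ℝ} {β : ℝ} (hsym : ∀ p q, A p q = A q p)
    (h : RowB A β) : ColB A β := by
  intro j
  calc ∑ i, |A i j| = ∑ i, |A j i| := Finset.sum_congr rfl fun i _ => by rw [hsym i j]
    _ ≤ β := h j

lemma jacobi_symm (a b : ℕ → ℝ) : ∀ p q : Fin k, jacobiMatrix k a b p q = jacobiMatrix k a b q p := by
  intro p q
  show (if (p : ℕ) = (q : ℕ) then a p else if (p : ℕ) + 1 = (q : ℕ) then b p
      else if (q : ℕ) + 1 = (p : ℕ) then b q else 0) = _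
  show _ = (if (q : ℕ) = (p : ℕ) then a q else if (q : ℕ) + 1 = (p : ℕ) then b q
      else if (p : ℕ) + 1 = (q : ℕ) then b p else 0)
  by_cases h1 : (p:ℕ) = (q:ℕ)
  · have : p = q := Fin.ext h1
    subst this; simp
  · have h1' : ¬ (q:ℕ) = (p:ℕ) := fun h => h1 h.symm
    by_cases h2 : (p:ℕ) + 1 = (q:ℕ)
    · have h3 : ¬ (q:ℕ) + 1 = (p:ℕ) := by omega
      simp [h1, h1', h2, h3]
    · by_cases h3 : (q:ℕ) + 1 = (p:ℕ) <;> simp [h1, h1', h2, h3]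

lemma cmat_symm (a b : ℝ) : ∀ p q : Fin k, Cmat k a b p q = Cmat k a b q p := by
  intro p q
  show (a • (1 : Matrix (Fin k) (Fin k) ℝ) + b • shift k 1 + b • (shift k 1)ᵀ) p q = _
  show a * (1 : Matrix (Fin k) (Fin k) ℝ) p q + b * shift k 1 p q + b * shift k 1 q p
    = a * (1 : Matrix (Fin k) (Fin k) ℝ) q p + b * shift k 1 q p + b * shift k 1 p q
  rw [Matrix.one_apply, Matrix.one_apply]
  by_cases h : p = q
  · subst h; ring
  · have h' : ¬ q = p := fun hh => h hh.symm
    rw [if_neg h, if_neg h']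
    ring

lemma rowB_cmat (a b : ℝ) : RowB (Cmat k a b) (|a| + 2 * |b|) := by
  intro i
  have hle : ∀ j : Fin k, |Cmat k a b i j|
      ≤ (if (i:ℕ) = (j:ℕ) then |a| else 0) + ((if ((i:ℕ) + 1) % k = (j:ℕ) then |b| else 0)
          + (if ((j:ℕ) + 1) % k = (i:ℕ) then |b| else 0)) := by
    intro j
    show |a • (1 : Matrix (Fin k) (Fin k) ℝ) i j + b • shift k 1 i j + b • (shift k 1)ᵀ i j| ≤ _
    have step : a • (1 : Matrix (Fin k) (Fin k) ℝ) i j + b • shift k 1 i j + b • (shift k 1)ᵀ i j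
        = a * (if (i:ℕ) = (j:ℕ) then 1 else 0) + b * (if ((i:ℕ) + 1) % k = (j:ℕ) then 1 else 0)
          + b * (if ((j:ℕ) + 1) % k = (i:ℕ) then 1 else 0) := by
      rw [Matrix.transpose_apply]
      show a * (1 : Matrix (Fin k) (Fin k) ℝ) i j + b * shift k 1 i j + b * shift k 1 j i = _
      rw [Matrix.one_apply, if_congr Fin.ext_iff (rfl : (1:ℝ) = 1) (rfl : (0:ℝ) = 0)]
      rfl
    rw [step]
    have trib := abs_add_three (a * (if (i:ℕ) = (j:ℕ) then 1 else 0))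
      (b * (if ((i:ℕ) + 1) % k = (j:ℕ) then 1 else 0))
      (b * (if ((j:ℕ) + 1) % k = (i:ℕ) then 1 else 0))
    refine le_trans trib ?_
    have g1 : |a * (if (i:ℕ) = (j:ℕ) then 1 else 0)| = if (i:ℕ) = (j:ℕ) then |a| else 0 := by
      by_cases h : (i:ℕ) = (j:ℕ) <;> simp [h]
    have g2 : |b * (if ((i:ℕ) + 1) % k = (j:ℕ) then 1 else 0)|
        = if ((i:ℕ) + 1) % k = (j:ℕ) then |b| else 0 := by
      by_cases h : ((i:ℕ) + 1) % k = (j:ℕ) <;> simp [h]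
    have g3 : |b * (if ((j:ℕ) + 1) % k = (i:ℕ) then 1 else 0)|
        = if ((j:ℕ) + 1) % k = (i:ℕ) then |b| else 0 := by
      by_cases h : ((j:ℕ) + 1) % k = (i:ℕ) <;> simp [h]
    rw [g1, g2, g3]
    linarith
  calc ∑ j, |Cmat k a b i j| ≤ ∑ j : Fin k,
        ((if (i:ℕ) = (j:ℕ) then |a| else 0) + ((if ((i:ℕ) + 1) % k = (j:ℕ) then |b| else 0)
          + (if ((j:ℕ) + 1) % k = (i:ℕ) then |b| else 0))) := Finset.sum_le_sum fun j _ => hle j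
    _ = (∑ j : Fin k, if (i:ℕ) = (j:ℕ) then |a| else 0)
          + ((∑ j : Fin k, if ((i:ℕ) + 1) % k = (j:ℕ) then |b| else 0)
          + (∑ j : Fin k, if ((j:ℕ) + 1) % k = (i:ℕ) then |b| else 0)) := by
        rw [Finset.sum_add_distrib, Finset.sum_add_distrib]
    _ ≤ |a| + (|b| + |b|) := by
        have e0 : (∑ j : Fin k, if (i:ℕ) = (j:ℕ) then |a| else 0) ≤ |a| :=
          sum_ite_unique _ _ (abs_nonneg a) fun j1 j2 h1 h2 => Fin.ext (by omega)
        have e1 : (∑ j : Fin k, if ((i:ℕ) + 1) % k = (j:ℕ) then |b| else 0) ≤ |b| :=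
          sum_ite_unique _ _ (abs_nonneg b) fun j1 j2 h1 h2 => Fin.ext (by omega)
        have e2 : (∑ j : Fin k, if ((j:ℕ) + 1) % k = (i:ℕ) then |b| else 0) ≤ |b| := by
          apply sum_ite_unique _ _ (abs_nonneg b)
          intro j1 j2 h1 h2
          apply Fin.ext
          have hj1 := j1.isLt; have hj2 := j2.isLt
          have : ((j1:ℕ) + 1) % k = ((j2:ℕ) + 1) % k := by rw [h1, h2]
          have hmm : ((j1:ℕ) + 1) % k = if (j1:ℕ) + 1 = k then 0 else (j1:ℕ) + 1 := by
            split_ifs with hh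
            · rw [hh, Nat.mod_self]
            · exact Nat.mod_eq_of_lt (by omega)
          have hmm2 : ((j2:ℕ) + 1) % k = if (j2:ℕ) + 1 = k then 0 else (j2:ℕ) + 1 := by
            split_ifs with hh
            · rw [hh, Nat.mod_self]
            · exact Nat.mod_eq_of_lt (by omega)
          rw [hmm, hmm2] at this
          split_ifs at this <;> omega
        gcongr
    _ = |a| + 2 * |b| := by ring

lemma sum_ite_and_le (P : Prop) [Decidable P] (p : Fin k → Prop) [DecidablePred p] (x : ℝ)
    (hx : 0 ≤ x) (hp : ∀ j1 j2, p j1 → p j2 → j1 = j2) :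
    ∑ j : Fin k, (if P ∧ p j then x else 0) ≤ (if P then x else 0) := by
  by_cases hP : P
  · simp only [hP, true_and, if_true]
    exact sum_ite_unique p x hx hp
  · simp [hP]

lemma jacobi_sub_cmat_bound (hk : 3 ≤ k) (aseq bseq : ℕ → ℝ) (a b : ℝ) (i j : Fin k) :
    |(jacobiMatrix k aseq bseq - Cmat k a b) i j|
      ≤ (if (i:ℕ) = (j:ℕ) then |aseq i - a| else 0)
        + ((if (i:ℕ) + 1 = (j:ℕ) then |bseq i - b| else 0)
        + ((if (j:ℕ) + 1 = (i:ℕ) then |bseq j - b| else 0)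
        + ((if ((i:ℕ) = k - 1 ∧ (j:ℕ) = 0) then |b| else 0)
        + (if ((j:ℕ) = k - 1 ∧ (i:ℕ) = 0) then |b| else 0)))) := by
  have hi := i.isLt; have hj := j.isLt
  have hD : (jacobiMatrix k aseq bseq - Cmat k a b) i j
      = jacobiMatrix k aseq bseq i j - Cmat k a b i j := Matrix.sub_apply _ _ _ _
  have hJ : jacobiMatrix k aseq bseq i j
      = (if (i : ℕ) = (j : ℕ) then aseq i else if (i : ℕ) + 1 = (j : ℕ) then bseq i
        else if (j : ℕ) + 1 = (i : ℕ) then bseq j else 0) := rfl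
  rw [hD, hJ, cmat_apply hk]
  by_cases h1 : (i:ℕ) = (j:ℕ)
  · have h2 : ¬ (i:ℕ) + 1 = (j:ℕ) := by omega
    have h3 : ¬ (j:ℕ) + 1 = (i:ℕ) := by omega
    have q1 : ¬ ((i:ℕ) = k - 1 ∧ (j:ℕ) = 0) := by omega
    have q2 : ¬ ((j:ℕ) = k - 1 ∧ (i:ℕ) = 0) := by omega
    rw [if_pos h1, if_pos h1, if_neg (by omega : ¬ ((i:ℕ) + 1 = (j:ℕ) ∨ ((i:ℕ) = k - 1 ∧ (j:ℕ) = 0))),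
      if_neg (by omega : ¬ ((j:ℕ) + 1 = (i:ℕ) ∨ ((j:ℕ) = k - 1 ∧ (i:ℕ) = 0))),
      if_neg h2, if_neg h3, if_neg q1, if_neg q2]
    simp [h1]
  · by_cases h2 : (i:ℕ) + 1 = (j:ℕ)
    · have h3 : ¬ (j:ℕ) + 1 = (i:ℕ) := by omega
      have q1 : ¬ ((i:ℕ) = k - 1 ∧ (j:ℕ) = 0) := by omega
      have q2 : ¬ ((j:ℕ) = k - 1 ∧ (i:ℕ) = 0) := by omega
      rw [if_neg h1, if_neg h1, if_pos h2,
        if_pos (Or.inl h2 : ((i:ℕ) + 1 = (j:ℕ) ∨ ((i:ℕ) = k - 1 ∧ (j:ℕ) = 0))),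
        if_neg (by omega : ¬ ((j:ℕ) + 1 = (i:ℕ) ∨ ((j:ℕ) = k - 1 ∧ (i:ℕ) = 0))),
        if_neg h3, if_neg q1, if_neg q2]
      simp [h1, h2, h3, q1, q2]
    · by_cases h3 : (j:ℕ) + 1 = (i:ℕ)
      · have q1 : ¬ ((i:ℕ) = k - 1 ∧ (j:ℕ) = 0) := by omega
        have q2 : ¬ ((j:ℕ) = k - 1 ∧ (i:ℕ) = 0) := by omega
        rw [if_neg h1, if_neg h1, if_neg h2, if_pos h3,
          if_neg (by omega : ¬ ((i:ℕ) + 1 = (j:ℕ) ∨ ((i:ℕ) = k - 1 ∧ (j:ℕ) = 0))),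
          if_pos (Or.inl h3 : ((j:ℕ) + 1 = (i:ℕ) ∨ ((j:ℕ) = k - 1 ∧ (i:ℕ) = 0))),
          if_neg q1, if_neg q2]
        simp [h1, h2, h3, q1, q2]
      · by_cases q1 : ((i:ℕ) = k - 1 ∧ (j:ℕ) = 0)
        · have q2 : ¬ ((j:ℕ) = k - 1 ∧ (i:ℕ) = 0) := by omega
          rw [if_neg h1, if_neg h1, if_neg h2, if_neg h3,
            if_pos (Or.inr q1 : ((i:ℕ) + 1 = (j:ℕ) ∨ ((i:ℕ) = k - 1 ∧ (j:ℕ) = 0))),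
            if_neg (by omega : ¬ ((j:ℕ) + 1 = (i:ℕ) ∨ ((j:ℕ) = k - 1 ∧ (i:ℕ) = 0))),
            if_pos q1, if_neg q2]
          simp [h1, h2, h3, q1, q2]
          split_ifs <;>
            linarith [abs_nonneg (aseq (k - 1) - a), abs_nonneg (bseq 0 - b)]
        · by_cases q2 : ((j:ℕ) = k - 1 ∧ (i:ℕ) = 0)
          · rw [if_neg h1, if_neg h1, if_neg h2, if_neg h3,
              if_neg (by omega : ¬ ((i:ℕ) + 1 = (j:ℕ) ∨ ((i:ℕ) = k - 1 ∧ (j:ℕ) = 0))),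
              if_pos (Or.inr q2 : ((j:ℕ) + 1 = (i:ℕ) ∨ ((j:ℕ) = k - 1 ∧ (i:ℕ) = 0))),
              if_neg q1, if_pos q2]
            simp [h1, h2, h3, q1, q2]
            split_ifs <;>
              linarith [abs_nonneg (aseq 0 - a), abs_nonneg (bseq 0 - b)]
          · rw [if_neg h1, if_neg h1, if_neg h2, if_neg h3,
              if_neg (by omega : ¬ ((i:ℕ) + 1 = (j:ℕ) ∨ ((i:ℕ) = k - 1 ∧ (j:ℕ) = 0))),
              if_neg (by omega : ¬ ((j:ℕ) + 1 = (i:ℕ) ∨ ((j:ℕ) = k - 1 ∧ (i:ℕ) = 0))),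
              if_neg q1, if_neg q2]
            simp [h1, h2, h3, q1, q2]

lemma entN_jacobi_sub_cmat (hk : 3 ≤ k) (aseq bseq : ℕ → ℝ) (a b : ℝ) :
    entN (jacobiMatrix k aseq bseq - Cmat k a b)
      ≤ (∑ t ∈ Finset.range k, |aseq t - a|) + 2 * (∑ t ∈ Finset.range k, |bseq t - b|)
        + 2 * |b| := by
  have habs : ∀ t, 0 ≤ |bseq t - b| := fun t => abs_nonneg _
  calc entN (jacobiMatrix k aseq bseq - Cmat k a b)
      ≤ ∑ i : Fin k, ∑ j : Fin k,
          ((if (i:ℕ) = (j:ℕ) then |aseq i - a| else 0)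
            + ((if (i:ℕ) + 1 = (j:ℕ) then |bseq i - b| else 0)
            + ((if (j:ℕ) + 1 = (i:ℕ) then |bseq j - b| else 0)
            + ((if ((i:ℕ) = k - 1 ∧ (j:ℕ) = 0) then |b| else 0)
            + (if ((j:ℕ) = k - 1 ∧ (i:ℕ) = 0) then |b| else 0))))) := by
        apply Finset.sum_le_sum; intro i _
        apply Finset.sum_le_sum; intro j _
        exact jacobi_sub_cmat_bound hk aseq bseq a b i j
    _ = (∑ i : Fin k, ∑ j : Fin k, (if (i:ℕ) = (j:ℕ) then |aseq i - a| else 0))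
        + ((∑ i : Fin k, ∑ j : Fin k, (if (i:ℕ) + 1 = (j:ℕ) then |bseq i - b| else 0))
        + ((∑ i : Fin k, ∑ j : Fin k, (if (j:ℕ) + 1 = (i:ℕ) then |bseq j - b| else 0))
        + ((∑ i : Fin k, ∑ j : Fin k, (if ((i:ℕ) = k - 1 ∧ (j:ℕ) = 0) then |b| else 0))
        + (∑ i : Fin k, ∑ j : Fin k, (if ((j:ℕ) = k - 1 ∧ (i:ℕ) = 0) then |b| else 0))))) := by
        simp only [Finset.sum_add_distrib]
    _ ≤ (∑ i : Fin k, |aseq i - a|)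
        + ((∑ i : Fin k, |bseq i - b|)
        + ((∑ j : Fin k, |bseq j - b|)
        + (|b| + |b|))) := by
        have t1 : (∑ i : Fin k, ∑ j : Fin k, (if (i:ℕ) = (j:ℕ) then |aseq i - a| else 0))
            ≤ ∑ i : Fin k, |aseq i - a| := by
          apply Finset.sum_le_sum; intro i _
          exact sum_ite_unique _ _ (abs_nonneg _) fun j1 j2 ha hb => Fin.ext (by omega)
        have t2 : (∑ i : Fin k, ∑ j : Fin k, (if (i:ℕ) + 1 = (j:ℕ) then |bseq i - b| else 0))
            ≤ ∑ i : Fin k, |bseq i - b| := by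
          apply Finset.sum_le_sum; intro i _
          exact sum_ite_unique _ _ (abs_nonneg _) fun j1 j2 ha hb => Fin.ext (by omega)
        have t3 : (∑ i : Fin k, ∑ j : Fin k, (if (j:ℕ) + 1 = (i:ℕ) then |bseq j - b| else 0))
            ≤ ∑ j : Fin k, |bseq j - b| := by
          rw [Finset.sum_comm]
          apply Finset.sum_le_sum; intro j _
          exact sum_ite_unique _ _ (abs_nonneg _) fun j1 j2 ha hb => Fin.ext (by omega)
        have t4 : (∑ i : Fin k, ∑ j : Fin k, (if ((i:ℕ) = k - 1 ∧ (j:ℕ) = 0) then |b| else 0))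
            ≤ |b| := by
          calc (∑ i : Fin k, ∑ j : Fin k, (if ((i:ℕ) = k - 1 ∧ (j:ℕ) = 0) then |b| else 0))
              ≤ ∑ i : Fin k, (if (i:ℕ) = k - 1 then |b| else 0) := by
                apply Finset.sum_le_sum; intro i _
                exact sum_ite_and_le _ _ _ (abs_nonneg _) fun j1 j2 ha hb => Fin.ext (by omega)
            _ ≤ |b| := sum_ite_unique _ _ (abs_nonneg _) fun j1 j2 ha hb => Fin.ext (by omega)
        have t5 : (∑ i : Fin k, ∑ j : Fin k, (if ((j:ℕ) = k - 1 ∧ (i:ℕ) = 0) then |b| else 0))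
            ≤ |b| := by
          calc (∑ i : Fin k, ∑ j : Fin k, (if ((j:ℕ) = k - 1 ∧ (i:ℕ) = 0) then |b| else 0))
              = ∑ i : Fin k, ∑ j : Fin k, (if ((i:ℕ) = 0 ∧ (j:ℕ) = k - 1) then |b| else 0) := by
                refine Finset.sum_congr rfl fun i _ => Finset.sum_congr rfl fun j _ => ?_
                rw [if_congr (and_comm) (rfl : |b| = |b|) (rfl : (0:ℝ) = 0)]
            _ ≤ ∑ i : Fin k, (if (i:ℕ) = 0 then |b| else 0) := by
                apply Finset.sum_le_sum; intro i _
                exact sum_ite_and_le _ _ _ (abs_nonneg _) fun j1 j2 ha hb => Fin.ext (by omega)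
            _ ≤ |b| := sum_ite_unique _ _ (abs_nonneg _) fun j1 j2 ha hb => Fin.ext (by omega)
        gcongr
    _ = (∑ t ∈ Finset.range k, |aseq t - a|) + 2 * (∑ t ∈ Finset.range k, |bseq t - b|)
        + 2 * |b| := by
        rw [Fin.sum_univ_eq_sum_range (fun t => |aseq t - a|) k,
          Fin.sum_univ_eq_sum_range (fun t => |bseq t - b|) k]
        ring

lemma sum_dev_div_tendsto_zero (f : ℕ → ℝ) (c B : ℝ) (hB : 0 < B) (hf : ∀ j, |f j - c| ≤ B)
    (h : ∀ ε : ℝ, 0 < ε →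
      ((fun k : ℕ => (((Finset.range k).filter fun j => ε ≤ |f j - c|).card : ℝ))
        =o[Filter.atTop] fun k : ℕ => (k : ℝ))) :
    Filter.Tendsto (fun k : ℕ => (∑ j ∈ Finset.range k, |f j - c|) / k) Filter.atTop (nhds 0) := by
  rw [NormedAddCommGroup.tendsto_nhds_zero]
  intro ε hε
  have hc : (0:ℝ) < ε / (4 * B) := by positivity
  have h1 := (h (ε / 4) (by positivity)).def hc
  rw [Filter.eventually_atTop] at h1 ⊢
  obtain ⟨N, hN⟩ := h1
  refine ⟨max N 1, fun k hk => ?_⟩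
  have hkN : N ≤ k := le_trans (le_max_left _ _) hk
  have hk1 : 1 ≤ k := le_trans (le_max_right _ _) hk
  have hcard := hN k hkN
  rw [Real.norm_eq_abs, Real.norm_eq_abs, abs_of_nonneg (by positivity : (0:ℝ) ≤ ((((Finset.range k).filter fun j => ε / 4 ≤ |f j - c|).card : ℝ))), abs_of_nonneg (by positivity : (0:ℝ) ≤ (k:ℝ))] at hcard
  have hsplit := Finset.sum_filter_add_sum_filter_not (Finset.range k)
    (fun j => ε / 4 ≤ |f j - c|) (fun j => |f j - c|)
  have hbad : (∑ j ∈ (Finset.range k).filter fun j => ε / 4 ≤ |f j - c|, |f j - c|)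
      ≤ (((Finset.range k).filter fun j => ε / 4 ≤ |f j - c|).card : ℝ) * B := by
    have := Finset.sum_le_card_nsmul ((Finset.range k).filter fun j => ε / 4 ≤ |f j - c|)
      (fun j => |f j - c|) B (fun j _ => hf j)
    rw [nsmul_eq_mul] at this
    exact this
  have hgood : (∑ j ∈ (Finset.range k).filter fun j => ¬ ε / 4 ≤ |f j - c|, |f j - c|)
      ≤ (k : ℝ) * (ε / 4) := by
    have hle := Finset.sum_le_card_nsmul ((Finset.range k).filter fun j => ¬ ε / 4 ≤ |f j - c|)
      (fun j => |f j - c|) (ε / 4) (fun j hj => le_of_lt (by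
        rw [Finset.mem_filter] at hj
        exact lt_of_not_ge hj.2))
    rw [nsmul_eq_mul] at hle
    refine le_trans hle ?_
    apply mul_le_mul_of_nonneg_right _ (by positivity)
    have := Finset.card_filter_le (Finset.range k) (fun j => ¬ ε / 4 ≤ |f j - c|)
    rw [Finset.card_range] at this
    exact_mod_cast this
  have htot : (∑ j ∈ Finset.range k, |f j - c|) ≤ (ε / 2) * k := by
    rw [← hsplit]
    have hb2 : (((Finset.range k).filter fun j => ε / 4 ≤ |f j - c|).card : ℝ) * B
        ≤ (ε / (4 * B) * k) * B := mul_le_mul_of_nonneg_right hcard (le_of_lt hB)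
    have : (ε / (4 * B) * k) * B = (ε / 4) * k := by field_simp
    nlinarith
  have hknonneg : (0:ℝ) < (k:ℝ) := by exact_mod_cast hk1
  rw [Real.norm_eq_abs, abs_of_nonneg (by positivity)]
  calc (∑ j ∈ Finset.range k, |f j - c|) / k ≤ ((ε / 2) * k) / k :=
        (div_le_div_iff_of_pos_right hknonneg).mpr htot
    _ = ε / 2 := by rw [mul_div_assoc, div_self (ne_of_gt hknonneg), mul_one]
    _ < ε := by linarith

section Main

variable (aseq bseq : ℕ → ℝ) (M : ℝ) (a b : ℝ)

/-- limit value is below the uniform bound -/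
lemma acc_le_bound (c : ℝ) (f : ℕ → ℝ) (hf : ∀ j, |f j| ≤ M)
    (hacc : ∀ ε : ℝ, 0 < ε →
      ((fun k : ℕ => (((Finset.range k).filter fun j => ε ≤ |f j - c|).card : ℝ))
        =o[Filter.atTop] fun k : ℕ => (k : ℝ))) : |c| ≤ M := by
  by_contra hca
  push_neg at hca
  set ε := |c| - M with hεdef
  have hε : 0 < ε := by linarith
  have hall : ∀ K : ℕ, ∀ j ∈ Finset.range K, ε ≤ |f j - c| := by
    intro K j _
    have h1 : |c| - |f j| ≤ |f j - c| := by
      have := abs_sub_abs_le_abs_sub c (f j)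
      rw [abs_sub_comm] at this
      linarith
    have := hf j
    linarith
  have heq : (fun K : ℕ => (((Finset.range K).filter fun j => ε ≤ |f j - c|).card : ℝ))
      = fun K : ℕ => (K : ℝ) := by
    funext K
    rw [Finset.filter_true_of_mem (hall K), Finset.card_range]
  have h := hacc ε hε
  rw [heq] at h
  have hbd := h.def (by norm_num : (0:ℝ) < 1/2)
  rw [Filter.eventually_atTop] at hbd
  obtain ⟨N, hN⟩ := hbd
  have := hN (max N 1) (le_max_left _ _)
  have h1 : (1:ℝ) ≤ ((max N 1 : ℕ) : ℝ) := by
    exact_mod_cast le_max_right N 1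
  rw [Real.norm_eq_abs, abs_of_nonneg (by positivity)] at this
  linarith

end Main

section Limits

variable {aseq bseq : ℕ → ℝ} {M a b : ℝ}

lemma mono_limit
    (hM : ∀ j, |aseq j| ≤ M ∧ |bseq j| ≤ M)
    (haM : |a| ≤ M) (hbM : |b| ≤ M) (hb : 0 < b)
    (hacca : ∀ ε : ℝ, 0 < ε →
      ((fun k : ℕ => (((Finset.range k).filter fun j => ε ≤ |aseq j - a|).card : ℝ))
        =o[Filter.atTop] fun k : ℕ => (k : ℝ)))
    (haccb : ∀ ε : ℝ, 0 < ε →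
      ((fun k : ℕ => (((Finset.range k).filter fun j => ε ≤ |bseq j - b|).card : ℝ))
        =o[Filter.atTop] fun k : ℕ => (k : ℝ)))
    (m : ℕ) :
    Filter.Tendsto (fun k : ℕ => (1 / (k:ℝ)) * ((jacobiMatrix k aseq bseq ^ m).trace))
      Filter.atTop (nhds (tm m a b)) := by
  have hM0 : 0 ≤ M := le_trans (abs_nonneg _) (hM 0).1
  set β : ℝ := 3 * M + 1 with hβdef
  have hβ1 : 1 ≤ β := by linarith
  have hβ0 : 0 ≤ β := by linarith
  set Sa : ℕ → ℝ := fun k => ∑ t ∈ Finset.range k, |aseq t - a| with hSa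
  set Sb : ℕ → ℝ := fun k => ∑ t ∈ Finset.range k, |bseq t - b| with hSb
  have hrowJ : ∀ k, RowB (jacobiMatrix k aseq bseq) β := by
    intro k i
    exact le_trans (rowB_jacobi aseq bseq M hM i) (by linarith)
  have hcolJ : ∀ k, ColB (jacobiMatrix k aseq bseq) β :=
    fun k => colB_of_symm (jacobi_symm aseq bseq) (hrowJ k)
  have hrowC : ∀ k, RowB (Cmat k a b) β := by
    intro k i
    refine le_trans (rowB_cmat a b i) ?_
    have : |a| + 2 * |b| ≤ 3 * M := by linarith
    linarith
  have key : ∀ᶠ k : ℕ in Filter.atTop,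
      |(1 / (k:ℝ)) * ((jacobiMatrix k aseq bseq ^ m).trace) - tm m a b|
        ≤ (m * β ^ m) * ((Sa k + 2 * Sb k + 2 * b) / k) := by
    filter_upwards [Filter.eventually_ge_atTop (max (m + 1) 3)] with k hk
    have hk3 : 3 ≤ k := le_trans (le_max_right _ _) hk
    have hmk : m < k := lt_of_lt_of_le (Nat.lt_succ_self m) (le_trans (le_max_left _ _) hk)
    have hk0 : 0 < k := by omega
    have hk0R : (0:ℝ) < (k:ℝ) := by exact_mod_cast hk0
    have h1 : (Cmat k a b ^ m).trace = (k:ℝ) * tm m a b := trace_Cmat_pow a b hmk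
    have h2 : |(jacobiMatrix k aseq bseq ^ m).trace - (Cmat k a b ^ m).trace|
        ≤ m * β ^ m * entN (jacobiMatrix k aseq bseq - Cmat k a b) := by
      rw [← Matrix.trace_sub]
      exact le_trans (abs_trace_le _) (entN_pow_sub_pow hk0 hβ1 (hcolJ k) (hrowC k) m)
    have h3 : entN (jacobiMatrix k aseq bseq - Cmat k a b) ≤ Sa k + 2 * Sb k + 2 * b := by
      have := entN_jacobi_sub_cmat hk3 aseq bseq a b
      rw [abs_of_pos hb] at this
      exact this
    have hnn : (0:ℝ) ≤ m * β ^ m := by positivity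
    calc |(1 / (k:ℝ)) * ((jacobiMatrix k aseq bseq ^ m).trace) - tm m a b|
        = (1 / (k:ℝ)) * |(jacobiMatrix k aseq bseq ^ m).trace - (Cmat k a b ^ m).trace| := by
          rw [h1]
          rw [show (1 / (k:ℝ)) * ((jacobiMatrix k aseq bseq ^ m).trace) - tm m a b
              = (1 / (k:ℝ)) * ((jacobiMatrix k aseq bseq ^ m).trace - (k:ℝ) * tm m a b) from by
            field_simp]
          rw [abs_mul, abs_of_pos (by positivity : (0:ℝ) < 1 / (k:ℝ))]
      _ ≤ (1 / (k:ℝ)) * (m * β ^ m * (Sa k + 2 * Sb k + 2 * b)) := by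
          apply mul_le_mul_of_nonneg_left _ (by positivity)
          refine le_trans h2 ?_
          exact mul_le_mul_of_nonneg_left h3 hnn
      _ = (m * β ^ m) * ((Sa k + 2 * Sb k + 2 * b) / k) := by
          field_simp
  have hSa0 : Filter.Tendsto (fun k : ℕ => Sa k / k) Filter.atTop (nhds 0) := by
    apply sum_dev_div_tendsto_zero aseq a (2 * M + 1) (by linarith)
    · intro j
      have := (hM j).1
      have h := abs_sub (aseq j) a
      calc |aseq j - a| ≤ |aseq j| + |a| := abs_sub _ _
        _ ≤ 2 * M + 1 := by linarith
    · exact hacca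
  have hSb0 : Filter.Tendsto (fun k : ℕ => Sb k / k) Filter.atTop (nhds 0) := by
    apply sum_dev_div_tendsto_zero bseq b (2 * M + 1) (by linarith)
    · intro j
      calc |bseq j - b| ≤ |bseq j| + |b| := abs_sub _ _
        _ ≤ 2 * M + 1 := by
          have := (hM j).2
          linarith
    · exact haccb
  have h2b : Filter.Tendsto (fun k : ℕ => (2 * b) / (k:ℝ)) Filter.atTop (nhds 0) :=
    tendsto_const_div_atTop_nhds_zero_nat (2 * b)
  have hg : Filter.Tendsto (fun k : ℕ => (m * β ^ m) * ((Sa k + 2 * Sb k + 2 * b) / k))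
      Filter.atTop (nhds 0) := by
    have hfe : (fun k : ℕ => (Sa k + 2 * Sb k + 2 * b) / k)
        = fun k : ℕ => Sa k / k + 2 * (Sb k / k) + (2 * b) / k := by
      funext k
      rw [add_div, add_div]
      ring
    have hsum : Filter.Tendsto (fun k : ℕ => (Sa k + 2 * Sb k + 2 * b) / k)
        Filter.atTop (nhds 0) := by
      rw [hfe]
      have := (hSa0.add ((hSb0.const_mul 2))).add h2b
      simpa using this
    have := hsum.const_mul (m * β ^ m)
    simpa using this
  have hz : Filter.Tendsto
      (fun k : ℕ => (1 / (k:ℝ)) * ((jacobiMatrix k aseq bseq ^ m).trace) - tm m a b)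
      Filter.atTop (nhds 0) := by
    apply squeeze_zero_norm' _ hg
    filter_upwards [key] with k hk
    rw [Real.norm_eq_abs]
    exact hk
  have := tendsto_sub_nhds_zero_iff.mp hz
  exact this

lemma poly_limit
    (hM : ∀ j, |aseq j| ≤ M ∧ |bseq j| ≤ M)
    (haM : |a| ≤ M) (hbM : |b| ≤ M) (hb : 0 < b)
    (hacca : ∀ ε : ℝ, 0 < ε →
      ((fun k : ℕ => (((Finset.range k).filter fun j => ε ≤ |aseq j - a|).card : ℝ))
        =o[Filter.atTop] fun k : ℕ => (k : ℝ)))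
    (haccb : ∀ ε : ℝ, 0 < ε →
      ((fun k : ℕ => (((Finset.range k).filter fun j => ε ≤ |bseq j - b|).card : ℝ))
        =o[Filter.atTop] fun k : ℕ => (k : ℝ)))
    (p : Polynomial ℝ) :
    Filter.Tendsto (fun k : ℕ => (1 / (k:ℝ)) *
        ∑ i, Polynomial.eval ((jacobiMatrix_isHermitian k aseq bseq).eigenvalues i) p)
      Filter.atTop
      (nhds ((1 / Real.pi) * ∫ x in (0:ℝ)..Real.pi,
        Polynomial.eval (a + 2 * b * Real.cos x) p)) := by
  have hfun : ∀ k : ℕ, (1 / (k:ℝ)) *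
      ∑ i, Polynomial.eval ((jacobiMatrix_isHermitian k aseq bseq).eigenvalues i) p
        = ∑ n ∈ Finset.range (p.natDegree + 1),
            p.coeff n * ((1 / (k:ℝ)) * ((jacobiMatrix k aseq bseq ^ n).trace)) := by
    intro k
    have h1 : ∑ i, Polynomial.eval ((jacobiMatrix_isHermitian k aseq bseq).eigenvalues i) p
        = ∑ n ∈ Finset.range (p.natDegree + 1),
            p.coeff n * ((jacobiMatrix k aseq bseq ^ n).trace) := by
      calc ∑ i, Polynomial.eval ((jacobiMatrix_isHermitian k aseq bseq).eigenvalues i) p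
          = ∑ i, ∑ n ∈ Finset.range (p.natDegree + 1),
              p.coeff n * ((jacobiMatrix_isHermitian k aseq bseq).eigenvalues i) ^ n := by
            refine Finset.sum_congr rfl fun i _ => ?_
            exact Polynomial.eval_eq_sum_range _
        _ = ∑ n ∈ Finset.range (p.natDegree + 1),
              ∑ i, p.coeff n * ((jacobiMatrix_isHermitian k aseq bseq).eigenvalues i) ^ n :=
            Finset.sum_comm
        _ = ∑ n ∈ Finset.range (p.natDegree + 1),
              p.coeff n * ((jacobiMatrix k aseq bseq ^ n).trace) := by
            refine Finset.sum_congr rfl fun n _ => ?_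
            rw [← Finset.mul_sum, sum_eigenvalues_pow]
    rw [h1, Finset.mul_sum]
    refine Finset.sum_congr rfl fun n _ => ?_
    ring
  have hRHS : (1 / Real.pi) * ∫ x in (0:ℝ)..Real.pi, Polynomial.eval (a + 2 * b * Real.cos x) p
      = ∑ n ∈ Finset.range (p.natDegree + 1), p.coeff n * tm n a b := by
    have h1 : (∫ x in (0:ℝ)..Real.pi, Polynomial.eval (a + 2 * b * Real.cos x) p)
        = ∑ n ∈ Finset.range (p.natDegree + 1),
            p.coeff n * ∫ x in (0:ℝ)..Real.pi, (a + 2 * b * Real.cos x) ^ n := by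
      rw [intervalIntegral.integral_congr
        (g := fun x => ∑ n ∈ Finset.range (p.natDegree + 1),
          p.coeff n * (a + 2 * b * Real.cos x) ^ n)
        (fun x _ => Polynomial.eval_eq_sum_range _)]
      rw [intervalIntegral.integral_finset_sum (fun n _ => by
        apply Continuous.intervalIntegrable
        fun_prop)]
      refine Finset.sum_congr rfl fun n _ => ?_
      rw [intervalIntegral.integral_const_mul]
    rw [h1, Finset.mul_sum]
    refine Finset.sum_congr rfl fun n _ => ?_
    rw [moment_eq a b n]
    ring
  rw [hRHS]
  have hfe : (fun k : ℕ => (1 / (k:ℝ)) *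
      ∑ i, Polynomial.eval ((jacobiMatrix_isHermitian k aseq bseq).eigenvalues i) p)
        = fun k : ℕ => ∑ n ∈ Finset.range (p.natDegree + 1),
            p.coeff n * ((1 / (k:ℝ)) * ((jacobiMatrix k aseq bseq ^ n).trace)) := by
    funext k
    exact hfun k
  rw [hfe]
  apply tendsto_finset_sum
  intro n _
  exact ((mono_limit hM haM hbM hb hacca haccb n).const_mul (p.coeff n))

end Limits

end KSC

/-- Kuijlaars–Serra Capizzano, single accumulation point: bounded sequences
`(a_k)ₖ, (b_k)ₖ`, `b_k > 0`, with `a_j → a`, `b_j → b` except on sets of size `o(k)`, give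
`lim (1/k)·Trace[φ(J)] = (1/π) ∫_0^π φ(a+2b cos x) dx` for continuous `φ`. -/
theorem trace_formula_single_point (aseq bseq : ℕ → ℝ)
    (hbpos : ∀ j, 0 < bseq j)
    (hbdd : ∃ M : ℝ, ∀ j, |aseq j| ≤ M ∧ |bseq j| ≤ M)
    (a b : ℝ) (hb : 0 < b)
    (hacca : ∀ ε : ℝ, 0 < ε →
      ((fun k : ℕ => (((Finset.range k).filter fun j => ε ≤ |aseq j - a|).card : ℝ))
        =o[Filter.atTop] fun k : ℕ => (k : ℝ)))
    (haccb : ∀ ε : ℝ, 0 < ε →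
      ((fun k : ℕ => (((Finset.range k).filter fun j => ε ≤ |bseq j - b|).card : ℝ))
        =o[Filter.atTop] fun k : ℕ => (k : ℝ)))
    (φ : ℝ → ℝ) (hφ : Continuous φ) :
    Filter.Tendsto (fun k : ℕ => (1 / (k : ℝ)) * jacobiTrace k aseq bseq φ)
      Filter.atTop
      (nhds ((1 / Real.pi) * ∫ x in (0 : ℝ)..Real.pi, φ (a + 2 * b * Real.cos x))) := by
  obtain ⟨M, hM⟩ := hbdd
  have hM0 : 0 ≤ M := le_trans (abs_nonneg _) (hM 0).1
  have haM : |a| ≤ M := KSC.acc_le_bound M a aseq (fun j => (hM j).1) hacca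
  have hbM : |b| ≤ M := KSC.acc_le_bound M b bseq (fun j => (hM j).2) haccb
  rw [Metric.tendsto_atTop]
  intro ε hε
  -- polynomial approximation on [-3M, 3M]
  obtain ⟨p, hp⟩ := exists_polynomial_near_of_continuousOn (-(3*M)) (3*M) φ
    hφ.continuousOn (ε/4) (by positivity)
  have hpoly := KSC.poly_limit (aseq := aseq) (bseq := bseq) hM haM hbM hb hacca haccb p
  rw [Metric.tendsto_atTop] at hpoly
  obtain ⟨N, hN⟩ := hpoly (ε/4) (by positivity)
  refine ⟨max N 1, fun k hk => ?_⟩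
  have hkN : N ≤ k := le_trans (le_max_left _ _) hk
  have hk1 : 1 ≤ k := le_trans (le_max_right _ _) hk
  have hk0R : (0:ℝ) < (k:ℝ) := by exact_mod_cast hk1
  set lam : Fin k → ℝ := fun i => (jacobiMatrix_isHermitian k aseq bseq).eigenvalues i with hlam
  have hlmem : ∀ i, lam i ∈ Set.Icc (-(3*M)) (3*M) := by
    intro i
    have := KSC.eig_bound aseq bseq M hM i
    rw [Set.mem_Icc]
    constructor <;> [linarith [neg_abs_le (lam i)]; linarith [le_abs_self (lam i)]]
  have hymem : ∀ x : ℝ, a + 2 * b * Real.cos x ∈ Set.Icc (-(3*M)) (3*M) := by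
    intro x
    have hc1 : |Real.cos x| ≤ 1 := Real.abs_cos_le_one x
    have h1 : |a + 2 * b * Real.cos x| ≤ 3 * M := by
      calc |a + 2 * b * Real.cos x| ≤ |a| + |2 * b * Real.cos x| := abs_add_le _ _
        _ = |a| + 2 * b * |Real.cos x| := by
            rw [abs_mul, abs_mul, abs_of_nonneg (by norm_num : (0:ℝ) ≤ 2),
              abs_of_pos hb]
        _ ≤ M + 2 * M * 1 := by
            have hbM' : b ≤ M := le_trans (le_abs_self b) hbM
            have h2 : 2 * b * |Real.cos x| ≤ 2 * M * 1 := by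
              apply mul_le_mul (by linarith) hc1 (abs_nonneg _) (by linarith)
            linarith
        _ = 3 * M := by ring
    rw [Set.mem_Icc]
    constructor <;> [linarith [neg_abs_le (a + 2 * b * Real.cos x)];
      linarith [le_abs_self (a + 2 * b * Real.cos x)]]
  -- term 1
  have hterm1 : |(1 / (k:ℝ)) * jacobiTrace k aseq bseq φ
      - (1 / (k:ℝ)) * ∑ i, Polynomial.eval (lam i) p| ≤ ε/4 := by
    have hptw : ∀ i : Fin k, |φ (lam i) - Polynomial.eval (lam i) p| ≤ ε/4 := by
      intro i
      have := hp (lam i) (hlmem i)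
      rw [abs_sub_comm] at this
      exact le_of_lt this
    have hsum : |∑ i, (φ (lam i) - Polynomial.eval (lam i) p)| ≤ (k:ℝ) * (ε/4) := by
      calc |∑ i, (φ (lam i) - Polynomial.eval (lam i) p)|
          ≤ ∑ i, |φ (lam i) - Polynomial.eval (lam i) p| := Finset.abs_sum_le_sum_abs _ _
        _ ≤ ∑ _i : Fin k, (ε/4) := Finset.sum_le_sum fun i _ => hptw i
        _ = (k:ℝ) * (ε/4) := by
            rw [Finset.sum_const, Finset.card_univ, Fintype.card_fin, nsmul_eq_mul]
    have heq : (1 / (k:ℝ)) * jacobiTrace k aseq bseq φ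
        - (1 / (k:ℝ)) * ∑ i, Polynomial.eval (lam i) p
        = (1 / (k:ℝ)) * ∑ i, (φ (lam i) - Polynomial.eval (lam i) p) := by
      rw [Finset.sum_sub_distrib]
      show (1 / (k:ℝ)) * (∑ i, φ (lam i)) - _ = _
      ring
    rw [heq, abs_mul, abs_of_pos (by positivity : (0:ℝ) < 1 / (k:ℝ))]
    calc (1 / (k:ℝ)) * |∑ i, (φ (lam i) - Polynomial.eval (lam i) p)|
        ≤ (1 / (k:ℝ)) * ((k:ℝ) * (ε/4)) := by
          apply mul_le_mul_of_nonneg_left hsum (by positivity)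
      _ = ε/4 := by field_simp
  -- term 2
  have hterm2 : dist ((1 / (k:ℝ)) * ∑ i, Polynomial.eval (lam i) p)
      ((1 / Real.pi) * ∫ x in (0:ℝ)..Real.pi, Polynomial.eval (a + 2 * b * Real.cos x) p)
      < ε/4 := hN k hkN
  -- term 3
  have hterm3 : |(1 / Real.pi) * (∫ x in (0:ℝ)..Real.pi, Polynomial.eval (a + 2 * b * Real.cos x) p)
      - (1 / Real.pi) * ∫ x in (0:ℝ)..Real.pi, φ (a + 2 * b * Real.cos x)| ≤ ε/4 := by
    have hint1 : IntervalIntegrable (fun x => Polynomial.eval (a + 2 * b * Real.cos x) p)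
        MeasureTheory.volume 0 Real.pi := by
      apply Continuous.intervalIntegrable
      fun_prop
    have hint2 : IntervalIntegrable (fun x => φ (a + 2 * b * Real.cos x))
        MeasureTheory.volume 0 Real.pi := by
      apply Continuous.intervalIntegrable
      exact hφ.comp (by fun_prop)
    have hdiff : (∫ x in (0:ℝ)..Real.pi, Polynomial.eval (a + 2 * b * Real.cos x) p)
        - ∫ x in (0:ℝ)..Real.pi, φ (a + 2 * b * Real.cos x)
        = ∫ x in (0:ℝ)..Real.pi,
            (Polynomial.eval (a + 2 * b * Real.cos x) p - φ (a + 2 * b * Real.cos x)) :=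
      (intervalIntegral.integral_sub hint1 hint2).symm
    have hbound : ‖∫ x in (0:ℝ)..Real.pi,
        (Polynomial.eval (a + 2 * b * Real.cos x) p - φ (a + 2 * b * Real.cos x))‖
        ≤ (ε/4) * |Real.pi - 0| := by
      apply intervalIntegral.norm_integral_le_of_norm_le_const
      intro x _
      rw [Real.norm_eq_abs]
      exact le_of_lt (hp _ (hymem x))
    rw [← mul_sub, abs_mul, abs_of_pos (by positivity : (0:ℝ) < 1 / Real.pi), hdiff]
    rw [Real.norm_eq_abs] at hbound
    calc (1 / Real.pi) * |∫ x in (0:ℝ)..Real.pi,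
          (Polynomial.eval (a + 2 * b * Real.cos x) p - φ (a + 2 * b * Real.cos x))|
        ≤ (1 / Real.pi) * ((ε/4) * |Real.pi - 0|) := by
          apply mul_le_mul_of_nonneg_left hbound (by positivity)
      _ = ε/4 := by
          rw [sub_zero, abs_of_pos Real.pi_pos]
          field_simp
  rw [Real.dist_eq]
  rw [Real.dist_eq] at hterm2
  calc |(1 / (k:ℝ)) * jacobiTrace k aseq bseq φ
      - (1 / Real.pi) * ∫ x in (0:ℝ)..Real.pi, φ (a + 2 * b * Real.cos x)|
      ≤ |(1 / (k:ℝ)) * jacobiTrace k aseq bseq φ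
          - (1 / (k:ℝ)) * ∑ i, Polynomial.eval (lam i) p|
        + |(1 / (k:ℝ)) * ∑ i, Polynomial.eval (lam i) p
          - (1 / Real.pi) * ∫ x in (0:ℝ)..Real.pi, Polynomial.eval (a + 2 * b * Real.cos x) p|
        + |(1 / Real.pi) * (∫ x in (0:ℝ)..Real.pi, Polynomial.eval (a + 2 * b * Real.cos x) p)
          - (1 / Real.pi) * ∫ x in (0:ℝ)..Real.pi, φ (a + 2 * b * Real.cos x)| := by
        have t1 := abs_sub_le ((1 / (k:ℝ)) * jacobiTrace k aseq bseq φ)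
          ((1 / (k:ℝ)) * ∑ i, Polynomial.eval (lam i) p)
          ((1 / Real.pi) * ∫ x in (0:ℝ)..Real.pi, φ (a + 2 * b * Real.cos x))
        have t2 := abs_sub_le ((1 / (k:ℝ)) * ∑ i, Polynomial.eval (lam i) p)
          ((1 / Real.pi) * ∫ x in (0:ℝ)..Real.pi, Polynomial.eval (a + 2 * b * Real.cos x) p)
          ((1 / Real.pi) * ∫ x in (0:ℝ)..Real.pi, φ (a + 2 * b * Real.cos x))
        linarith
    _ < ε := by linarith
end
end

section
/- Let (a^k)_k be a sequence of vectors a^k = (a_1^k,…,a_k^k) with 0 ≤ a_i^k ≤ 1 for all i and k, and suppose (a^k)_k is a.e. monotone. Then Σ_{i=1}^{k-1} |a_{i+1}^k − a_i^k| = o(k) as k → ∞; i.e., (a^k)_k belongs to the class 𝒮. -/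
open Filter MeasureTheory

noncomputable section

lemma aeincreasing_littleO (a : ℕ → ℕ → ℝ)
    (hbd : ∀ k : ℕ, ∀ i < k, a k i ∈ Set.Icc (0 : ℝ) 1)
    (hi : AEIncreasing a) :
    (fun k : ℕ => ∑ i ∈ Finset.range (k - 1), |a k (i + 1) - a k i|)
      =o[Filter.atTop] fun k : ℕ => (k : ℝ) := by
  set G : ℕ → ℕ := fun k => ((Finset.range (k - 1)).filter fun i => a k i ≤ a k (i + 1)).card
    with hG
  have hi' : Filter.Tendsto (fun k : ℕ => (G k : ℝ) / k) Filter.atTop (nhds 1) := hi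
  rw [Asymptotics.isLittleO_iff_tendsto]
  swap
  · intro k hk
    have : k = 0 := by exact_mod_cast hk
    simp [this]
  have h1 : Filter.Tendsto (fun k : ℕ => 1 / (k : ℝ)) Filter.atTop (nhds 0) :=
    tendsto_one_div_atTop_nhds_zero_nat
  have hupper : Filter.Tendsto
      (fun k : ℕ => (1 + 2 * ((k - 1 : ℕ) : ℝ) - 2 * (G k : ℝ)) / k)
      Filter.atTop (nhds 0) := by
    have h2 : Filter.Tendsto (fun k : ℕ => 2 * ((k - 1 : ℕ) : ℝ) / k) Filter.atTop (nhds 2) := by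
      have heq : ∀ᶠ k : ℕ in Filter.atTop,
          2 - 2 * (1 / (k : ℝ)) = 2 * ((k - 1 : ℕ) : ℝ) / k := by
        filter_upwards [Filter.eventually_ge_atTop 1] with k hk
        have hk0 : (k : ℝ) ≠ 0 := by positivity
        have hc : ((k - 1 : ℕ) : ℝ) = (k : ℝ) - 1 := by push_cast [hk]; ring
        rw [hc]; field_simp
      have hlim : Filter.Tendsto (fun k : ℕ => 2 - 2 * (1 / (k : ℝ))) Filter.atTop (nhds 2) := by
        have := Filter.Tendsto.sub (tendsto_const_nhds (x := (2 : ℝ))) (h1.const_mul 2)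
        simpa using this
      exact hlim.congr' heq
    have h3 : Filter.Tendsto (fun k : ℕ => 2 * (G k : ℝ) / k) Filter.atTop (nhds 2) := by
      simpa [mul_div_assoc] using hi'.const_mul (2 : ℝ)
    have hsum := (h1.add h2).sub h3
    refine (by simpa using hsum : Filter.Tendsto _ _ (nhds (0:ℝ))).congr (fun k => ?_)
    ring
  refine squeeze_zero' ?_ ?_ hupper
  · filter_upwards with k
    positivity
  · filter_upwards [Filter.eventually_ge_atTop 1] with k hk
    have hk0 : (0 : ℝ) < k := by exact_mod_cast hk
    rw [div_le_div_iff_of_pos_right hk0]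
    -- key inequality
    have hterm : ∀ i ∈ Finset.range (k - 1),
        |a k (i + 1) - a k i| ≤ (a k (i + 1) - a k i)
          + 2 * (if a k i ≤ a k (i + 1) then (0 : ℝ) else 1) := by
      intro i hir
      simp only [Finset.mem_range] at hir
      have h1' := hbd k i (by omega)
      have h2' := hbd k (i + 1) (by omega)
      simp only [Set.mem_Icc] at h1' h2'
      by_cases hP : a k i ≤ a k (i + 1)
      · rw [if_pos hP, abs_of_nonneg (by linarith)]; linarith
      · rw [if_neg hP, abs_of_neg (by push_neg at hP; linarith)]
        linarith [h1'.2, h2'.1]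
    have htel : ∑ i ∈ Finset.range (k - 1), (a k (i + 1) - a k i)
        = a k (k - 1) - a k 0 := Finset.sum_range_sub (a k) (k - 1)
    have hind : ∑ i ∈ Finset.range (k - 1),
        (if a k i ≤ a k (i + 1) then (0 : ℝ) else 1)
        = ((k - 1 : ℕ) : ℝ) - (G k : ℝ) := by
      have hc : ∀ i, (if a k i ≤ a k (i + 1) then (0 : ℝ) else 1)
          = 1 - (if a k i ≤ a k (i + 1) then (1 : ℝ) else 0) := by
        intro i; split <;> norm_num
      rw [Finset.sum_congr rfl fun i _ => hc i, Finset.sum_sub_distrib,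
        Finset.sum_const, Finset.sum_boole, Finset.card_range]
      simp [hG]
    have hb1 := hbd k (k - 1) (by omega)
    have hb0 := hbd k 0 (by omega)
    simp only [Set.mem_Icc] at hb1 hb0
    calc ∑ i ∈ Finset.range (k - 1), |a k (i + 1) - a k i|
        ≤ ∑ i ∈ Finset.range (k - 1), ((a k (i + 1) - a k i)
            + 2 * (if a k i ≤ a k (i + 1) then (0 : ℝ) else 1)) :=
          Finset.sum_le_sum hterm
      _ = (a k (k - 1) - a k 0) + 2 * (((k - 1 : ℕ) : ℝ) - (G k : ℝ)) := by
          rw [Finset.sum_add_distrib, htel, ← Finset.mul_sum, hind]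
      _ ≤ 1 + 2 * ((k - 1 : ℕ) : ℝ) - 2 * (G k : ℝ) := by linarith [hb1.2, hb0.1]

/-- an a.e. monotone sequence of vectors with entries in `[0,1]` has small
deviations, i.e. belongs to the class `𝒮`. -/
theorem aemonotone_memS (a : ℕ → ℕ → ℝ)
    (hbd : ∀ k : ℕ, ∀ i < k, a k i ∈ Set.Icc (0 : ℝ) 1)
    (hm : AEMonotone a) :
    (fun k : ℕ => ∑ i ∈ Finset.range (k - 1), |a k (i + 1) - a k i|)
      =o[Filter.atTop] fun k : ℕ => (k : ℝ) := by
  rcases hm with h | h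
  · exact aeincreasing_littleO a hbd h
  · have hbd' : ∀ k : ℕ, ∀ i < k, (1 : ℝ) - a k i ∈ Set.Icc (0 : ℝ) 1 := by
      intro k i hik
      have := hbd k i hik
      simp only [Set.mem_Icc] at this ⊢
      constructor <;> linarith [this.1, this.2]
    have hset : ∀ k : ℕ,
        ((Finset.range (k - 1)).filter fun i => (1 : ℝ) - a k i ≤ 1 - a k (i + 1))
          = (Finset.range (k - 1)).filter fun i => a k (i + 1) ≤ a k i := by
      intro k
      exact Finset.filter_congr fun i _ => by rw [sub_le_sub_iff_left]
    have hinc : AEIncreasing fun k i => (1 : ℝ) - a k i := by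
      unfold AEIncreasing
      unfold AEDecreasing at h
      simp only [hset]
      exact h
    have hlo := aeincreasing_littleO (fun k i => (1 : ℝ) - a k i) hbd' hinc
    have heq : ∀ k : ℕ,
        ∑ i ∈ Finset.range (k - 1), |(1 - a k (i + 1)) - (1 - a k i)|
          = ∑ i ∈ Finset.range (k - 1), |a k (i + 1) - a k i| := by
      intro k
      refine Finset.sum_congr rfl fun i _ => ?_
      rw [show (1 - a k (i + 1)) - (1 - a k i) = -(a k (i + 1) - a k i) by ring, abs_neg]
    exact hlo.congr' (Filter.Eventually.of_forall heq) Filter.EventuallyEq.rfl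
end
end

section
/- Let (a^k)_k and (b^k)_k be two a.e. monotone sequences of vectors with all entries in [0,1]. If (a^k, b^k)_k is μ-distributed for some probability measure μ on I² = [0,1]², then for every continuous function φ on [−3,3], lim_{k→∞} (1/k)·Trace[φ(J(a^k,b^k))] = (1/π) ∫_{I²} ∫_0^π φ(x + 2y·cos t) dt dμ(x,y). -/
open Filter MeasureTheory

noncomputable section

namespace TraceAux

/-- Kernel recursion for tridiagonal weights on `ℤ`. -/
def genK (w : ℤ → ℤ → ℝ) : ℕ → ℤ → ℤ → ℝ
  | 0, i, j => if i = j then 1 else 0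
  | n+1, i, j => genK w n i (j-1) * w (j-1) j + genK w n i j * w j j
      + genK w n i (j+1) * w (j+1) j

lemma genK_abs_le {w : ℤ → ℤ → ℝ} (hw : ∀ p q, |w p q| ≤ 1) :
    ∀ n (i j : ℤ), |genK w n i j| ≤ 3 ^ n := by
  intro n
  induction n with
  | zero => intro i j; simp only [genK]; split <;> simp
  | succ n ih =>
    intro i j
    have h3 : (0:ℝ) ≤ 3 ^ n := by positivity
    have b1 : ∀ l : ℤ, |genK w n i l * w l j| ≤ 3 ^ n := fun l => by
      rw [abs_mul]
      calc |genK w n i l| * |w l j| ≤ 3 ^ n * 1 :=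
        mul_le_mul (ih i l) (hw l j) (abs_nonneg _) h3
      _ = 3 ^ n := mul_one _
    calc |genK w (n+1) i j| ≤ |genK w n i (j-1) * w (j-1) j| + |genK w n i j * w j j|
        + |genK w n i (j+1) * w (j+1) j| := by
          simp only [genK]; exact (abs_add_three _ _ _)
    _ ≤ 3 ^ n + 3 ^ n + 3 ^ n := by gcongr <;> [exact b1 _; exact b1 _; exact b1 _]
    _ = 3 ^ (n+1) := by ring

lemma genK_sub_abs_le {w w' : ℤ → ℤ → ℝ} (hw : ∀ p q, |w p q| ≤ 1)
    (hw' : ∀ p q, |w' p q| ≤ 1) {ε : ℝ} (hε : 0 ≤ ε) :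
    ∀ (n : ℕ) (j : ℤ), (∀ p q : ℤ, |p - j| ≤ (n:ℤ) → |q - j| ≤ (n:ℤ) → |w p q - w' p q| ≤ ε) →
      ∀ i, |genK w n i j - genK w' n i j| ≤ (n:ℝ) * 3 ^ n * ε := by
  intro n
  induction n with
  | zero => intro j _ i; simp only [genK]; simp
  | succ n ih =>
    intro j hwin i
    have key : ∀ l : ℤ, |l - j| ≤ 1 →
        |genK w n i l * w l j - genK w' n i l * w' l j| ≤ (n:ℝ) * 3 ^ n * ε + 3 ^ n * ε := by
      intro l hl
      have hwin' : ∀ p q : ℤ, |p - l| ≤ (n:ℤ) → |q - l| ≤ (n:ℤ) → |w p q - w' p q| ≤ ε := by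
        intro p q hp hq
        rw [abs_le] at hl hp hq
        refine hwin p q ?_ ?_ <;> rw [abs_le] <;> constructor <;> push_cast <;> omega
      have h1 : |genK w n i l - genK w' n i l| ≤ (n:ℝ) * 3 ^ n * ε := ih l hwin' i
      have h2 : |w l j - w' l j| ≤ ε := by
        rw [abs_le] at hl
        refine hwin l j ?_ ?_ <;> rw [abs_le] <;> constructor <;> push_cast <;> omega
      calc |genK w n i l * w l j - genK w' n i l * w' l j|
          = |(genK w n i l - genK w' n i l) * w l j + genK w' n i l * (w l j - w' l j)| := by
            ring_nf
      _ ≤ |(genK w n i l - genK w' n i l) * w l j| + |genK w' n i l * (w l j - w' l j)| :=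
            abs_add_le _ _
      _ ≤ (n:ℝ) * 3 ^ n * ε + 3 ^ n * ε := by
            rw [abs_mul, abs_mul]
            have t1 : |genK w n i l - genK w' n i l| * |w l j| ≤ (n:ℝ) * 3 ^ n * ε :=
              le_trans (mul_le_of_le_one_right (abs_nonneg _) (hw l j)) h1
            have t2 : |genK w' n i l| * |w l j - w' l j| ≤ 3 ^ n * ε :=
              mul_le_mul (genK_abs_le hw' n i l) h2 (abs_nonneg _) (by positivity)
            exact add_le_add t1 t2
    calc |genK w (n+1) i j - genK w' (n+1) i j|
        ≤ |genK w n i (j-1) * w (j-1) j - genK w' n i (j-1) * w' (j-1) j|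
          + |genK w n i j * w j j - genK w' n i j * w' j j|
          + |genK w n i (j+1) * w (j+1) j - genK w' n i (j+1) * w' (j+1) j| := by
          simp only [genK]
          have : ∀ x1 x2 x3 y1 y2 y3 : ℝ,
              (x1 + x2 + x3) - (y1 + y2 + y3) = (x1 - y1) + (x2 - y2) + (x3 - y3) := by
            intros; ring
          rw [this]
          exact abs_add_three _ _ _
    _ ≤ ((n:ℝ) * 3 ^ n * ε + 3 ^ n * ε) + ((n:ℝ) * 3 ^ n * ε + 3 ^ n * ε)
          + ((n:ℝ) * 3 ^ n * ε + 3 ^ n * ε) := by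
          gcongr <;> apply key <;> simp
    _ = ((n:ℕ)+1 : ℝ) * 3 ^ (n+1) * ε := by ring
    _ = ((n+1 : ℕ) : ℝ) * 3 ^ (n+1) * ε := by push_cast; ring

/-- The free (translation invariant) kernel, as a function of `(x, y)` and offset `m`. -/
def jfree (x y : ℝ) : ℕ → ℤ → ℝ
  | 0, m => if m = 0 then 1 else 0
  | n+1, m => jfree x y n (m+1) * y + jfree x y n m * x + jfree x y n (m-1) * y

/-- Free tridiagonal weights. -/
def wfree (x y : ℝ) (p q : ℤ) : ℝ :=
  if p = q then x else if p + 1 = q ∨ q + 1 = p then y else 0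

lemma wfree_abs_le {x y : ℝ} (hx : |x| ≤ 1) (hy : |y| ≤ 1) (p q : ℤ) :
    |wfree x y p q| ≤ 1 := by
  unfold wfree; split
  · exact hx
  · split
    · exact hy
    · simp

lemma genK_wfree (x y : ℝ) : ∀ n (i j : ℤ),
    genK (wfree x y) n i j = jfree x y n (i - j) := by
  intro n
  induction n with
  | zero =>
    intro i j
    simp only [genK, jfree]
    by_cases h : i = j
    · rw [if_pos h, if_pos (by omega)]
    · rw [if_neg h, if_neg (by omega)]
  | succ n ih =>
    intro i j
    have w1 : wfree x y (j-1) j = y := by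
      unfold wfree
      rw [if_neg (by omega), if_pos (by omega)]
    have w2 : wfree x y j j = x := by unfold wfree; rw [if_pos rfl]
    have w3 : wfree x y (j+1) j = y := by
      unfold wfree
      rw [if_neg (by omega), if_pos (by omega)]
    simp only [genK, jfree, ih, w1, w2, w3]
    have e1 : i - (j-1) = (i - j) + 1 := by ring
    have e2 : i - (j+1) = (i - j) - 1 := by ring
    rw [e1, e2]

lemma jfree_abs_le {x y : ℝ} (hx : |x| ≤ 1) (hy : |y| ≤ 1) :
    ∀ n (m : ℤ), |jfree x y n m| ≤ 3 ^ n := by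
  intro n
  induction n with
  | zero => intro m; simp only [jfree]; split <;> simp
  | succ n ih =>
    intro m
    have h3 : (0:ℝ) ≤ 3 ^ n := by positivity
    have b1 : ∀ (m' : ℤ) (c : ℝ), |c| ≤ 1 → |jfree x y n m' * c| ≤ 3 ^ n := by
      intro m' c hc
      rw [abs_mul]
      calc |jfree x y n m'| * |c| ≤ 3 ^ n * 1 := mul_le_mul (ih m') hc (abs_nonneg _) h3
      _ = 3 ^ n := mul_one _
    calc |jfree x y (n+1) m| ≤ |jfree x y n (m+1) * y| + |jfree x y n m * x|
        + |jfree x y n (m-1) * y| := by simp only [jfree]; exact abs_add_three _ _ _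
    _ ≤ 3 ^ n + 3 ^ n + 3 ^ n := by gcongr <;> [exact b1 _ _ hy; exact b1 _ _ hx; exact b1 _ _ hy]
    _ = 3 ^ (n+1) := by ring

lemma jfree_continuous : ∀ (n : ℕ) (m : ℤ),
    Continuous fun p : ℝ × ℝ => jfree p.1 p.2 n m := by
  intro n
  induction n with
  | zero => intro m; simp only [jfree]; exact continuous_const
  | succ n ih =>
    intro m
    simp only [jfree]
    exact (((ih (m+1)).mul continuous_snd).add ((ih m).mul continuous_fst)).add
      ((ih (m-1)).mul continuous_snd)

/-- `∫₀^π (x + 2y cos t)ⁿ cos(mt) dt`. -/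
def cInt (x y : ℝ) (n : ℕ) (m : ℤ) : ℝ :=
  ∫ t in (0:ℝ)..Real.pi, (x + 2*y*Real.cos t)^n * Real.cos ((m:ℝ)*t)

lemma cInt_integrable (x y : ℝ) (n : ℕ) (c a b : ℝ) :
    IntervalIntegrable (fun t => (x + 2*y*Real.cos t)^n * Real.cos (c*t)) volume a b :=
  Continuous.intervalIntegrable (by fun_prop) a b

lemma cInt_zero (x y : ℝ) (m : ℤ) : cInt x y 0 m = if m = 0 then Real.pi else 0 := by
  unfold cInt
  simp only [pow_zero, one_mul]
  by_cases h : m = 0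
  · subst h; simp
  · rw [if_neg h]
    have hc : ((m:ℝ)) ≠ 0 := Int.cast_ne_zero.mpr h
    rw [intervalIntegral.integral_comp_mul_left (fun t => Real.cos t) hc]
    rw [integral_cos]
    simp [Real.sin_int_mul_pi]

lemma cInt_succ (x y : ℝ) (n : ℕ) (m : ℤ) :
    cInt x y (n+1) m = cInt x y n (m+1) * y + cInt x y n m * x + cInt x y n (m-1) * y := by
  have key : ∀ t : ℝ, (x + 2*y*Real.cos t)^(n+1) * Real.cos ((m:ℝ)*t)
      = ((x + 2*y*Real.cos t)^n * Real.cos ((((m+1):ℤ):ℝ)*t)) * y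
        + ((x + 2*y*Real.cos t)^n * Real.cos ((m:ℝ)*t)) * x
        + ((x + 2*y*Real.cos t)^n * Real.cos ((((m-1):ℤ):ℝ)*t)) * y := by
    intro t
    have h2 : 2 * Real.cos t * Real.cos ((m:ℝ)*t)
        = Real.cos (t - (m:ℝ)*t) + Real.cos (t + (m:ℝ)*t) := Real.two_mul_cos_mul_cos t _
    have e1 : Real.cos ((((m-1):ℤ):ℝ)*t) = Real.cos (t - (m:ℝ)*t) := by
      rw [show (((m-1):ℤ):ℝ)*t = -(t - (m:ℝ)*t) by push_cast; ring, Real.cos_neg]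
    have e2 : Real.cos ((((m+1):ℤ):ℝ)*t) = Real.cos (t + (m:ℝ)*t) := by
      rw [show (((m+1):ℤ):ℝ)*t = t + (m:ℝ)*t by push_cast; ring]
    rw [e1, e2, pow_succ]
    linear_combination ((x + 2*y*Real.cos t)^n * y) * h2
  unfold cInt
  rw [intervalIntegral.integral_congr (g := fun t =>
    ((x + 2*y*Real.cos t)^n * Real.cos ((((m+1):ℤ):ℝ)*t)) * y
      + ((x + 2*y*Real.cos t)^n * Real.cos ((m:ℝ)*t)) * x
      + ((x + 2*y*Real.cos t)^n * Real.cos ((((m-1):ℤ):ℝ)*t)) * y) (fun t _ => key t)]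
  rw [intervalIntegral.integral_add, intervalIntegral.integral_add]
  · rw [intervalIntegral.integral_mul_const, intervalIntegral.integral_mul_const,
      intervalIntegral.integral_mul_const]
  · exact ((cInt_integrable x y n _ 0 Real.pi).mul_const y)
  · exact ((cInt_integrable x y n _ 0 Real.pi).mul_const x)
  · exact (((cInt_integrable x y n _ 0 Real.pi).mul_const y).add
      ((cInt_integrable x y n _ 0 Real.pi).mul_const x))
  · exact ((cInt_integrable x y n _ 0 Real.pi).mul_const y)

lemma jfree_eq_cInt (x y : ℝ) : ∀ (n : ℕ) (m : ℤ),
    jfree x y n m = (1/Real.pi) * cInt x y n m := by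
  intro n
  induction n with
  | zero =>
    intro m
    rw [cInt_zero]
    simp only [jfree]
    by_cases h : m = 0
    · rw [if_pos h, if_pos h, one_div, inv_mul_cancel₀ Real.pi_ne_zero]
    · rw [if_neg h, if_neg h, mul_zero]
  | succ n ih =>
    intro m
    simp only [jfree, cInt_succ, ih]
    ring

/-- The density function `ψₙ(x, y) = (1/π)∫₀^π (x + 2y cos t)ⁿ dt`. -/
lemma jfree_zero_eq (x y : ℝ) (n : ℕ) :
    jfree x y n 0 = (1/Real.pi) * ∫ t in (0:ℝ)..Real.pi, (x + 2*y*Real.cos t)^n := by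
  rw [jfree_eq_cInt]
  unfold cInt
  norm_num
/-- Padded diagonal sequence on `ℤ`. -/
def pada (k : ℕ) (a : ℕ → ℝ) (z : ℤ) : ℝ :=
  if 0 ≤ z ∧ z < (k:ℤ) then a z.toNat else 0

/-- Padded off-diagonal sequence on `ℤ`. -/
def padb (k : ℕ) (b : ℕ → ℝ) (z : ℤ) : ℝ :=
  if 0 ≤ z ∧ z + 1 < (k:ℤ) then b z.toNat else 0

/-- Tridiagonal weights on `ℤ` corresponding to the `k × k` Jacobi matrix. -/
def wts (k : ℕ) (a b : ℕ → ℝ) (p q : ℤ) : ℝ :=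
  if p = q then pada k a p
  else if p + 1 = q then padb k b p
  else if q + 1 = p then padb k b q
  else 0

lemma pada_mem {k : ℕ} {a : ℕ → ℝ} (ha : ∀ i < k, a i ∈ Set.Icc (0:ℝ) 1) (z : ℤ) :
    pada k a z ∈ Set.Icc (0:ℝ) 1 := by
  unfold pada; split
  · rename_i h
    exact ha z.toNat (by omega)
  · simp

lemma padb_mem {k : ℕ} {b : ℕ → ℝ} (hb : ∀ i < k, b i ∈ Set.Icc (0:ℝ) 1) (z : ℤ) :
    padb k b z ∈ Set.Icc (0:ℝ) 1 := by
  unfold padb; split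
  · rename_i h
    exact hb z.toNat (by omega)
  · simp

lemma abs_le_one_of_mem {x : ℝ} (h : x ∈ Set.Icc (0:ℝ) 1) : |x| ≤ 1 :=
  abs_le.mpr ⟨by linarith [h.1], h.2⟩

lemma wts_abs_le {k : ℕ} {a b : ℕ → ℝ} (ha : ∀ i < k, a i ∈ Set.Icc (0:ℝ) 1)
    (hb : ∀ i < k, b i ∈ Set.Icc (0:ℝ) 1) (p q : ℤ) : |wts k a b p q| ≤ 1 := by
  unfold wts
  split
  · exact abs_le_one_of_mem (pada_mem ha p)
  · split
    · exact abs_le_one_of_mem (padb_mem hb p)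
    · split
      · exact abs_le_one_of_mem (padb_mem hb q)
      · simp

lemma wts_vanish_left {k : ℕ} {a b : ℕ → ℝ} {p : ℤ} (hp : ¬ (0 ≤ p ∧ p < (k:ℤ))) (q : ℤ) :
    wts k a b p q = 0 := by
  by_cases h1 : p = q
  · subst h1; unfold wts pada; rw [if_pos rfl, if_neg hp]
  · by_cases h2 : p + 1 = q
    · unfold wts padb; rw [if_neg h1, if_pos h2, if_neg (by omega)]
    · by_cases h3 : q + 1 = p
      · unfold wts padb; rw [if_neg h1, if_neg h2, if_pos h3, if_neg (by omega)]
      · unfold wts; rw [if_neg h1, if_neg h2, if_neg h3]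

lemma wts_far {k : ℕ} {a b : ℕ → ℝ} {p q : ℤ} (h : ¬ (q - 1 ≤ p ∧ p ≤ q + 1)) :
    wts k a b p q = 0 := by
  unfold wts
  rw [if_neg (by omega), if_neg (by omega), if_neg (by omega)]

lemma jacobiMatrix_eq_wts (k : ℕ) (a b : ℕ → ℝ) (i j : Fin k) :
    jacobiMatrix k a b i j = wts k a b (i:ℤ) (j:ℤ) := by
  have hik := i.isLt
  have hjk := j.isLt
  simp only [jacobiMatrix, Matrix.of_apply, wts, pada, padb, Int.toNat_natCast]
  split_ifs <;> first | rfl | omega | (exfalso; omega)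

lemma sum_Icc3 (g : ℤ → ℝ) (j : ℤ) :
    ∑ z ∈ Finset.Icc (j-1) (j+1), g z = g (j-1) + g j + g (j+1) := by
  have e : Finset.Icc (j-1) (j+1) = insert (j-1) (insert j ({j+1} : Finset ℤ)) := by
    ext z; simp only [Finset.mem_Icc, Finset.mem_insert, Finset.mem_singleton]; omega
  rw [e, Finset.sum_insert (by simp only [Finset.mem_insert, Finset.mem_singleton]; omega),
    Finset.sum_insert (by simp only [Finset.mem_singleton]; omega), Finset.sum_singleton]
  ring

lemma sum_range_eq_three {k : ℕ} (g : ℤ → ℝ) (j : ℤ)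
    (hrange : ∀ z : ℤ, ¬ (0 ≤ z ∧ z < (k:ℤ)) → g z = 0)
    (hfar : ∀ z : ℤ, ¬ (j - 1 ≤ z ∧ z ≤ j + 1) → g z = 0) :
    ∑ m ∈ Finset.range k, g (m:ℤ) = g (j-1) + g j + g (j+1) := by
  rw [← sum_Icc3 g j]
  rw [← Finset.sum_filter_of_ne (s := Finset.range k)
    (p := fun m => (m:ℤ) ∈ Finset.Icc (j-1) (j+1)) (by
      intro m _ hm
      by_contra hc
      exact hm (hfar _ (by simpa [Finset.mem_Icc] using hc)))]
  rw [← Finset.sum_filter_of_ne (s := Finset.Icc (j-1) (j+1))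
    (p := fun z => 0 ≤ z ∧ z < (k:ℤ)) (by
      intro z _ hz
      by_contra hc
      exact hz (hrange _ hc))]
  refine Finset.sum_nbij' (fun m => (m:ℤ)) (fun z => z.toNat) ?_ ?_ ?_ ?_ ?_
  · intro m hm
    simp only [Finset.mem_filter, Finset.mem_range, Finset.mem_Icc] at hm ⊢
    omega
  · intro z hz
    simp only [Finset.mem_filter, Finset.mem_range, Finset.mem_Icc] at hz ⊢
    omega
  · intro m hm; simp
  · intro z hz
    simp only [Finset.mem_filter, Finset.mem_Icc] at hz
    show ((z.toNat : ℤ)) = z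
    exact Int.toNat_of_nonneg hz.2.1
  · intro m hm; rfl

lemma pow_eq_genK (k : ℕ) (a b : ℕ → ℝ) :
    ∀ (n : ℕ) (i j : Fin k), (jacobiMatrix k a b ^ n) i j = genK (wts k a b) n (i:ℤ) (j:ℤ) := by
  intro n
  induction n with
  | zero =>
    intro i j
    rw [pow_zero, Matrix.one_apply]
    simp only [genK]
    by_cases h : i = j
    · rw [if_pos h, if_pos (by exact_mod_cast congrArg (fun t : Fin k => ((t:ℕ):ℤ)) h)]
    · rw [if_neg h, if_neg (by intro hh; exact h (Fin.ext (by exact_mod_cast hh)))]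
  | succ n ih =>
    intro i j
    rw [pow_succ, Matrix.mul_apply]
    have hg : ∀ l : Fin k, (jacobiMatrix k a b ^ n) i l * jacobiMatrix k a b l j
        = genK (wts k a b) n (i:ℤ) (l:ℤ) * wts k a b (l:ℤ) (j:ℤ) := fun l => by
      rw [ih, jacobiMatrix_eq_wts]
    rw [Finset.sum_congr rfl (fun l _ => hg l)]
    rw [Fin.sum_univ_eq_sum_range (fun m => genK (wts k a b) n (i:ℤ) (m:ℤ)
      * wts k a b (m:ℤ) (j:ℤ)) k]
    rw [sum_range_eq_three (fun z => genK (wts k a b) n (i:ℤ) z * wts k a b z (j:ℤ)) (j:ℤ)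
      (fun z hz => by
        show genK (wts k a b) n (i:ℤ) z * wts k a b z (j:ℤ) = 0
        rw [wts_vanish_left hz, mul_zero])
      (fun z hz => by
        show genK (wts k a b) n (i:ℤ) z * wts k a b z (j:ℤ) = 0
        rw [wts_far (by omega), mul_zero])]
    rfl

lemma trace_pow_eq_sum_genK (k : ℕ) (a b : ℕ → ℝ) (n : ℕ) :
    Matrix.trace (jacobiMatrix k a b ^ n)
      = ∑ m ∈ Finset.range k, genK (wts k a b) n (m:ℤ) (m:ℤ) := by
  rw [Matrix.trace]
  rw [Finset.sum_congr rfl (fun i _ => by rw [Matrix.diag_apply, pow_eq_genK])]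
  exact Fin.sum_univ_eq_sum_range (fun m => genK (wts k a b) n (m:ℤ) (m:ℤ)) k
/-- Local variation around center `j` in window of radius `n+1`. -/
def eps (k : ℕ) (a b : ℕ → ℝ) (n : ℕ) (j : ℤ) : ℝ :=
  ∑ i ∈ Finset.Icc (j - ((n:ℤ)+1)) (j + ((n:ℤ)+1)),
    (|pada k a (i+1) - pada k a i| + |padb k b (i+1) - padb k b i|)

lemma eps_nonneg (k : ℕ) (a b : ℕ → ℝ) (n : ℕ) (j : ℤ) : 0 ≤ eps k a b n j :=
  Finset.sum_nonneg fun i _ => add_nonneg (abs_nonneg _) (abs_nonneg _)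

lemma tele_aux (f : ℤ → ℝ) : ∀ (d : ℕ) (q : ℤ),
    |f (q + (d:ℤ)) - f q| ≤ ∑ i ∈ Finset.Icc q (q + (d:ℤ) - 1), |f (i+1) - f i| := by
  intro d
  induction d with
  | zero =>
    intro q
    rw [Finset.Icc_eq_empty (by omega)]
    simp
  | succ d ih =>
    intro q
    have e : Finset.Icc q (q + ((d:ℤ)+1) - 1) = insert (q + (d:ℤ)) (Finset.Icc q (q + (d:ℤ) - 1)) := by
      ext z; simp only [Finset.mem_Icc, Finset.mem_insert]; omega
    have hd : ((d+1 : ℕ) : ℤ) = (d:ℤ) + 1 := by push_cast; ring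
    rw [hd, e, Finset.sum_insert (by simp only [Finset.mem_Icc]; omega)]
    calc |f (q + ((d:ℤ)+1)) - f q|
        ≤ |f (q + ((d:ℤ)+1)) - f (q + (d:ℤ))| + |f (q + (d:ℤ)) - f q| := abs_sub_le _ _ _
    _ ≤ |f ((q + (d:ℤ)) + 1) - f (q + (d:ℤ))| + ∑ i ∈ Finset.Icc q (q + (d:ℤ) - 1), |f (i+1) - f i| := by
        rw [show q + ((d:ℤ)+1) = (q + (d:ℤ)) + 1 by ring]
        exact add_le_add le_rfl (ih q)

lemma tele (f : ℤ → ℝ) (p j : ℤ) :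
    |f p - f j| ≤ ∑ i ∈ Finset.Icc (min p j) (max p j - 1), |f (i+1) - f i| := by
  rcases le_total p j with h | h
  · rw [min_eq_left h, max_eq_right h, abs_sub_comm]
    have e : j = p + (((j - p).toNat : ℕ) : ℤ) := by omega
    rw [e]
    have := tele_aux f (j-p).toNat p
    convert this using 4 <;> omega
  · rw [min_eq_right h, max_eq_left h]
    have e : p = j + (((p - j).toNat : ℕ) : ℤ) := by omega
    rw [e]
    have := tele_aux f (p-j).toNat j
    convert this using 4 <;> omega

lemma tele_window (f : ℤ → ℝ) {p j : ℤ} {n : ℕ} (hp : |p - j| ≤ (n:ℤ)) :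
    |f p - f j| ≤ ∑ i ∈ Finset.Icc (j - ((n:ℤ)+1)) (j + ((n:ℤ)+1)), |f (i+1) - f i| := by
  refine le_trans (tele f p j) (Finset.sum_le_sum_of_subset_of_nonneg ?_ fun _ _ _ => abs_nonneg _)
  rw [abs_le] at hp
  intro z hz
  simp only [Finset.mem_Icc] at hz ⊢
  omega

lemma window_est {k : ℕ} {a b : ℕ → ℝ} (n : ℕ) (j : ℤ)
    {p q : ℤ} (hp : |p - j| ≤ (n:ℤ)) (hq : |q - j| ≤ (n:ℤ)) :
    |wts k a b p q - wfree (pada k a j) (padb k b j) p q| ≤ eps k a b n j := by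
  have ha : ∀ p', |p' - j| ≤ (n:ℤ) →
      |pada k a p' - pada k a j| ≤ eps k a b n j := fun p' hp' => by
    refine le_trans (tele_window (pada k a) hp') ?_
    unfold eps
    exact Finset.sum_le_sum fun i _ => le_add_of_nonneg_right (abs_nonneg _)
  have hb : ∀ p', |p' - j| ≤ (n:ℤ) →
      |padb k b p' - padb k b j| ≤ eps k a b n j := fun p' hp' => by
    refine le_trans (tele_window (padb k b) hp') ?_
    unfold eps
    exact Finset.sum_le_sum fun i _ => le_add_of_nonneg_left (abs_nonneg _)
  unfold wts wfree
  by_cases h1 : p = q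
  · rw [if_pos h1, if_pos h1]
    exact ha p hp
  · rw [if_neg h1, if_neg h1]
    by_cases h2 : p + 1 = q
    · rw [if_pos h2, if_pos (Or.inl h2)]
      exact hb p hp
    · by_cases h3 : q + 1 = p
      · rw [if_neg h2, if_pos h3, if_pos (Or.inr h3)]
        exact hb q hq
      · rw [if_neg h2, if_neg h3, if_neg (by tauto)]
        simpa using eps_nonneg k a b n j

lemma center_est {k : ℕ} {a b : ℕ → ℝ}
    (ha0k : ∀ i < k, a i ∈ Set.Icc (0:ℝ) 1) (hb0k : ∀ i < k, b i ∈ Set.Icc (0:ℝ) 1)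
    (n : ℕ) (j : ℤ) :
    |genK (wts k a b) n j j - jfree (pada k a j) (padb k b j) n 0|
      ≤ (n:ℝ) * 3 ^ n * eps k a b n j := by
  have hx := abs_le_one_of_mem (pada_mem ha0k j)
  have hy := abs_le_one_of_mem (padb_mem hb0k j)
  have h := genK_sub_abs_le (wts_abs_le ha0k hb0k) (wfree_abs_le hx hy)
    (eps_nonneg k a b n j) n j (fun p q hp hq => window_est n j hp hq) j
  rwa [genK_wfree, sub_self] at h

lemma swap_sum {g : ℤ → ℝ} (hg : ∀ i, 0 ≤ g i) (k L : ℕ) :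
    ∑ j ∈ Finset.range k, ∑ i ∈ Finset.Icc ((j:ℤ)-(L:ℤ)) ((j:ℤ)+(L:ℤ)), g i
      ≤ (2*(L:ℝ)+1) * ∑ i ∈ Finset.Icc (-(L:ℤ)) ((k:ℤ)-1+(L:ℤ)), g i := by
  set C := Finset.Icc (-(L:ℤ)) ((k:ℤ)-1+(L:ℤ)) with hC
  have h1 : ∀ j ∈ Finset.range k,
      ∑ i ∈ Finset.Icc ((j:ℤ)-(L:ℤ)) ((j:ℤ)+(L:ℤ)), g i
        = ∑ i ∈ C, if (j:ℤ)-(L:ℤ) ≤ i ∧ i ≤ (j:ℤ)+(L:ℤ) then g i else 0 := by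
    intro j hj
    simp only [Finset.mem_range] at hj
    rw [← Finset.sum_filter]
    refine (Finset.sum_congr ?_ fun _ _ => rfl)
    ext z
    simp only [Finset.mem_Icc, Finset.mem_filter, hC]
    omega
  rw [Finset.sum_congr rfl h1, Finset.sum_comm]
  rw [Finset.mul_sum]
  refine Finset.sum_le_sum fun i _ => ?_
  rw [Finset.sum_ite, Finset.sum_const_zero, add_zero, Finset.sum_const, nsmul_eq_mul]
  refine mul_le_mul_of_nonneg_right ?_ (hg i)
  have hcard : ((Finset.range k).filter fun j : ℕ => (j:ℤ)-(L:ℤ) ≤ i ∧ i ≤ (j:ℤ)+(L:ℤ)).card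
      ≤ (Finset.Icc (i-(L:ℤ)) (i+(L:ℤ))).card := by
    refine Finset.card_le_card_of_injOn (fun j => (j:ℤ)) ?_ ?_
    · intro j hj
      simp only [Finset.coe_filter, Set.mem_setOf_eq, Finset.mem_filter, Finset.mem_range] at hj
      simp only [Finset.mem_coe, Finset.mem_Icc]
      omega
    · intro x _ y _ hxy
      exact Nat.cast_injective hxy
  calc (((Finset.range k).filter fun j : ℕ => (j:ℤ)-(L:ℤ) ≤ i ∧ i ≤ (j:ℤ)+(L:ℤ)).card : ℝ)
      ≤ ((Finset.Icc (i-(L:ℤ)) (i+(L:ℤ))).card : ℝ) := by exact_mod_cast hcard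
  _ = 2*(L:ℝ)+1 := by
      rw [Int.card_Icc, show i+(L:ℤ)+1-(i-(L:ℤ)) = 2*(L:ℤ)+1 by ring,
        show (2*(L:ℤ)+1).toNat = 2*L+1 by omega]
      push_cast
      ring

lemma pada_tv {a : ℕ → ℝ} (k' : ℕ) (h01 : ∀ i < k', a i ∈ Set.Icc (0:ℝ) 1)
    {lo hi : ℤ} (hlo : lo ≤ -1) (hhi : ((k':ℤ)-1) ≤ hi) :
    ∑ i ∈ Finset.Icc lo hi, |pada k' a (i+1) - pada k' a i|
      ≤ (∑ i ∈ Finset.range (k'-1), |a (i+1) - a i|) + 2 := by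
  have hvan : ∀ z ∈ Finset.Icc lo hi, z ∉ Finset.Icc (-1 : ℤ) ((k':ℤ)-1) →
      |pada k' a (z+1) - pada k' a z| = 0 := by
    intro z _ hz
    simp only [Finset.mem_Icc] at hz
    have e1 : pada k' a (z+1) = 0 := by unfold pada; rw [if_neg (by omega)]
    have e2 : pada k' a z = 0 := by unfold pada; rw [if_neg (by omega)]
    rw [e1, e2]; simp
  have hsub : Finset.Icc (-1 : ℤ) ((k':ℤ)-1) ⊆ Finset.Icc lo hi := by
    intro z hz
    simp only [Finset.mem_Icc] at hz ⊢
    omega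
  rw [← Finset.sum_subset hsub hvan]
  rcases Nat.eq_zero_or_pos k' with hk | hk
  · subst hk
    have hz0 : ∑ i ∈ Finset.Icc (-1 : ℤ) (((0:ℕ):ℤ)-1), |pada 0 a (i+1) - pada 0 a i| = 0 :=
      Finset.sum_eq_zero fun z _ => by
        have e : ∀ w : ℤ, pada 0 a w = 0 := fun w => by unfold pada; rw [if_neg (by omega)]
        rw [e, e, sub_zero, abs_zero]
    rw [hz0]
    have hnn := Finset.sum_nonneg (s := Finset.range (0-1))
      (f := fun i => |a (i+1) - a i|) (fun i _ => abs_nonneg _)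
    linarith
  · have e : Finset.Icc (-1 : ℤ) ((k':ℤ)-1)
        = insert (-1 : ℤ) (insert ((k':ℤ)-1) (Finset.Icc 0 ((k':ℤ)-2))) := by
      ext z; simp only [Finset.mem_Icc, Finset.mem_insert]; omega
    rw [e, Finset.sum_insert (by simp only [Finset.mem_insert, Finset.mem_Icc]; omega),
      Finset.sum_insert (by simp only [Finset.mem_Icc]; omega)]
    have t1 : |pada k' a (-1+1) - pada k' a (-1)| ≤ 1 := by
      have e1 : pada k' a (-1) = 0 := by unfold pada; rw [if_neg (by omega)]
      rw [show (-1:ℤ)+1 = 0 by ring, e1, sub_zero]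
      exact abs_le_one_of_mem (pada_mem h01 0)
    have t2 : |pada k' a ((k':ℤ)-1+1) - pada k' a ((k':ℤ)-1)| ≤ 1 := by
      have e1 : pada k' a ((k':ℤ)-1+1) = 0 := by unfold pada; rw [if_neg (by omega)]
      rw [e1, zero_sub, abs_neg]
      exact abs_le_one_of_mem (pada_mem h01 _)
    have t3 : ∑ i ∈ Finset.Icc (0:ℤ) ((k':ℤ)-2), |pada k' a (i+1) - pada k' a i|
        = ∑ i ∈ Finset.range (k'-1), |a (i+1) - a i| := by
      refine Finset.sum_nbij' (fun z => z.toNat) (fun m => (m:ℤ)) ?_ ?_ ?_ ?_ ?_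
      · intro z hz
        simp only [Finset.mem_Icc, Finset.mem_range] at hz ⊢
        omega
      · intro m hm
        simp only [Finset.mem_Icc, Finset.mem_range] at hm ⊢
        omega
      · intro z hz
        simp only [Finset.mem_Icc] at hz
        show ((z.toNat : ℤ)) = z
        exact Int.toNat_of_nonneg hz.1
      · intro m hm; simp
      · intro z hz
        simp only [Finset.mem_Icc] at hz
        have e1 : pada k' a (z+1) = a (z+1).toNat := by unfold pada; rw [if_pos (by omega)]
        have e2 : pada k' a z = a z.toNat := by unfold pada; rw [if_pos (by omega)]
        have e3 : (z+1).toNat = z.toNat + 1 := by omega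
        rw [e1, e2, e3]
    rw [t3]
    linarith
lemma padb_eq_pada (k : ℕ) (b : ℕ → ℝ) (z : ℤ) : padb k b z = pada (k-1) b z := by
  unfold padb pada
  exact if_congr (by omega) rfl rfl

lemma trace_compare (k : ℕ) (a b : ℕ → ℝ)
    (ha0k : ∀ i < k, a i ∈ Set.Icc (0:ℝ) 1) (hb0k : ∀ i < k, b i ∈ Set.Icc (0:ℝ) 1) (n : ℕ) :
    |Matrix.trace (jacobiMatrix k a b ^ n)
        - ∑ j ∈ Finset.range k, jfree (a j) (b j) n 0|
      ≤ (n:ℝ) * 3^n * ((2*((n:ℝ)+1)+1)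
          * (((∑ i ∈ Finset.range (k-1), |a (i+1) - a i|) + 2)
            + ((∑ i ∈ Finset.range (k-1), |b (i+1) - b i|) + 2))) + 2 * 3^n := by
  have h3n : (0:ℝ) ≤ 3^n := by positivity
  set X : ℕ → ℝ := fun j => genK (wts k a b) n (j:ℤ) (j:ℤ) with hX
  set Z : ℕ → ℝ := fun j => jfree (pada k a (j:ℤ)) (padb k b (j:ℤ)) n 0 with hZ
  set Y : ℕ → ℝ := fun j => jfree (a j) (b j) n 0 with hY
  rw [trace_pow_eq_sum_genK]
  have step1 : |(∑ j ∈ Finset.range k, X j) - ∑ j ∈ Finset.range k, Y j|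
      ≤ (∑ j ∈ Finset.range k, |X j - Z j|) + ∑ j ∈ Finset.range k, |Z j - Y j| := by
    rw [← Finset.sum_sub_distrib]
    refine le_trans (Finset.abs_sum_le_sum_abs _ _) ?_
    rw [← Finset.sum_add_distrib]
    exact Finset.sum_le_sum fun j _ => abs_sub_le _ _ _
  have hXZ : ∑ j ∈ Finset.range k, |X j - Z j|
      ≤ (n:ℝ) * 3^n * ∑ j ∈ Finset.range k, eps k a b n (j:ℤ) := by
    rw [Finset.mul_sum]
    exact Finset.sum_le_sum fun j _ => center_est ha0k hb0k n (j:ℤ)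
  have heps : ∑ j ∈ Finset.range k, eps k a b n (j:ℤ)
      ≤ (2*((n:ℝ)+1)+1)
          * ∑ i ∈ Finset.Icc (-((n+1:ℕ):ℤ)) ((k:ℤ)-1+((n+1:ℕ):ℤ)),
              (|pada k a (i+1) - pada k a i| + |padb k b (i+1) - padb k b i|) := by
    have hg : ∀ i : ℤ, 0 ≤ |pada k a (i+1) - pada k a i| + |padb k b (i+1) - padb k b i| :=
      fun i => add_nonneg (abs_nonneg _) (abs_nonneg _)
    have := swap_sum hg k (n+1)
    have hcast : ((n+1:ℕ):ℤ) = (n:ℤ)+1 := by push_cast; ring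
    have hcast2 : ((n+1:ℕ):ℝ) = (n:ℝ)+1 := by push_cast; ring
    rw [hcast, hcast2] at this
    unfold eps
    convert this using 2
    rw [hcast]
  have htv : ∑ i ∈ Finset.Icc (-((n+1:ℕ):ℤ)) ((k:ℤ)-1+((n+1:ℕ):ℤ)),
        (|pada k a (i+1) - pada k a i| + |padb k b (i+1) - padb k b i|)
      ≤ ((∑ i ∈ Finset.range (k-1), |a (i+1) - a i|) + 2)
        + ((∑ i ∈ Finset.range (k-1), |b (i+1) - b i|) + 2) := by
    rw [Finset.sum_add_distrib]
    have ta := pada_tv k ha0k (lo := -((n+1:ℕ):ℤ)) (hi := (k:ℤ)-1+((n+1:ℕ):ℤ))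
      (by omega) (by omega)
    have hb0k' : ∀ i < k - 1, b i ∈ Set.Icc (0:ℝ) 1 := fun i hi => hb0k i (by omega)
    have tb0 : ∑ i ∈ Finset.Icc (-((n+1:ℕ):ℤ)) ((k:ℤ)-1+((n+1:ℕ):ℤ)),
        |padb k b (i+1) - padb k b i|
        = ∑ i ∈ Finset.Icc (-((n+1:ℕ):ℤ)) ((k:ℤ)-1+((n+1:ℕ):ℤ)),
          |pada (k-1) b (i+1) - pada (k-1) b i| :=
      Finset.sum_congr rfl fun i _ => by rw [padb_eq_pada, padb_eq_pada]
    have tb := pada_tv (k-1) hb0k' (lo := -((n+1:ℕ):ℤ)) (hi := (k:ℤ)-1+((n+1:ℕ):ℤ))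
      (by omega) (by omega)
    have tbsub : ∑ i ∈ Finset.range (k-1-1), |b (i+1) - b i|
        ≤ ∑ i ∈ Finset.range (k-1), |b (i+1) - b i| :=
      Finset.sum_le_sum_of_subset_of_nonneg
        (Finset.range_subset_range.mpr (by omega)) (fun _ _ _ => abs_nonneg _)
    rw [tb0]
    linarith
  have hZY : ∑ j ∈ Finset.range k, |Z j - Y j| ≤ 2 * 3^n := by
    have hterm : ∀ j ∈ Finset.range k, |Z j - Y j| ≤ if j = k-1 then 2*3^n else 0 := by
      intro j hj
      simp only [Finset.mem_range] at hj
      have hpa : pada k a (j:ℤ) = a j := by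
        unfold pada
        rw [if_pos (by omega)]
        simp
      by_cases hlast : j = k-1
      · rw [if_pos hlast]
        have h1 : |Z j| ≤ 3^n := by
          rw [hZ]
          exact jfree_abs_le (by rw [hpa]; exact abs_le_one_of_mem (ha0k j hj))
            (abs_le_one_of_mem (padb_mem hb0k _)) n 0
        have h2 : |Y j| ≤ 3^n := by
          rw [hY]
          exact jfree_abs_le (abs_le_one_of_mem (ha0k j hj))
            (abs_le_one_of_mem (hb0k j hj)) n 0
        calc |Z j - Y j| ≤ |Z j| + |Y j| := abs_sub _ _
        _ ≤ 3^n + 3^n := add_le_add h1 h2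
        _ = 2*3^n := by ring
      · rw [if_neg hlast]
        have hpb : padb k b (j:ℤ) = b j := by
          unfold padb
          rw [if_pos (by omega)]
          simp
        rw [hZ, hY]
        simp only [hpa, hpb]
        simp
    refine le_trans (Finset.sum_le_sum hterm) ?_
    rw [Finset.sum_ite_eq' (Finset.range k) (k-1) (fun _ => 2*3^n)]
    split <;> [exact le_rfl; positivity]
  have hfinal := le_trans step1 (add_le_add (le_trans hXZ
    (by
      have hnn : (0:ℝ) ≤ (n:ℝ) * 3^n := by positivity
      exact mul_le_mul_of_nonneg_left (le_trans heps
        (mul_le_mul_of_nonneg_left htv (by positivity))) hnn)) hZY)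
  exact hfinal
lemma V_le_of_card {k : ℕ} (hk : 1 ≤ k) {c : ℕ → ℝ} (hc : ∀ i < k, c i ∈ Set.Icc (0:ℝ) 1) :
    ∑ i ∈ Finset.range (k-1), |c (i+1) - c i|
      ≤ 1 + 2 * (((Finset.range (k-1)).filter fun i => ¬ c i ≤ c (i+1)).card : ℝ) := by
  have hterm : ∀ i ∈ Finset.range (k-1), |c (i+1) - c i|
      ≤ (c (i+1) - c i) + (if ¬ c i ≤ c (i+1) then 2 else 0) := by
    intro i hi
    simp only [Finset.mem_range] at hi
    have h1 := hc i (by omega)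
    have h2 := hc (i+1) (by omega)
    simp only [Set.mem_Icc] at h1 h2
    by_cases h : c i ≤ c (i+1)
    · rw [if_neg (not_not_intro h), add_zero, abs_of_nonneg (by linarith)]
    · rw [if_pos h, abs_of_neg (by linarith)]
      linarith
  refine le_trans (Finset.sum_le_sum hterm) ?_
  rw [Finset.sum_add_distrib]
  have htel : ∑ i ∈ Finset.range (k-1), (c (i+1) - c i) = c (k-1) - c 0 :=
    Finset.sum_range_sub c (k-1)
  have hsum2 : ∑ i ∈ Finset.range (k-1), (if ¬ c i ≤ c (i+1) then (2:ℝ) else 0)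
      = 2 * (((Finset.range (k-1)).filter fun i => ¬ c i ≤ c (i+1)).card : ℝ) := by
    rw [Finset.sum_ite, Finset.sum_const_zero, add_zero, Finset.sum_const, nsmul_eq_mul]
    ring
  have h1 := hc 0 (by omega)
  have h2 := hc (k-1) (by omega)
  simp only [Set.mem_Icc] at h1 h2
  rw [htel, hsum2]
  linarith

lemma div_tendsto_zero_of_le {V N : ℕ → ℝ}
    (hV0 : ∀ k, 0 ≤ V k)
    (hle : ∀ᶠ k in Filter.atTop, V k ≤ 1 + 2 * N k)
    (hN : Tendsto (fun k : ℕ => N k / k) atTop (nhds 0)) :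
    Tendsto (fun k : ℕ => V k / k) atTop (nhds 0) := by
  have hg : Tendsto (fun k : ℕ => 1/(k:ℝ) + 2 * (N k / k)) atTop (nhds 0) := by
    have h1 := tendsto_one_div_atTop_nhds_zero_nat (𝕜 := ℝ)
    have h2 := hN.const_mul (2:ℝ)
    simpa using h1.add h2
  refine squeeze_zero' ?_ ?_ hg
  · filter_upwards [Filter.eventually_ge_atTop 1] with k hk
    exact div_nonneg (hV0 k) (by positivity)
  · filter_upwards [hle, Filter.eventually_ge_atTop 1] with k hk hk1
    have hkpos : (0:ℝ) < k := by exact_mod_cast hk1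
    calc V k / k ≤ (1 + 2 * N k) / k := (div_le_div_iff_of_pos_right hkpos).mpr hk
    _ = 1/(k:ℝ) + 2 * (N k / k) := by
          rw [add_div, mul_div_assoc]

lemma card_frac_tendsto {P : ℕ → ℕ → Prop} [∀ k i, Decidable (P k i)]
    (hP : Tendsto (fun k : ℕ =>
        ((((Finset.range (k-1)).filter fun i => P k i).card : ℝ)) / k) atTop (nhds 1)) :
    Tendsto (fun k : ℕ =>
        ((((Finset.range (k-1)).filter fun i => ¬ P k i).card : ℝ)) / k) atTop (nhds 0) := by
  have hsplit : ∀ k : ℕ,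
      ((((Finset.range (k-1)).filter fun i => ¬ P k i).card : ℝ))
        = ((k-1 : ℕ) : ℝ) - (((Finset.range (k-1)).filter fun i => P k i).card : ℝ) := by
    intro k
    have := Finset.card_filter_add_card_filter_not
      (s := Finset.range (k-1)) (p := fun i => P k i)
    rw [Finset.card_range] at this
    have := congrArg (fun m : ℕ => (m : ℝ)) this
    push_cast at this
    linarith
  have h1 : Tendsto (fun k : ℕ => ((k-1 : ℕ) : ℝ) / k) atTop (nhds 1) := by
    have heq : ∀ᶠ k : ℕ in atTop, ((k-1 : ℕ) : ℝ) / k = 1 - 1/(k:ℝ) := by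
      filter_upwards [Filter.eventually_ge_atTop 1] with k hk
      have hkpos : (0:ℝ) < k := by exact_mod_cast hk
      rw [Nat.cast_sub hk]
      field_simp
      norm_num
    rw [tendsto_congr' heq]
    have := tendsto_one_div_atTop_nhds_zero_nat (𝕜 := ℝ)
    simpa using tendsto_const_nhds.sub this
  have := h1.sub hP
  rw [sub_self] at this
  refine Tendsto.congr ?_ this
  intro k
  rw [hsplit k, sub_div]

lemma tv_div_tendsto (a : ℕ → ℕ → ℝ)
    (ha0 : ∀ k : ℕ, ∀ i < k, a k i ∈ Set.Icc (0 : ℝ) 1)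
    (hma : AEMonotone a) :
    Tendsto (fun k : ℕ =>
      (∑ i ∈ Finset.range (k-1), |a k (i+1) - a k i|) / (k:ℝ)) atTop (nhds 0) := by
  have hV0 : ∀ k : ℕ, 0 ≤ ∑ i ∈ Finset.range (k-1), |a k (i+1) - a k i| :=
    fun k => Finset.sum_nonneg fun i _ => abs_nonneg _
  rcases hma with hinc | hdec
  · refine div_tendsto_zero_of_le hV0 ?_ (card_frac_tendsto (P := fun k i => a k i ≤ a k (i+1)) hinc)
    filter_upwards [Filter.eventually_ge_atTop 1] with k hk
    exact V_le_of_card hk (ha0 k)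
  · refine div_tendsto_zero_of_le hV0 ?_
      (card_frac_tendsto (P := fun k i => a k (i+1) ≤ a k i) hdec)
    filter_upwards [Filter.eventually_ge_atTop 1] with k hk
    have hc' : ∀ i < k, (1 - a k i) ∈ Set.Icc (0:ℝ) 1 := by
      intro i hi
      have := ha0 k i hi
      simp only [Set.mem_Icc] at this ⊢
      constructor <;> linarith
    have hVeq : ∑ i ∈ Finset.range (k-1), |a k (i+1) - a k i|
        = ∑ i ∈ Finset.range (k-1), |(1 - a k (i+1)) - (1 - a k i)| :=
      Finset.sum_congr rfl fun i _ => by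
        rw [show (1 - a k (i+1)) - (1 - a k i) = -(a k (i+1) - a k i) by ring, abs_neg]
    have hfilter : ((Finset.range (k-1)).filter fun i => ¬ (1 - a k i) ≤ (1 - a k (i+1))).card
        = ((Finset.range (k-1)).filter fun i => ¬ a k (i+1) ≤ a k i).card := by
      congr 1
      refine Finset.filter_congr fun i _ => ?_
      constructor <;> intro h hcon <;> exact h (by linarith)
    rw [hVeq]
    refine le_trans (V_le_of_card hk hc') ?_
    rw [hfilter]
lemma sum_ite_fin_le_one {k : ℕ} (s : Finset (Fin k)) (P : Fin k → Prop) [DecidablePred P]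
    (huniq : ∀ x y : Fin k, P x → P y → x = y) :
    ∑ j ∈ s, (if P j then (1:ℝ) else 0) ≤ 1 := by
  rw [Finset.sum_boole]
  have hcard : (s.filter P).card ≤ 1 :=
    Finset.card_le_one.mpr fun x hx y hy =>
      huniq x y (Finset.mem_filter.mp hx).2 (Finset.mem_filter.mp hy).2
  exact_mod_cast hcard

lemma eigenvalues_mem (k : ℕ) (a b : ℕ → ℝ)
    (ha0k : ∀ i < k, a i ∈ Set.Icc (0:ℝ) 1) (hb0k : ∀ i < k, b i ∈ Set.Icc (0:ℝ) 1)
    (i : Fin k) :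
    (jacobiMatrix_isHermitian k a b).eigenvalues i ∈ Set.Icc (-3:ℝ) 3 := by
  set hA := jacobiMatrix_isHermitian k a b with hhA
  set lam := hA.eigenvalues i with hlam
  have hvec := hA.mulVec_eigenvectorBasis i
  have hv0' : hA.eigenvectorBasis i ≠ 0 := by
    intro hcon
    have hn := hA.eigenvectorBasis.orthonormal.1 i
    rw [hcon, norm_zero] at hn
    norm_num at hn
  have hev : Module.End.HasEigenvalue (Matrix.toLin' (jacobiMatrix k a b)) lam := by
    refine Module.End.hasEigenvalue_of_hasEigenvector
      (x := ⇑(hA.eigenvectorBasis i)) ⟨?_, ?_⟩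
    · rw [Module.End.mem_eigenspace_iff, Matrix.toLin'_apply]
      exact hvec
    · intro hcon
      apply hv0'
      ext j
      exact congrFun hcon j
  obtain ⟨i₀, hi₀⟩ := eigenvalue_mem_ball hev
  have hrow : ∑ j ∈ Finset.univ.erase i₀, ‖(jacobiMatrix k a b) i₀ j‖ ≤ 2 := by
    have hterm : ∀ j ∈ Finset.univ.erase i₀, ‖(jacobiMatrix k a b) i₀ j‖
        ≤ (if ((i₀:ℕ)+1 = (j:ℕ)) then (1:ℝ) else 0) + (if ((j:ℕ)+1 = (i₀:ℕ)) then (1:ℝ) else 0) := by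
      intro j hj
      have hne : j ≠ i₀ := (Finset.mem_erase.mp hj).1
      have hne' : (i₀:ℕ) ≠ (j:ℕ) := fun h => hne (Fin.ext h.symm)
      simp only [jacobiMatrix, Matrix.of_apply, Real.norm_eq_abs]
      rw [if_neg hne']
      by_cases h2 : (i₀:ℕ)+1 = (j:ℕ)
      · rw [if_pos h2, if_pos h2, if_neg (by omega)]
        have := abs_le_one_of_mem (hb0k i₀ (by omega))
        linarith
      · rw [if_neg h2, if_neg h2]
        by_cases h3 : (j:ℕ)+1 = (i₀:ℕ)
        · rw [if_pos h3, if_pos h3]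
          have := abs_le_one_of_mem (hb0k j (by omega))
          linarith
        · rw [if_neg h3, if_neg h3, abs_zero]
          simp
    refine le_trans (Finset.sum_le_sum hterm) ?_
    rw [Finset.sum_add_distrib]
    have hu1 : ∑ j ∈ Finset.univ.erase i₀, (if ((i₀:ℕ)+1 = (j:ℕ)) then (1:ℝ) else 0) ≤ 1 :=
      sum_ite_fin_le_one _ _ (fun x y hx hy => Fin.ext (by omega))
    have hu2 : ∑ j ∈ Finset.univ.erase i₀, (if ((j:ℕ)+1 = (i₀:ℕ)) then (1:ℝ) else 0) ≤ 1 :=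
      sum_ite_fin_le_one _ _ (fun x y hx hy => Fin.ext (by omega))
    linarith
  have hdiag : (jacobiMatrix k a b) i₀ i₀ = a i₀ := by
    simp [jacobiMatrix]
  have hdist : |lam - a i₀| ≤ 2 := by
    rw [Metric.mem_closedBall, Real.dist_eq, hdiag] at hi₀
    linarith
  have hmem := ha0k i₀ i₀.isLt
  simp only [Set.mem_Icc] at hmem ⊢
  rw [abs_le] at hdist
  constructor <;> linarith [hdist.1, hdist.2, hmem.1, hmem.2]

lemma conj_pow {k : ℕ} (U D : Matrix (Fin k) (Fin k) ℝ)
    (h1 : star U * U = 1) (h2 : U * star U = 1) (n : ℕ) :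
    (U * D * star U)^n = U * D^n * star U := by
  induction n with
  | zero => rw [pow_zero, pow_zero, Matrix.mul_one, h2]
  | succ n ih =>
    rw [pow_succ, ih, pow_succ]
    calc U * D^n * star U * (U * D * star U)
        = U * D^n * (star U * U) * D * star U := by
          simp only [Matrix.mul_assoc]
    _ = U * (D^n * D) * star U := by rw [h1]; simp only [Matrix.mul_one, Matrix.mul_assoc]

lemma sum_eigenvalues_pow (k : ℕ) (a b : ℕ → ℝ) (n : ℕ) :
    ∑ i, ((jacobiMatrix_isHermitian k a b).eigenvalues i)^n
      = Matrix.trace (jacobiMatrix k a b ^ n) := by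
  set hA := jacobiMatrix_isHermitian k a b with hhA
  set U : Matrix (Fin k) (Fin k) ℝ := (hA.eigenvectorUnitary : Matrix (Fin k) (Fin k) ℝ) with hU
  set D : Matrix (Fin k) (Fin k) ℝ := Matrix.diagonal (RCLike.ofReal ∘ hA.eigenvalues) with hD
  have h1 : star U * U = 1 := Unitary.star_mul_self_of_mem hA.eigenvectorUnitary.2
  have h2 : U * star U = 1 := Unitary.mul_star_self_of_mem hA.eigenvectorUnitary.2
  have hspec : jacobiMatrix k a b = U * D * star U := hA.spectral_theorem
  have h3 : (jacobiMatrix k a b)^n = U * D^n * star U := by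
    conv_lhs => rw [hspec]
    exact conj_pow U D h1 h2 n
  rw [h3, Matrix.trace_mul_cycle, h1, Matrix.one_mul, hD,
    Matrix.diagonal_pow, Matrix.trace_diagonal]
  refine Finset.sum_congr rfl fun j _ => ?_
  simp [RCLike.ofReal_real_eq_id]
lemma monomial_limit (a b : ℕ → ℕ → ℝ)
    (ha0 : ∀ k : ℕ, ∀ i < k, a k i ∈ Set.Icc (0:ℝ) 1)
    (hb0 : ∀ k : ℕ, ∀ i < k, b k i ∈ Set.Icc (0:ℝ) 1)
    (hma : AEMonotone a) (hmb : AEMonotone b)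
    (μ : Measure (ℝ × ℝ)) [IsProbabilityMeasure μ]
    (hμ : MuDistributedI a b μ) (n : ℕ) :
    Tendsto (fun k : ℕ => (1/(k:ℝ)) * Matrix.trace (jacobiMatrix k (a k) (b k) ^ n))
      atTop (nhds (∫ p, jfree p.1 p.2 n 0 ∂μ)) := by
  have hψ := hμ (fun p => jfree p.1 p.2 n 0) (jfree_continuous n 0).continuousOn
  set S : ℕ → ℝ := fun k => ∑ j ∈ Finset.range k, jfree (a k j) (b k j) n 0 with hS
  set T : ℕ → ℝ := fun k => Matrix.trace (jacobiMatrix k (a k) (b k) ^ n) with hT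
  set Va : ℕ → ℝ := fun k => ∑ i ∈ Finset.range (k-1), |a k (i+1) - a k i| with hVa
  set Vb : ℕ → ℝ := fun k => ∑ i ∈ Finset.range (k-1), |b k (i+1) - b k i| with hVb
  set g : ℕ → ℝ := fun k => (n:ℝ)*3^n*((2*((n:ℝ)+1)+1)*(Va k/k + Vb k/k + 4*(1/(k:ℝ))))
    + 2*3^n*(1/(k:ℝ)) with hg
  have hg0 : Tendsto g atTop (nhds 0) := by
    have h1 := tv_div_tendsto a ha0 hma
    have h2 := tv_div_tendsto b hb0 hmb
    have h3 := tendsto_one_div_atTop_nhds_zero_nat (𝕜 := ℝ)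
    have := (((h1.add h2).add (h3.const_mul (4:ℝ))).const_mul
      ((n:ℝ)*3^n*(2*((n:ℝ)+1)+1))).add (h3.const_mul (2*3^n))
    simp only [add_zero, mul_zero] at this
    refine Tendsto.congr (fun k => ?_) this
    rw [hg]
    ring
  have hD : Tendsto (fun k : ℕ => (1/(k:ℝ)) * T k - (1/(k:ℝ)) * S k) atTop (nhds 0) := by
    refine squeeze_zero_norm (fun k => ?_) hg0
    have hcomp := trace_compare k (a k) (b k) (ha0 k) (hb0 k) n
    have hk0 : (0:ℝ) ≤ 1/(k:ℝ) := by positivity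
    calc ‖(1/(k:ℝ)) * T k - (1/(k:ℝ)) * S k‖ = (1/(k:ℝ)) * |T k - S k| := by
          rw [Real.norm_eq_abs, ← mul_sub, abs_mul, abs_of_nonneg hk0]
    _ ≤ (1/(k:ℝ)) * ((n:ℝ) * 3^n * ((2*((n:ℝ)+1)+1) * ((Va k + 2) + (Vb k + 2))) + 2 * 3^n) :=
          mul_le_mul_of_nonneg_left hcomp hk0
    _ = g k := by rw [hg]; ring
  have := hψ.add hD
  rw [add_zero] at this
  refine Tendsto.congr (fun k => ?_) this
  ring

lemma poly_limit (a b : ℕ → ℕ → ℝ)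
    (ha0 : ∀ k : ℕ, ∀ i < k, a k i ∈ Set.Icc (0:ℝ) 1)
    (hb0 : ∀ k : ℕ, ∀ i < k, b k i ∈ Set.Icc (0:ℝ) 1)
    (hma : AEMonotone a) (hmb : AEMonotone b)
    (μ : Measure (ℝ × ℝ)) [IsProbabilityMeasure μ]
    (hsupp : μ ((Set.Icc (0 : ℝ) 1 ×ˢ Set.Icc (0 : ℝ) 1)ᶜ) = 0)
    (hμ : MuDistributedI a b μ) (P : Polynomial ℝ) :
    Tendsto (fun k : ℕ => (1/(k:ℝ)) * jacobiTrace k (a k) (b k) (fun x => P.eval x))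
      atTop
      (nhds ((1 / Real.pi) *
        ∫ p, (∫ t in (0:ℝ)..Real.pi, P.eval (p.1 + 2 * p.2 * Real.cos t)) ∂μ)) := by
  have haemem : ∀ᵐ p ∂μ, p ∈ (Set.Icc (0:ℝ) 1 ×ˢ Set.Icc (0:ℝ) 1) := by
    rw [MeasureTheory.ae_iff]
    exact hsupp
  set N := P.natDegree + 1 with hN
  have hintg : ∀ m : ℕ, Integrable (fun p : ℝ × ℝ => jfree p.1 p.2 m 0) μ := by
    intro m
    refine Integrable.mono' (integrable_const ((3:ℝ)^m)) (jfree_continuous m 0).aestronglyMeasurable ?_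
    filter_upwards [haemem] with p hp
    rw [Set.mem_prod] at hp
    exact jfree_abs_le (abs_le_one_of_mem hp.1) (abs_le_one_of_mem hp.2) m 0
  have hrw : ∀ k : ℕ, (1/(k:ℝ)) * jacobiTrace k (a k) (b k) (fun x => P.eval x)
      = ∑ m ∈ Finset.range N, P.coeff m
          * ((1/(k:ℝ)) * Matrix.trace (jacobiMatrix k (a k) (b k) ^ m)) := by
    intro k
    unfold jacobiTrace
    have h1 : ∑ i, P.eval ((jacobiMatrix_isHermitian k (a k) (b k)).eigenvalues i)
        = ∑ m ∈ Finset.range N, P.coeff m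
            * Matrix.trace (jacobiMatrix k (a k) (b k) ^ m) := by
      rw [Finset.sum_congr rfl (fun i _ => Polynomial.eval_eq_sum_range
        ((jacobiMatrix_isHermitian k (a k) (b k)).eigenvalues i)), Finset.sum_comm]
      refine Finset.sum_congr rfl fun m _ => ?_
      rw [← Finset.mul_sum, sum_eigenvalues_pow]
    rw [h1, Finset.mul_sum]
    refine Finset.sum_congr rfl fun m _ => by ring
  have hlim : Tendsto (fun k : ℕ => ∑ m ∈ Finset.range N, P.coeff m
        * ((1/(k:ℝ)) * Matrix.trace (jacobiMatrix k (a k) (b k) ^ m)))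
      atTop (nhds (∑ m ∈ Finset.range N, P.coeff m * ∫ p, jfree p.1 p.2 m 0 ∂μ)) := by
    refine tendsto_finset_sum _ fun m _ => ?_
    exact (monomial_limit a b ha0 hb0 hma hmb μ hμ m).const_mul (P.coeff m)
  have hval : (1 / Real.pi) *
        ∫ p, (∫ t in (0:ℝ)..Real.pi, P.eval (p.1 + 2 * p.2 * Real.cos t)) ∂μ
      = ∑ m ∈ Finset.range N, P.coeff m * ∫ p, jfree p.1 p.2 m 0 ∂μ := by
    have hinner : ∀ p : ℝ × ℝ, (∫ t in (0:ℝ)..Real.pi, P.eval (p.1 + 2 * p.2 * Real.cos t))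
        = ∑ m ∈ Finset.range N, P.coeff m * (Real.pi * jfree p.1 p.2 m 0) := by
      intro p
      have e1 : ∀ t : ℝ, P.eval (p.1 + 2 * p.2 * Real.cos t)
          = ∑ m ∈ Finset.range N, P.coeff m * (p.1 + 2 * p.2 * Real.cos t)^m :=
        fun t => Polynomial.eval_eq_sum_range _
      rw [intervalIntegral.integral_congr (g := fun t => ∑ m ∈ Finset.range N,
        P.coeff m * (p.1 + 2 * p.2 * Real.cos t)^m) (fun t _ => e1 t)]
      rw [intervalIntegral.integral_finset_sum (fun m _ =>
        (Continuous.intervalIntegrable (by fun_prop) 0 Real.pi))]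
      refine Finset.sum_congr rfl fun m _ => ?_
      rw [intervalIntegral.integral_const_mul]
      congr 1
      rw [jfree_zero_eq]
      rw [← mul_assoc, mul_one_div, div_self Real.pi_ne_zero, one_mul]
    rw [integral_congr_ae (Filter.Eventually.of_forall hinner)]
    rw [integral_finset_sum _ (fun m _ => (((hintg m).const_mul Real.pi).const_mul (P.coeff m)))]
    rw [Finset.mul_sum]
    refine Finset.sum_congr rfl fun m _ => ?_
    rw [MeasureTheory.integral_const_mul, MeasureTheory.integral_const_mul]
    field_simp
  rw [tendsto_congr hrw, hval]
  exact hlim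
def clamp (φ : ℝ → ℝ) (x : ℝ) : ℝ := φ (max (-3) (min 3 x))

lemma clamp_mem (x : ℝ) : max (-3:ℝ) (min 3 x) ∈ Set.Icc (-3:ℝ) 3 :=
  ⟨le_max_left _ _, max_le (by norm_num) (min_le_left _ _)⟩

lemma clamp_eq {φ : ℝ → ℝ} {x : ℝ} (hx : x ∈ Set.Icc (-3:ℝ) 3) : clamp φ x = φ x := by
  unfold clamp
  rw [min_eq_right hx.2, max_eq_right hx.1]

lemma clamp_continuous {φ : ℝ → ℝ} (hφ : ContinuousOn φ (Set.Icc (-3:ℝ) 3)) :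
    Continuous (clamp φ) :=
  hφ.comp_continuous (by fun_prop) clamp_mem

lemma arg_mem {p : ℝ × ℝ} (hp : p ∈ Set.Icc (0:ℝ) 1 ×ˢ Set.Icc (0:ℝ) 1) (t : ℝ) :
    p.1 + 2 * p.2 * Real.cos t ∈ Set.Icc (-3:ℝ) 3 := by
  rw [Set.mem_prod, Set.mem_Icc, Set.mem_Icc] at hp
  obtain ⟨⟨h1, h2⟩, h3, h4⟩ := hp
  have hc1 := Real.neg_one_le_cos t
  have hc2 := Real.cos_le_one t
  constructor <;> nlinarith

lemma integrable_inner {g : ℝ → ℝ} (hg : Continuous g)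
    (μ : Measure (ℝ × ℝ)) [IsProbabilityMeasure μ]
    (hsupp : μ ((Set.Icc (0 : ℝ) 1 ×ˢ Set.Icc (0 : ℝ) 1)ᶜ) = 0) :
    Integrable (fun p : ℝ × ℝ => ∫ t in (0:ℝ)..Real.pi, g (p.1 + 2*p.2*Real.cos t)) μ := by
  obtain ⟨M, hM⟩ := (isCompact_Icc (a := (-3:ℝ)) (b := 3)).exists_bound_of_continuousOn
    hg.continuousOn
  have haemem : ∀ᵐ p ∂μ, p ∈ (Set.Icc (0:ℝ) 1 ×ˢ Set.Icc (0:ℝ) 1) := by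
    rw [MeasureTheory.ae_iff]; exact hsupp
  have hcont : Continuous (fun p : ℝ × ℝ =>
      ∫ t in (0:ℝ)..Real.pi, g (p.1 + 2*p.2*Real.cos t)) := by
    apply intervalIntegral.continuous_parametric_intervalIntegral_of_continuous'
    show Continuous (Function.uncurry fun (p : ℝ×ℝ) (t:ℝ) => g (p.1 + 2*p.2*Real.cos t))
    fun_prop
  refine Integrable.mono' (integrable_const (M * |Real.pi - 0|)) hcont.aestronglyMeasurable ?_
  filter_upwards [haemem] with p hp
  exact intervalIntegral.norm_integral_le_of_norm_le_const fun t _ => hM _ (arg_mem hp t)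

end TraceAux

theorem trace_formula_monotone_bounded' (a b : ℕ → ℕ → ℝ)
    (ha0 : ∀ k : ℕ, ∀ i < k, a k i ∈ Set.Icc (0 : ℝ) 1)
    (hb0 : ∀ k : ℕ, ∀ i < k, b k i ∈ Set.Icc (0 : ℝ) 1)
    (hma : AEMonotone a) (hmb : AEMonotone b)
    (μ : Measure (ℝ × ℝ)) [IsProbabilityMeasure μ]
    (hsupp : μ ((Set.Icc (0 : ℝ) 1 ×ˢ Set.Icc (0 : ℝ) 1)ᶜ) = 0)
    (hμ : MuDistributedI a b μ)
    (φ : ℝ → ℝ) (hφ : ContinuousOn φ (Set.Icc (-3 : ℝ) 3)) :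
    Filter.Tendsto (fun k : ℕ => (1 / (k : ℝ)) * jacobiTrace k (a k) (b k) φ)
      Filter.atTop
      (nhds ((1 / Real.pi) *
        ∫ p, (∫ t in (0 : ℝ)..Real.pi, φ (p.1 + 2 * p.2 * Real.cos t)) ∂μ)) := by
  classical
  set φh := TraceAux.clamp φ with hphih
  have hφc : Continuous φh := TraceAux.clamp_continuous hφ
  have haemem : ∀ᵐ p ∂μ, p ∈ (Set.Icc (0:ℝ) 1 ×ˢ Set.Icc (0:ℝ) 1) := by
    rw [MeasureTheory.ae_iff]; exact hsupp
  have htr : ∀ k : ℕ, jacobiTrace k (a k) (b k) φ = jacobiTrace k (a k) (b k) φh :=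
    fun k => Finset.sum_congr rfl fun i _ =>
      (TraceAux.clamp_eq (TraceAux.eigenvalues_mem k (a k) (b k) (ha0 k) (hb0 k) i)).symm
  have hint : (∫ p, (∫ t in (0:ℝ)..Real.pi, φ (p.1 + 2 * p.2 * Real.cos t)) ∂μ)
      = ∫ p, (∫ t in (0:ℝ)..Real.pi, φh (p.1 + 2 * p.2 * Real.cos t)) ∂μ := by
    refine integral_congr_ae ?_
    filter_upwards [haemem] with p hp
    exact intervalIntegral.integral_congr fun t _ =>
      (TraceAux.clamp_eq (TraceAux.arg_mem hp t)).symm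
  rw [hint, show (fun k : ℕ => (1 / (k : ℝ)) * jacobiTrace k (a k) (b k) φ)
      = fun k : ℕ => (1 / (k : ℝ)) * jacobiTrace k (a k) (b k) φh from
    funext fun k => by rw [htr k]]
  set Iφ : (ℝ × ℝ) → ℝ := fun p => ∫ t in (0:ℝ)..Real.pi, φh (p.1 + 2 * p.2 * Real.cos t)
    with hIφdef
  set L : ℝ := (1 / Real.pi) * ∫ p, Iφ p ∂μ with hL
  rw [Metric.tendsto_atTop]
  intro ε hε
  obtain ⟨P, hP⟩ := exists_polynomial_near_of_continuousOn (-3) 3 φh hφc.continuousOn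
    (ε/4) (by positivity)
  have hpoly := TraceAux.poly_limit a b ha0 hb0 hma hmb μ hsupp hμ P
  rw [Metric.tendsto_atTop] at hpoly
  obtain ⟨K₀, hK₀⟩ := hpoly (ε/4) (by positivity)
  set IP : (ℝ × ℝ) → ℝ := fun p => ∫ t in (0:ℝ)..Real.pi, P.eval (p.1 + 2 * p.2 * Real.cos t)
    with hIPdef
  set LP : ℝ := (1 / Real.pi) * ∫ p, IP p ∂μ with hLP
  have hIφint : Integrable Iφ μ := TraceAux.integrable_inner hφc μ hsupp
  have hIPint : Integrable IP μ := TraceAux.integrable_inner P.continuous μ hsupp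
  have hii : |LP - L| ≤ ε/4 := by
    have hdiff : ∀ᵐ p ∂μ, ‖IP p - Iφ p‖ ≤ (ε/4) * Real.pi := by
      filter_upwards [haemem] with p hp
      have hsub : IP p - Iφ p
          = ∫ t in (0:ℝ)..Real.pi,
              (P.eval (p.1 + 2 * p.2 * Real.cos t) - φh (p.1 + 2 * p.2 * Real.cos t)) := by
        rw [hIPdef, hIφdef]
        exact (intervalIntegral.integral_sub
          (Continuous.intervalIntegrable (by fun_prop) _ _)
          (Continuous.intervalIntegrable (by fun_prop) _ _)).symm
      rw [hsub]
      have := intervalIntegral.norm_integral_le_of_norm_le_const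
        (C := ε/4) (f := fun t =>
          P.eval (p.1 + 2 * p.2 * Real.cos t) - φh (p.1 + 2 * p.2 * Real.cos t))
        (a := 0) (b := Real.pi)
        (fun t _ => le_of_lt (hP _ (TraceAux.arg_mem hp t)))
      calc ‖∫ t in (0:ℝ)..Real.pi,
            (P.eval (p.1 + 2 * p.2 * Real.cos t) - φh (p.1 + 2 * p.2 * Real.cos t))‖
          ≤ ε/4 * |Real.pi - 0| := this
      _ = (ε/4) * Real.pi := by rw [sub_zero, abs_of_nonneg Real.pi_pos.le]
    have h1 : |(∫ p, IP p ∂μ) - ∫ p, Iφ p ∂μ| ≤ (ε/4) * Real.pi := by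
      rw [← integral_sub hIPint hIφint, ← Real.norm_eq_abs]
      refine le_trans (norm_integral_le_integral_norm _) ?_
      have hmono := integral_mono_ae ((hIPint.sub hIφint).norm)
        (integrable_const ((ε/4) * Real.pi)) hdiff
      calc ∫ p, ‖IP p - Iφ p‖ ∂μ ≤ ∫ _p, (ε/4) * Real.pi ∂μ := hmono
      _ = (ε/4) * Real.pi := by simp [measure_univ]
    rw [hLP, hL, ← mul_sub, abs_mul]
    have hpinv : |1 / Real.pi| = 1 / Real.pi := abs_of_pos (by positivity)
    rw [hpinv]
    calc (1/Real.pi) * |(∫ p, IP p ∂μ) - ∫ p, Iφ p ∂μ|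
        ≤ (1/Real.pi) * ((ε/4) * Real.pi) :=
          mul_le_mul_of_nonneg_left h1 (by positivity)
    _ = ε/4 := by field_simp
  refine ⟨max K₀ 1, fun k hk => ?_⟩
  have hk1 : 1 ≤ k := le_trans (le_max_right _ _) hk
  have hkK := le_trans (le_max_left _ _) hk
  have hkpos : (0:ℝ) < k := by exact_mod_cast hk1
  have hmid := hK₀ k hkK
  rw [Real.dist_eq] at hmid ⊢
  have hi : |(1/(k:ℝ)) * jacobiTrace k (a k) (b k) φh
      - (1/(k:ℝ)) * jacobiTrace k (a k) (b k) (fun x => P.eval x)| ≤ ε/4 := by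
    rw [← mul_sub, abs_mul, abs_of_pos (by positivity : (0:ℝ) < 1/(k:ℝ))]
    unfold jacobiTrace
    rw [← Finset.sum_sub_distrib]
    have hsum : |∑ i, (φh ((jacobiMatrix_isHermitian k (a k) (b k)).eigenvalues i)
        - P.eval ((jacobiMatrix_isHermitian k (a k) (b k)).eigenvalues i))|
        ≤ (k:ℝ) * (ε/4) := by
      refine le_trans (Finset.abs_sum_le_sum_abs _ _) ?_
      have hterm : ∀ i : Fin k, |φh ((jacobiMatrix_isHermitian k (a k) (b k)).eigenvalues i)
          - P.eval ((jacobiMatrix_isHermitian k (a k) (b k)).eigenvalues i)| ≤ ε/4 := by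
        intro i
        rw [abs_sub_comm]
        exact le_of_lt (hP _ (TraceAux.eigenvalues_mem k (a k) (b k) (ha0 k) (hb0 k) i))
      refine le_trans (Finset.sum_le_sum fun i _ => hterm i) ?_
      rw [Finset.sum_const, Finset.card_univ, Fintype.card_fin, nsmul_eq_mul]
    calc (1/(k:ℝ)) * |∑ i, (φh ((jacobiMatrix_isHermitian k (a k) (b k)).eigenvalues i)
        - P.eval ((jacobiMatrix_isHermitian k (a k) (b k)).eigenvalues i))|
        ≤ (1/(k:ℝ)) * ((k:ℝ) * (ε/4)) := mul_le_mul_of_nonneg_left hsum (by positivity)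
    _ = ε/4 := by field_simp
  have htri : |(1/(k:ℝ)) * jacobiTrace k (a k) (b k) φh - L|
      ≤ |(1/(k:ℝ)) * jacobiTrace k (a k) (b k) φh
          - (1/(k:ℝ)) * jacobiTrace k (a k) (b k) (fun x => P.eval x)|
        + |(1/(k:ℝ)) * jacobiTrace k (a k) (b k) (fun x => P.eval x) - LP|
        + |LP - L| := by
    calc |(1/(k:ℝ)) * jacobiTrace k (a k) (b k) φh - L|
        ≤ |(1/(k:ℝ)) * jacobiTrace k (a k) (b k) φh
            - (1/(k:ℝ)) * jacobiTrace k (a k) (b k) (fun x => P.eval x)|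
          + |(1/(k:ℝ)) * jacobiTrace k (a k) (b k) (fun x => P.eval x) - L| :=
          abs_sub_le _ _ _
    _ ≤ _ := by
          have := abs_sub_le ((1/(k:ℝ)) * jacobiTrace k (a k) (b k) (fun x => P.eval x)) LP L
          linarith
  linarith

/-- the trace formula for a.e. monotone sequences with entries in `[0,1]` that
are `μ`-distributed on `I²`. -/
theorem trace_formula_monotone_bounded (a b : ℕ → ℕ → ℝ)
    (ha0 : ∀ k : ℕ, ∀ i < k, a k i ∈ Set.Icc (0 : ℝ) 1)
    (hb0 : ∀ k : ℕ, ∀ i < k, b k i ∈ Set.Icc (0 : ℝ) 1)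
    (hma : AEMonotone a) (hmb : AEMonotone b)
    (μ : Measure (ℝ × ℝ)) [IsProbabilityMeasure μ]
    (hsupp : μ ((Set.Icc (0 : ℝ) 1 ×ˢ Set.Icc (0 : ℝ) 1)ᶜ) = 0)
    (hμ : MuDistributedI a b μ)
    (φ : ℝ → ℝ) (hφ : ContinuousOn φ (Set.Icc (-3 : ℝ) 3)) :
    Filter.Tendsto (fun k : ℕ => (1 / (k : ℝ)) * jacobiTrace k (a k) (b k) φ)
      Filter.atTop
      (nhds ((1 / Real.pi) *
        ∫ p, (∫ t in (0 : ℝ)..Real.pi, φ (p.1 + 2 * p.2 * Real.cos t)) ∂μ)) :=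
  trace_formula_monotone_bounded' a b ha0 hb0 hma hmb μ hsupp hμ φ hφ
end
end

section
/- Let a ∈ ℝ and b > 0, and let T_k(a,b) be the k×k tridiagonal Toeplitz matrix with diagonal entries a and sub/super-diagonal entries b. Then for every continuous function φ on [a−2b, a+2b], lim_{k→∞} (1/k)·Trace[φ(T_k(a,b))] = (1/π) ∫_0^π φ(a + 2b·cos x) dx. -/
open Filter MeasureTheory

noncomputable section

section AuxTrace
open Real Matrix

variable (k : ℕ) (a b : ℝ)

/-- explicit eigenvalues of the tridiagonal Toeplitz matrix -/
def tmu (j : Fin k) : ℝ := a + 2 * b * Real.cos ((j + 1) * π / (k + 1))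

/-- explicit eigenvectors -/
def tev (j : Fin k) : Fin k → ℝ := fun i => Real.sin ((i + 1) * ((j + 1) * π / (k + 1)))

lemma sum_ite_coe (m : ℕ) (f : Fin k → ℝ) :
    ∑ j : Fin k, (if m = (j : ℕ) then f j else 0) = if h : m < k then f ⟨m, h⟩ else 0 := by
  by_cases h : m < k
  · rw [dif_pos h]
    rw [Finset.sum_eq_single ⟨m, h⟩]
    · simp
    · intro j _ hj
      rw [if_neg]
      intro he
      exact hj (Fin.ext he.symm)
    · simp
  · rw [dif_neg h, Finset.sum_eq_zero]
    intro j _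
    rw [if_neg]
    have := j.isLt
    omega

lemma jacobi_entry (i j : Fin k) :
    jacobiMatrix k (fun _ => a) (fun _ => b) i j =
      (if (i : ℕ) = (j : ℕ) then a else 0) + (if (i : ℕ) + 1 = (j : ℕ) then b else 0)
        + (if (j : ℕ) + 1 = (i : ℕ) then b else 0) := by
  simp only [jacobiMatrix, Matrix.of_apply]
  by_cases h1 : (i : ℕ) = (j : ℕ) <;> by_cases h2 : (i : ℕ) + 1 = (j : ℕ) <;>
    by_cases h3 : (j : ℕ) + 1 = (i : ℕ) <;> simp [h1, h2, h3] <;> omega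

lemma jacobi_mulVec (v : Fin k → ℝ) (s : ℕ → ℝ) (hs : ∀ i : Fin k, v i = s (i + 1))
    (h0 : s 0 = 0) (hk : s (k + 1) = 0) (i : Fin k) :
    (jacobiMatrix k (fun _ => a) (fun _ => b) *ᵥ v) i
      = b * s i + a * s (i + 1) + b * s (i + 2) := by
  have hcast : ∀ (c : ℝ) (m : ℕ) , ∑ j : Fin k, (if m = (j : ℕ) then c else 0) * v j
      = if h : m < k then c * s (m + 1) else 0 := by
    intro c m
    have e : (∑ j : Fin k, (if m = (j : ℕ) then c else 0) * v j)
        = ∑ j : Fin k, (if m = (j : ℕ) then c * v j else 0) := by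
      congr 1; ext j; by_cases h : m = (j : ℕ) <;> simp [h]
    rw [e, sum_ite_coe]
    by_cases h : m < k
    · simp [dif_pos h, hs ⟨m, h⟩]
    · simp [h]
  simp only [Matrix.mulVec, dotProduct]
  have : ∀ j : Fin k, jacobiMatrix k (fun _ => a) (fun _ => b) i j * v j
      = (if (i : ℕ) = (j : ℕ) then a else 0) * v j + (if (i : ℕ) + 1 = (j : ℕ) then b else 0) * v j
        + (if (j : ℕ) + 1 = (i : ℕ) then b else 0) * v j := by
    intro j; rw [jacobi_entry]; ring
  rw [Finset.sum_congr rfl fun j _ => this j, Finset.sum_add_distrib, Finset.sum_add_distrib]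
  have e1 := hcast a i
  have e2 := hcast b ((i : ℕ) + 1)
  have e3 : ∑ j : Fin k, (if (j : ℕ) + 1 = (i : ℕ) then b else 0) * v j = b * s i := by
    rcases Nat.eq_zero_or_pos (i : ℕ) with h | h
    · rw [h, h0, mul_zero, Finset.sum_eq_zero]
      intro j _
      rw [if_neg (by omega), zero_mul]
    · have : ∀ j : Fin k, ((j : ℕ) + 1 = (i : ℕ)) = ((i : ℕ) - 1 = (j : ℕ)) := by
        intro j; simp only [eq_iff_iff]; omega
      simp only [this]
      rw [hcast b ((i : ℕ) - 1), dif_pos (by omega)]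
      congr 2
      omega
  rw [e1, e2, e3, dif_pos i.isLt]
  rcases Nat.lt_or_ge ((i : ℕ) + 1) k with h | h
  · rw [dif_pos h]; ring
  · rw [dif_neg (by omega)]
    have h2 : (i : ℕ) + 2 = k + 1 := by have := i.isLt; omega
    rw [h2, hk]
    ring

variable {k a b}

lemma theta_mem (hk : 0 < k) (j : Fin k) :
    (j + 1) * π / (k + 1) ∈ Set.Ioo 0 π := by
  constructor
  · apply div_pos
    · positivity
    · positivity
  · rw [div_lt_iff₀ (by positivity)]
    have h1 : ((j : ℝ) + 1) ≤ k := by exact_mod_cast Nat.succ_le_of_lt j.isLt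
    nlinarith [Real.pi_pos]

lemma tmu_injective (hb : 0 < b) : Function.Injective (tmu k a b) := by
  intro j1 j2 h
  unfold tmu at h
  have hc : Real.cos ((j1 + 1) * π / (k + 1)) = Real.cos ((j2 + 1) * π / (k + 1)) := by
    nlinarith
  have hk : 0 < k := j1.pos
  have h1 := theta_mem hk j1
  have h2 := theta_mem hk j2
  have heq := Real.injOn_cos ⟨le_of_lt h1.1, le_of_lt h1.2⟩ ⟨le_of_lt h2.1, le_of_lt h2.2⟩ hc
  have hπ := Real.pi_pos
  have hr : ((j1 : ℕ) : ℝ) = ((j2 : ℕ) : ℝ) := by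
    field_simp at heq
    linarith
  exact Fin.ext (by exact_mod_cast hr)

lemma tev_ne_zero (j : Fin k) : tev k j ≠ 0 := by
  intro h
  have hk : 0 < k := j.pos
  have h0 := congrFun h ⟨0, hk⟩
  simp only [tev, Pi.zero_apply] at h0
  have hmem := theta_mem hk j
  have : Real.sin ((j + 1) * π / (k + 1)) > 0 := Real.sin_pos_of_pos_of_lt_pi hmem.1 hmem.2
  rw [show (((⟨0, hk⟩ : Fin k) : ℕ) : ℝ) + 1 = 1 by norm_num] at h0
  rw [one_mul] at h0
  linarith

lemma jacobi_mulVec_tev (j : Fin k) :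
    jacobiMatrix k (fun _ => a) (fun _ => b) *ᵥ tev k j = tmu k a b j • tev k j := by
  set θ := (j + 1) * π / (k + 1) with hθ
  have key := jacobi_mulVec k a b (tev k j) (fun m => Real.sin (m * θ))
    (fun m => by simp [tev, hθ]) (by simp)
    (by
      have h1 : (((k + 1 : ℕ)) : ℝ) * θ = (((j : ℕ) + 1 : ℕ) : ℝ) * π := by
        rw [hθ]; push_cast; field_simp
      rw [h1]
      exact Real.sin_nat_mul_pi _)
  ext i
  rw [key i]
  simp only [Pi.smul_apply, smul_eq_mul, tev, tmu]
  push_cast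
  have e1 : (i : ℝ) * θ = ((i : ℝ) + 1) * θ - θ := by ring
  have e2 : ((i : ℝ) + 2) * θ = ((i : ℝ) + 1) * θ + θ := by ring
  rw [e1, e2, Real.sin_sub, Real.sin_add]
  ring

/-- Direction B: every explicit eigenvalue appears among `hA.eigenvalues`. -/
lemma tmu_mem_eigenvalues (j : Fin k) :
    ∃ i, (jacobiMatrix_isHermitian k (fun _ => a) (fun _ => b)).eigenvalues i = tmu k a b j := by
  set A := jacobiMatrix k (fun _ => a) (fun _ => b) with hA
  set hH := jacobiMatrix_isHermitian k (fun _ => a) (fun _ => b)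
  set μ := tmu k a b j
  have hdet : (A - μ • 1).det = 0 := by
    rw [Matrix.exists_mulVec_eq_zero_iff.symm]
    refine ⟨tev k j, tev_ne_zero j, ?_⟩
    rw [Matrix.sub_mulVec, Matrix.smul_mulVec, Matrix.one_mulVec, jacobi_mulVec_tev, sub_self]
  set U : Matrix (Fin k) (Fin k) ℝ := (hH.eigenvectorUnitary : Matrix (Fin k) (Fin k) ℝ) with hU
  have hUU : U * star U = 1 := (Matrix.mem_unitaryGroup_iff).mp hH.eigenvectorUnitary.2
  have hspec : A = U * Matrix.diagonal (RCLike.ofReal ∘ hH.eigenvalues) * star U :=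
    hH.spectral_theorem
  have hconj : A - μ • 1 = U * (Matrix.diagonal (RCLike.ofReal ∘ hH.eigenvalues) - μ • 1) * star U := by
    rw [Matrix.mul_sub, Matrix.sub_mul, ← hspec]
    congr 1
    rw [Matrix.mul_smul, Matrix.smul_mul, Matrix.mul_one, hUU]
  have hdet2 : (Matrix.diagonal (RCLike.ofReal ∘ hH.eigenvalues) - μ • (1 : Matrix (Fin k) (Fin k) ℝ)).det = 0 := by
    have := hdet
    rw [hconj, Matrix.det_mul, Matrix.det_mul] at this
    have h1 : U.det * (star U).det = 1 := by rw [← Matrix.det_mul, hUU, Matrix.det_one]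
    
    nlinarith [this, h1]
  rw [Matrix.smul_one_eq_diagonal, Matrix.diagonal_sub, Matrix.det_diagonal] at hdet2
  obtain ⟨i, _, hi⟩ := Finset.prod_eq_zero_iff.mp hdet2
  refine ⟨i, ?_⟩
  have : (RCLike.ofReal ∘ hH.eigenvalues) i = hH.eigenvalues i := rfl
  rw [this] at hi
  linarith [sub_eq_zero.mp hi]

/-- Direction A: every `hA.eigenvalues` is one of the explicit eigenvalues. -/
lemma eigenvalues_mem_range (hb : 0 < b) (i : Fin k) :
    ∃ j, tmu k a b j = (jacobiMatrix_isHermitian k (fun _ => a) (fun _ => b)).eigenvalues i := by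
  by_contra hnot
  push_neg at hnot
  set A := jacobiMatrix k (fun _ => a) (fun _ => b)
  set hH := jacobiMatrix_isHermitian k (fun _ => a) (fun _ => b)
  set f : Module.End ℝ (Fin k → ℝ) := Matrix.mulVecLin A
  have hw : f.HasEigenvector (hH.eigenvalues i) ⇑(hH.eigenvectorBasis i) := by
    constructor
    · rw [Module.End.mem_eigenspace_iff]
      show Matrix.mulVecLin A ⇑(hH.eigenvectorBasis i) = _
      rw [Matrix.mulVecLin_apply]
      exact hH.mulVec_eigenvectorBasis i
    · intro h
      have : hH.eigenvectorBasis i = 0 := by ext1; exact congrFun h _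
      have h1 := hH.eigenvectorBasis.orthonormal.1 i
      rw [this] at h1
      simp at h1
  have hv : ∀ j : Fin k, f.HasEigenvector (tmu k a b j) (tev k j) := by
    intro j
    constructor
    · rw [Module.End.mem_eigenspace_iff]
      show Matrix.mulVecLin A (tev k j) = _
      rw [Matrix.mulVecLin_apply]
      exact jacobi_mulVec_tev j
    · exact tev_ne_zero j
  set ν : Option (Fin k) → ℝ := fun o => o.elim (hH.eigenvalues i) (tmu k a b)
  set W : Option (Fin k) → (Fin k → ℝ) := fun o => o.elim ⇑(hH.eigenvectorBasis i) (tev k)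
  have hνinj : Function.Injective ν := by
    intro o1 o2 h
    match o1, o2 with
    | none, none => rfl
    | none, some j => exact absurd h.symm (hnot j)
    | some j, none => exact absurd h (hnot j)
    | some j1, some j2 => exact congrArg _ (tmu_injective hb h)
  have hli : LinearIndependent ℝ W :=
    f.eigenvectors_linearIndependent' ν hνinj W (fun o => by cases o <;> [exact hw; exact hv _])
  have := hli.fintype_card_le_finrank
  simp [Module.finrank_fintype_fun_eq_card] at this

/-- The trace identity. -/
lemma sum_eigen_eq (hb : 0 < b) (φ : ℝ → ℝ) :
    ∑ i, φ ((jacobiMatrix_isHermitian k (fun _ => a) (fun _ => b)).eigenvalues i)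
      = ∑ j, φ (tmu k a b j) := by
  set hH := jacobiMatrix_isHermitian k (fun _ => a) (fun _ => b)
  have hch : ∀ i : Fin k, ∃ j, tmu k a b j = hH.eigenvalues i := eigenvalues_mem_range hb
  choose g hg using hch
  have hsurj : Function.Surjective g := by
    intro j
    obtain ⟨i, hi⟩ := tmu_mem_eigenvalues (b := b) (a := a) j
    exact ⟨i, tmu_injective hb (by rw [hg i, hi])⟩
  have hbij := (Finite.surjective_iff_bijective).mp hsurj
  calc ∑ i, φ (hH.eigenvalues i) = ∑ i, φ (tmu k a b (g i)) := by
        refine Finset.sum_congr rfl fun i _ => by rw [hg i]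
    _ = ∑ j, φ (tmu k a b j) := hbij.sum_comp (fun j => φ (tmu k a b j))

lemma riemann_sum_tendsto (g : ℝ → ℝ) (hg : Continuous g) {T : ℝ} (hT : 0 < T) :
    Filter.Tendsto (fun n : ℕ => (T / n) * ∑ j ∈ Finset.range n, g (j * T / n))
      Filter.atTop (nhds (∫ x in (0:ℝ)..T, g x)) := by
  rw [Metric.tendsto_atTop]
  intro ε hε
  have hε2 : 0 < ε / (2 * T) := by positivity
  obtain ⟨δ, hδ, hδ2⟩ := (Metric.uniformContinuousOn_iff.mp
    ((isCompact_Icc (a := (0:ℝ)) (b := T)).uniformContinuousOn_of_continuous hg.continuousOn))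
    (ε / (2 * T)) hε2
  obtain ⟨N, hN⟩ := exists_nat_gt (T / δ)
  have hN1 : 1 ≤ N := by
    by_contra h
    push_neg at h
    interval_cases N
    simp at hN
    nlinarith [div_pos hT hδ]
  refine ⟨N, fun n hn => ?_⟩
  have hn1 : 1 ≤ n := le_trans hN1 hn
  have hnpos : (0:ℝ) < n := by exact_mod_cast hn1
  have hstep : T / n < δ := by
    rw [div_lt_iff₀ hnpos]
    have : T / δ < n := lt_of_lt_of_le hN (by exact_mod_cast hn)
    rw [div_lt_iff₀ hδ] at this
    linarith
  have hstep0 : 0 < T / n := by positivity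
  -- partition points
  set x : ℕ → ℝ := fun j => j * T / n with hx
  have hint : ∀ i < n, IntervalIntegrable g MeasureTheory.volume (x i) (x (i+1)) :=
    fun i _ => hg.intervalIntegrable _ _
  have hI : (∫ t in (0:ℝ)..T, g t) = ∑ j ∈ Finset.range n, ∫ t in x j..x (j+1), g t := by
    rw [intervalIntegral.sum_integral_adjacent_intervals hint]
    have h0 : x 0 = 0 := by simp [hx]
    have hn' : x n = T := by simp only [hx]; field_simp
    rw [h0, hn']
  have hmono : ∀ j : ℕ, x (j+1) - x j = T / n := by
    intro j; simp only [hx]; push_cast; field_simp; ring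
  have hterm : ∀ j ∈ Finset.range n,
      |T / n * g (x j) - ∫ t in x j..x (j+1), g t| ≤ (ε / (2 * T)) * (T / n) := by
    intro j hj
    have hjn : j < n := Finset.mem_range.mp hj
    have hle : x j ≤ x (j+1) := by nlinarith [hmono j]
    have hconst : T / n * g (x j) = ∫ t in x j..x (j+1), g (x j) := by
      rw [intervalIntegral.integral_const, smul_eq_mul, hmono j]
    rw [hconst, ← intervalIntegral.integral_sub (by simp) (hg.intervalIntegrable _ _)]
    have hb : ∀ t ∈ Set.uIoc (x j) (x (j+1)), ‖g (x j) - g t‖ ≤ ε / (2 * T) := by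
      intro t ht
      rw [Set.uIoc_of_le hle] at ht
      have hxj_mem : x j ∈ Set.Icc (0:ℝ) T := by
        constructor
        · simp only [hx]; positivity
        · simp only [hx]
          rw [div_le_iff₀ hnpos]
          have : (j:ℝ) ≤ n := by exact_mod_cast hjn.le
          nlinarith
      have ht_mem : t ∈ Set.Icc (0:ℝ) T := by
        constructor
        · linarith [hxj_mem.1, ht.1]
        · have hx1 : x (j+1) ≤ T := by
            simp only [hx]
            rw [div_le_iff₀ hnpos]
            have : (j:ℝ) + 1 ≤ n := by exact_mod_cast hjn
            push_cast
            nlinarith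
          linarith [ht.2]
      have hdist : dist (x j) t < δ := by
        rw [Real.dist_eq, abs_sub_comm, abs_of_nonneg (by linarith [ht.1])]
        have := hmono j
        have := ht.2
        linarith
      have := hδ2 (x j) hxj_mem t ht_mem hdist
      rw [Real.dist_eq] at this
      exact le_of_lt (by simpa using this)
    calc |∫ t in x j..x (j+1), (g (x j) - g t)| = ‖∫ t in x j..x (j+1), (g (x j) - g t)‖ := rfl
      _ ≤ (ε / (2 * T)) * |x (j+1) - x j| := intervalIntegral.norm_integral_le_of_norm_le_const hb
      _ = (ε / (2 * T)) * (T / n) := by rw [hmono j, abs_of_pos hstep0]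
  -- conclude
  rw [Real.dist_eq, hI]
  have hsum : T / n * ∑ j ∈ Finset.range n, g (j * T / n)
      = ∑ j ∈ Finset.range n, T / n * g (x j) := by
    rw [Finset.mul_sum]
  rw [hsum, ← Finset.sum_sub_distrib]
  calc |∑ j ∈ Finset.range n, (T / n * g (x j) - ∫ t in x j..x (j+1), g t)|
      ≤ ∑ j ∈ Finset.range n, |T / n * g (x j) - ∫ t in x j..x (j+1), g t| :=
        Finset.abs_sum_le_sum_abs _ _
    _ ≤ ∑ _j ∈ Finset.range n, (ε / (2 * T)) * (T / n) := Finset.sum_le_sum hterm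
    _ = n * ((ε / (2 * T)) * (T / n)) := by rw [Finset.sum_const, Finset.card_range, nsmul_eq_mul]
    _ = ε / 2 := by field_simp
    _ < ε := by linarith

lemma assemble (g : ℝ → ℝ) (hg : Continuous g) :
    Filter.Tendsto (fun k : ℕ => (1 / (k:ℝ)) * ∑ j ∈ Finset.range k, g ((j+1) * π / (k+1)))
      Filter.atTop (nhds ((1 / π) * ∫ x in (0:ℝ)..π, g x)) := by
  set I := ∫ x in (0:ℝ)..π, g x
  have hA := riemann_sum_tendsto g hg Real.pi_pos
  have hA1 : Filter.Tendsto (fun k : ℕ => (π / ((k:ℝ)+1)) * ∑ j ∈ Finset.range (k+1), g (j * π / ((k:ℝ)+1)))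
      Filter.atTop (nhds I) := by
    have := hA.comp (Filter.tendsto_add_atTop_nat 1)
    refine this.congr fun k => ?_
    simp only [Function.comp_apply]
    push_cast
    rfl
  have hc : Filter.Tendsto (fun k : ℕ => ((k:ℝ)+1) / ((k:ℝ) * π)) Filter.atTop (nhds (1/π)) := by
    have h1 : Filter.Tendsto (fun k : ℕ => (1 + 1/(k:ℝ)) * (1/π)) Filter.atTop (nhds (1/π)) := by
      have := ((tendsto_const_nhds (x := (1:ℝ))).add tendsto_one_div_atTop_nhds_zero_nat).mul
        (tendsto_const_nhds (x := 1/π))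
      simpa using this
    refine h1.congr' ?_
    filter_upwards [Filter.eventually_ge_atTop 1] with k hk
    have hk0 : (k:ℝ) ≠ 0 := Nat.cast_ne_zero.mpr (by omega)
    field_simp
  have hz : Filter.Tendsto (fun k : ℕ => g 0 * (1/(k:ℝ))) Filter.atTop (nhds 0) := by
    have := (tendsto_const_nhds (x := g 0)).mul tendsto_one_div_atTop_nhds_zero_nat
    simpa using this
  have hlim := (hc.mul hA1).sub hz
  rw [sub_zero] at hlim
  refine hlim.congr' ?_
  filter_upwards [Filter.eventually_ge_atTop 1] with k hk
  have hk0 : (k:ℝ) ≠ 0 := by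
    have : (1:ℝ) ≤ k := by exact_mod_cast hk
    linarith
  have hsum : ∑ j ∈ Finset.range (k+1), g (j * π / ((k:ℝ)+1))
      = g 0 + ∑ j ∈ Finset.range k, g ((j+1) * π / ((k:ℝ)+1)) := by
    rw [Finset.sum_range_succ']
    simp only [Nat.cast_zero, zero_mul, zero_div]
    push_cast
    ring
  rw [hsum]
  have hπ : π ≠ 0 := Real.pi_ne_zero
  field_simp
  ring

end AuxTrace

/-- the asymptotic trace formula for tridiagonal Toeplitz matrices `T_k(a,b)`:
`lim (1/k)·Trace[φ(T_k(a,b))] = (1/π) ∫_0^π φ(a+2b cos x) dx` for `φ ∈ C[a-2b, a+2b]`. -/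
theorem trace_formula_toeplitz (a b : ℝ) (hb : 0 < b)
    (φ : ℝ → ℝ) (hφ : ContinuousOn φ (Set.Icc (a - 2 * b) (a + 2 * b))) :
    Filter.Tendsto
      (fun k : ℕ => (1 / (k : ℝ)) * jacobiTrace k (fun _ => a) (fun _ => b) φ)
      Filter.atTop
      (nhds ((1 / Real.pi) * ∫ x in (0 : ℝ)..Real.pi, φ (a + 2 * b * Real.cos x))) := by
  have hg : Continuous fun x : ℝ => φ (a + 2 * b * Real.cos x) := by
    have hcont : Continuous fun x : ℝ => a + 2 * b * Real.cos x := by continuity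
    exact hφ.comp_continuous hcont fun x =>
      ⟨by nlinarith [Real.neg_one_le_cos x], by nlinarith [Real.cos_le_one x]⟩
  have key : ∀ k : ℕ, jacobiTrace k (fun _ => a) (fun _ => b) φ
      = ∑ j ∈ Finset.range k, φ (a + 2 * b * Real.cos (((j : ℝ) + 1) * Real.pi / ((k : ℝ) + 1))) := by
    intro k
    rw [jacobiTrace, sum_eigen_eq hb φ]
    rw [← Fin.sum_univ_eq_sum_range
      (fun j => φ (a + 2 * b * Real.cos (((j : ℝ) + 1) * Real.pi / ((k : ℝ) + 1))))]
    rfl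
  have h2 := assemble (fun x => φ (a + 2 * b * Real.cos x)) hg
  exact Filter.Tendsto.congr (fun k => by rw [key k]) h2
end
end
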